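/- arXiv:2506.17979 — 8 statements merged into one kernel-verified Lean document; each statement's English description precedes it below -/
import Mathlib

section
/- Let (E, ρ) be a metric space, m a Borel measure on E that is finite on compact sets, N a measurable kernel from E to E, and J a Borel measure on E × E that is symmetric (invariant under the flip (x,y) ↦ (y,x)) and satisfies J(A) ≤ D₂ ∫_E N(x, A_x) dm(x) for every Borel A ⊆ E × E and some D₂ > 0, where A_x = {y : (x,y) ∈ A}. Assume there exist β > 0 and M_β < ∞ such that ∫_E min(1, ρ(x,y)^{β}) dN(x)(y) ≤ M_β for m-almost every x ∈ E. Let p ∈ [1, ∞) and u ∈ L^p(E; m). Then for all open sets U, V ⊆ E such that the closure of U is compact and contained in V, one has ∫_{U × (E∖V)} |u(x) − u(y)| dJ(x,y) < ∞. -/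
open MeasureTheory ENNReal

/-- Let `(E, ρ)` be a metric space, `m` a Borel measure finite on
compacts, `N` a measurable kernel from `E` to `E`, and `J` a symmetric Borel measure
on `E × E` with `J(A) ≤ D₂ ∫ N(x, A_x) dm(x)`. Assume there are `β > 0`, `M_β < ∞`
with `∫ min(1, ρ(x,y)^β) N(x, dy) ≤ M_β` for `m`-a.e. `x`. If `p ∈ [1,∞)` and
`u ∈ L^p(E;m)`, then for all open `U, V` with `closure U` compact and contained in
`V`, `∫_{U × (E∖V)} |u(x) − u(y)| dJ < ∞`. -/
theorem stmt_3 {E : Type*} [MetricSpace E] [MeasurableSpace E] [BorelSpace E]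
    (m : Measure E) [IsFiniteMeasureOnCompacts m]
    (N : E → Measure E)
    (hN : ∀ A : Set E, MeasurableSet A → Measurable fun x => N x A)
    (J : Measure (E × E)) (hsym : J.map Prod.swap = J)
    (D₂ : ℝ) (hD₂ : 0 < D₂)
    (hJ : ∀ A : Set (E × E), MeasurableSet A →
      J A ≤ ENNReal.ofReal D₂ * ∫⁻ x, N x (Prod.mk x ⁻¹' A) ∂m)
    (β : ℝ) (hβ : 0 < β) (Mβ : ℝ≥0∞) (hMβ : Mβ < ⊤)
    (hbound : ∀ᵐ x ∂m, ∫⁻ y, ENNReal.ofReal (min 1 (dist x y ^ β)) ∂(N x) ≤ Mβ)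
    (p : ℝ) (hp : 1 ≤ p) (u : E → ℝ) (hu : MemLp u (ENNReal.ofReal p) m)
    (U V : Set E) (hU : IsOpen U) (hV : IsOpen V)
    (hUc : IsCompact (closure U)) (hUV : closure U ⊆ V) :
    ∫⁻ z in U ×ˢ Vᶜ, ENNReal.ofReal |u z.1 - u z.2| ∂J < ⊤ := by
  -- measurable representative of u
  obtain ⟨g, hgm, hug⟩ : ∃ g : E → ℝ, Measurable g ∧ u =ᵐ[m] g := by
    rcases hu.1 with ⟨g, hg, hug⟩
    exact ⟨g, hg.measurable, hug⟩
  -- a positive distance between U and Vᶜ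
  obtain ⟨δ, hδ0, hδ⟩ := hUc.exists_thickening_subset_open hV hUV
  have hdist : ∀ x ∈ closure U, ∀ y ∈ Vᶜ, δ ≤ dist x y := by
    intro x hx y hy
    by_contra h
    push_neg at h
    exact hy (hδ (Metric.mem_thickening_iff.2 ⟨x, hx, by rwa [dist_comm]⟩))
  set c : ℝ≥0∞ := ENNReal.ofReal (min 1 (δ ^ β)) with hc_def
  have hc0 : c ≠ 0 := by
    simp only [hc_def, ne_eq, ENNReal.ofReal_eq_zero, not_le]
    exact lt_min one_pos (Real.rpow_pos_of_pos hδ0 β)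
  have hct : c ≠ ⊤ := ENNReal.ofReal_ne_top
  set K : ℝ≥0∞ := Mβ / c with hK_def
  have hKt : K ≠ ⊤ := by
    simp only [hK_def]
    exact (ENNReal.div_lt_top hMβ.ne hc0).ne
  -- a.e. bound on N x t for sets t at distance ≥ δ from x
  have hae : ∀ᵐ x ∂m, ∀ t : Set E, MeasurableSet t → (∀ y ∈ t, δ ≤ dist x y) → N x t ≤ K := by
    filter_upwards [hbound] with x hx t htm ht
    have h1 : c * N x t = ∫⁻ _ in t, c ∂(N x) := by
      rw [setLIntegral_const, mul_comm]
    have h2 : (∫⁻ _ in t, c ∂(N x)) ≤ ∫⁻ y in t, ENNReal.ofReal (min 1 (dist x y ^ β)) ∂(N x) := by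
      refine setLIntegral_mono' htm ?_
      intro y hy
      ·
        refine ENNReal.ofReal_le_ofReal (min_le_min le_rfl ?_)
        exact Real.rpow_le_rpow (le_of_lt hδ0) (ht y hy) hβ.le
    have h3 : c * N x t ≤ Mβ := by
      refine le_trans (h1.le.trans h2) (le_trans (setLIntegral_le_lintegral _ _) hx)
    rw [hK_def]
    rw [ENNReal.le_div_iff_mul_le (Or.inl hc0) (Or.inl hct), mul_comm]
    exact h3
  set C : ℝ≥0∞ := ENNReal.ofReal D₂ * K with hC_def
  have hCt : C ≠ ⊤ := ENNReal.mul_ne_top ENNReal.ofReal_ne_top hKt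
  have hUmeas : MeasurableSet U := hU.measurableSet
  have hVc : MeasurableSet (Vᶜ) := hV.measurableSet.compl
  -- key bound 1 : J on (s ∩ U) ×ˢ Vᶜ
  have key₁ : ∀ s : Set E, MeasurableSet s → J ((s ∩ U) ×ˢ Vᶜ) ≤ C * m (s ∩ U) := by
    intro s hs
    have hmeas : MeasurableSet ((s ∩ U) ×ˢ Vᶜ) := (hs.inter hUmeas).prod hVc
    refine le_trans (hJ _ hmeas) ?_
    rw [hC_def, mul_assoc]
    refine mul_le_mul_right ?_ _
    have heq : ∀ x, N x (Prod.mk x ⁻¹' ((s ∩ U) ×ˢ Vᶜ)) =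
        (s ∩ U).indicator (fun x => N x Vᶜ) x := by
      intro x
      by_cases hx : x ∈ s ∩ U
      · rw [Set.mk_preimage_prod_right hx, Set.indicator_of_mem hx]
      · rw [Set.mk_preimage_prod_right_eq_empty hx, Set.indicator_of_notMem hx,
          measure_empty]
    calc ∫⁻ x, N x (Prod.mk x ⁻¹' ((s ∩ U) ×ˢ Vᶜ)) ∂m
        = ∫⁻ x, (s ∩ U).indicator (fun x => N x Vᶜ) x ∂m := by
          exact lintegral_congr fun x => heq x
      _ ≤ ∫⁻ x, (s ∩ U).indicator (fun _ => K) x ∂m := by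
          refine lintegral_mono_ae ?_
          filter_upwards [hae] with x hx
          by_cases hxs : x ∈ s ∩ U
          · rw [Set.indicator_of_mem hxs, Set.indicator_of_mem hxs]
            exact hx Vᶜ hVc fun y hy => hdist x (subset_closure hxs.2) y hy
          · rw [Set.indicator_of_notMem hxs, Set.indicator_of_notMem hxs]
      _ = K * m (s ∩ U) := lintegral_indicator_const (hs.inter hUmeas) K
  -- key bound 2 : J on U ×ˢ (Vᶜ ∩ s), via symmetry
  have key₂ : ∀ s : Set E, MeasurableSet s → J (U ×ˢ (Vᶜ ∩ s)) ≤ C * m (Vᶜ ∩ s) := by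
    intro s hs
    have hts : MeasurableSet (Vᶜ ∩ s) := hVc.inter hs
    have hswap : J (U ×ˢ (Vᶜ ∩ s)) = J ((Vᶜ ∩ s) ×ˢ U) := by
      conv_lhs => rw [← hsym]
      rw [Measure.map_apply measurable_swap (hUmeas.prod hts)]
      congr 1
      ext ⟨x, y⟩
      simp [Set.mem_prod, and_comm]
    rw [hswap]
    refine le_trans (hJ _ (hts.prod hUmeas)) ?_
    rw [hC_def, mul_assoc]
    refine mul_le_mul_right ?_ _
    have heq : ∀ x, N x (Prod.mk x ⁻¹' ((Vᶜ ∩ s) ×ˢ U)) =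
        (Vᶜ ∩ s).indicator (fun x => N x U) x := by
      intro x
      by_cases hx : x ∈ Vᶜ ∩ s
      · rw [Set.mk_preimage_prod_right hx, Set.indicator_of_mem hx]
      · rw [Set.mk_preimage_prod_right_eq_empty hx, Set.indicator_of_notMem hx,
          measure_empty]
    calc ∫⁻ x, N x (Prod.mk x ⁻¹' ((Vᶜ ∩ s) ×ˢ U)) ∂m
        = ∫⁻ x, (Vᶜ ∩ s).indicator (fun x => N x U) x ∂m :=
          lintegral_congr fun x => heq x
      _ ≤ ∫⁻ x, (Vᶜ ∩ s).indicator (fun _ => K) x ∂m := by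
          refine lintegral_mono_ae ?_
          filter_upwards [hae] with x hx
          by_cases hxs : x ∈ Vᶜ ∩ s
          · rw [Set.indicator_of_mem hxs, Set.indicator_of_mem hxs]
            refine hx U hUmeas fun y hy => ?_
            rw [dist_comm]
            exact hdist y (subset_closure hy) x hxs.1
          · rw [Set.indicator_of_notMem hxs, Set.indicator_of_notMem hxs]
      _ = K * m (Vᶜ ∩ s) := lintegral_indicator_const hts K
  set ν : Measure (E × E) := J.restrict (U ×ˢ Vᶜ) with hν_def
  set μ₁ : Measure E := ν.map Prod.fst with hμ₁_def
  set μ₂ : Measure E := ν.map Prod.snd with hμ₂_def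
  have hμ₁_apply : ∀ s : Set E, MeasurableSet s → μ₁ s = J ((s ∩ U) ×ˢ Vᶜ) := by
    intro s hs
    rw [hμ₁_def, Measure.map_apply measurable_fst hs, hν_def,
      Measure.restrict_apply (hs.preimage measurable_fst)]
    congr 1
    ext ⟨x, y⟩
    simp only [Set.mem_inter_iff, Set.mem_preimage, Set.mem_prod]
    tauto
  have hμ₂_apply : ∀ s : Set E, MeasurableSet s → μ₂ s = J (U ×ˢ (Vᶜ ∩ s)) := by
    intro s hs
    rw [hμ₂_def, Measure.map_apply measurable_snd hs, hν_def,
      Measure.restrict_apply (hs.preimage measurable_snd)]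
    congr 1
    ext ⟨x, y⟩
    simp only [Set.mem_inter_iff, Set.mem_preimage, Set.mem_prod]
    tauto
  have hμ₁_le : μ₁ ≤ C • m.restrict U := by
    refine Measure.le_iff.2 fun s hs => ?_
    rw [hμ₁_apply s hs]
    refine le_trans (key₁ s hs) ?_
    rw [Measure.smul_apply, Measure.restrict_apply hs, smul_eq_mul]
  have hμ₂_le : μ₂ ≤ C • m.restrict Vᶜ := by
    refine Measure.le_iff.2 fun s hs => ?_
    rw [hμ₂_apply s hs]
    refine le_trans (key₂ s hs) ?_
    rw [Measure.smul_apply, Measure.restrict_apply hs, smul_eq_mul,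
      Set.inter_comm]
  -- ν has finite total mass
  have hνfin : ν Set.univ < ⊤ := by
    have : ν Set.univ = μ₁ Set.univ := by
      rw [hμ₁_def, Measure.map_apply measurable_fst MeasurableSet.univ, Set.preimage_univ]
    rw [this, hμ₁_apply Set.univ MeasurableSet.univ, Set.univ_inter]
    have hk := key₁ Set.univ MeasurableSet.univ
    rw [Set.univ_inter] at hk
    refine lt_of_le_of_lt hk ?_
    exact ENNReal.mul_lt_top hCt.lt_top
      (lt_of_le_of_lt (measure_mono subset_closure) hUc.measure_lt_top)
  -- replace u by g in the integrand, ν-a.e.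
  have hnull : m {x | ¬ u x = g x} = 0 := ae_iff.1 hug
  obtain ⟨t₀, ht₀sub, ht₀meas, ht₀null⟩ := exists_measurable_superset_of_null hnull
  have hμ₁t₀ : μ₁ t₀ = 0 := by
    refine le_antisymm ?_ (zero_le)
    refine le_trans (hμ₁_le t₀) ?_
    rw [Measure.smul_apply, Measure.restrict_apply ht₀meas, smul_eq_mul]
    exact le_of_eq (by rw [measure_mono_null Set.inter_subset_left ht₀null, mul_zero])
  have hμ₂t₀ : μ₂ t₀ = 0 := by
    refine le_antisymm ?_ (zero_le)
    refine le_trans (hμ₂_le t₀) ?_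
    rw [Measure.smul_apply, Measure.restrict_apply ht₀meas, smul_eq_mul]
    exact le_of_eq (by rw [measure_mono_null Set.inter_subset_left ht₀null, mul_zero])
  have hν₁ : ν (Prod.fst ⁻¹' t₀) = 0 := by
    rw [← Measure.map_apply measurable_fst ht₀meas, ← hμ₁_def]; exact hμ₁t₀
  have hν₂ : ν (Prod.snd ⁻¹' t₀) = 0 := by
    rw [← Measure.map_apply measurable_snd ht₀meas, ← hμ₂_def]; exact hμ₂t₀
  have haeν : ∀ᵐ z ∂ν, ENNReal.ofReal |u z.1 - u z.2| = ENNReal.ofReal |g z.1 - g z.2| := by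
    have h1 : ∀ᵐ z ∂ν, z.1 ∉ t₀ := (measure_eq_zero_iff_ae_notMem.1 hν₁ : _)
    have h2 : ∀ᵐ z ∂ν, z.2 ∉ t₀ := (measure_eq_zero_iff_ae_notMem.1 hν₂ : _)
    filter_upwards [h1, h2] with z hz1 hz2
    have e1 : u z.1 = g z.1 := by
      by_contra h; exact hz1 (ht₀sub (Set.mem_setOf_eq ▸ h))
    have e2 : u z.2 = g z.2 := by
      by_contra h; exact hz2 (ht₀sub (Set.mem_setOf_eq ▸ h))
    rw [e1, e2]
  rw [show ∫⁻ z in U ×ˢ Vᶜ, ENNReal.ofReal |u z.1 - u z.2| ∂J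
      = ∫⁻ z, ENNReal.ofReal |u z.1 - u z.2| ∂ν from rfl,
    lintegral_congr_ae haeν]
  -- the main estimate
  have habs : ∀ a b : ℝ, ENNReal.ofReal |a - b| ≤ ENNReal.ofReal |a| + ENNReal.ofReal |b| := by
    intro a b
    rw [← ENNReal.ofReal_add (abs_nonneg a) (abs_nonneg b)]
    exact ENNReal.ofReal_le_ofReal (abs_sub a b)
  set f : E → ℝ≥0∞ := fun x => ENNReal.ofReal |g x| with hf_def
  have hfmeas : Measurable f := (hgm.abs).ennreal_ofReal
  have hstep : (∫⁻ z, ENNReal.ofReal |g z.1 - g z.2| ∂ν)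
      ≤ (∫⁻ z, f z.1 ∂ν) + ∫⁻ z, f z.2 ∂ν := by
    refine le_trans (lintegral_mono fun z => habs _ _) ?_
    exact le_of_eq (lintegral_add_left (hfmeas.comp measurable_fst) _)
  refine lt_of_le_of_lt hstep ?_
  -- transfer to μ₁ and μ₂
  have hι₁ : (∫⁻ z, f z.1 ∂ν) = ∫⁻ x, f x ∂μ₁ := by
    rw [hμ₁_def, lintegral_map hfmeas measurable_fst]
  have hι₂ : (∫⁻ z, f z.2 ∂ν) = ∫⁻ x, f x ∂μ₂ := by
    rw [hμ₂_def, lintegral_map hfmeas measurable_snd]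
  rw [hι₁, hι₂]
  -- f ≤ 1 + f ^ p pointwise
  have hfp : ∀ x, f x ≤ 1 + f x ^ p := by
    intro x
    rcases le_total (f x) 1 with h | h
    · exact le_trans h le_self_add
    · refine le_trans ?_ le_add_self
      calc f x = f x ^ (1 : ℝ) := (ENNReal.rpow_one _).symm
        _ ≤ f x ^ p := ENNReal.rpow_le_rpow_of_exponent_le h hp
  -- ∫ f^p dm < ⊤
  have hint_p : (∫⁻ x, f x ^ p ∂m) < ⊤ := by
    have hp0 : ENNReal.ofReal p ≠ 0 := by
      simp only [ne_eq, ENNReal.ofReal_eq_zero, not_le]; linarith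
    have := hu.2
    rw [eLpNorm_eq_lintegral_rpow_enorm_toReal hp0 ENNReal.ofReal_ne_top] at this
    have htoReal : (ENNReal.ofReal p).toReal = p := ENNReal.toReal_ofReal (by linarith)
    rw [htoReal] at this
    have h2 : (∫⁻ x, ‖u x‖ₑ ^ p ∂m) < ⊤ := by
      by_contra h
      push_neg at h
      rw [top_le_iff.1 h] at this
      rw [ENNReal.top_rpow_of_pos (by positivity)] at this
      exact (lt_irrefl ⊤ this).elim
    refine lt_of_eq_of_lt ?_ h2
    refine lintegral_congr_ae ?_
    filter_upwards [hug] with x hx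
    rw [hf_def]
    simp only
    rw [hx, ← Real.norm_eq_abs, ofReal_norm]
  -- combine
  have hbound₁ : (∫⁻ x, f x ∂μ₁) < ⊤ := by
    calc (∫⁻ x, f x ∂μ₁) ≤ ∫⁻ x, 1 + f x ^ p ∂μ₁ := lintegral_mono hfp
      _ = μ₁ Set.univ + ∫⁻ x, f x ^ p ∂μ₁ := by
          rw [lintegral_add_left measurable_const, lintegral_one]
      _ ≤ μ₁ Set.univ + ∫⁻ x, f x ^ p ∂(C • m.restrict U) := by
          exact add_le_add le_rfl (lintegral_mono' hμ₁_le le_rfl)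
      _ = μ₁ Set.univ + C * ∫⁻ x, f x ^ p ∂(m.restrict U) := by
          rw [lintegral_smul_measure, smul_eq_mul]
      _ ≤ μ₁ Set.univ + C * ∫⁻ x, f x ^ p ∂m := by
          exact add_le_add le_rfl (mul_le_mul_right (setLIntegral_le_lintegral _ _) _)
      _ < ⊤ := by
          refine ENNReal.add_lt_top.2 ⟨?_, ?_⟩
          · have : μ₁ Set.univ = ν Set.univ := by
              rw [hμ₁_def, Measure.map_apply measurable_fst MeasurableSet.univ,
                Set.preimage_univ]
            rw [this]; exact hνfin
          · exact ENNReal.mul_lt_top hCt.lt_top hint_p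
  have hbound₂ : (∫⁻ x, f x ∂μ₂) < ⊤ := by
    calc (∫⁻ x, f x ∂μ₂) ≤ ∫⁻ x, 1 + f x ^ p ∂μ₂ := lintegral_mono hfp
      _ = μ₂ Set.univ + ∫⁻ x, f x ^ p ∂μ₂ := by
          rw [lintegral_add_left measurable_const, lintegral_one]
      _ ≤ μ₂ Set.univ + ∫⁻ x, f x ^ p ∂(C • m.restrict Vᶜ) := by
          exact add_le_add le_rfl (lintegral_mono' hμ₂_le le_rfl)
      _ = μ₂ Set.univ + C * ∫⁻ x, f x ^ p ∂(m.restrict Vᶜ) := by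
          rw [lintegral_smul_measure, smul_eq_mul]
      _ ≤ μ₂ Set.univ + C * ∫⁻ x, f x ^ p ∂m := by
          exact add_le_add le_rfl (mul_le_mul_right (setLIntegral_le_lintegral _ _) _)
      _ < ⊤ := by
          refine ENNReal.add_lt_top.2 ⟨?_, ?_⟩
          · have : μ₂ Set.univ = ν Set.univ := by
              rw [hμ₂_def, Measure.map_apply measurable_snd MeasurableSet.univ,
                Set.preimage_univ]
            rw [this]; exact hνfin
          · exact ENNReal.mul_lt_top hCt.lt_top hint_p
  exact ENNReal.add_lt_top.2 ⟨hbound₁, hbound₂⟩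
end

section
/- Let (E, ρ) be a metric space, m a Borel measure on E that is finite on compact sets, N a measurable kernel from E to E, and J a Borel measure on E × E that is symmetric (invariant under the flip (x,y) ↦ (y,x)) and satisfies J(A) ≤ D₂ ∫_E N(x, A_x) dm(x) for every Borel A ⊆ E × E and some D₂ > 0, where A_x = {y : (x,y) ∈ A}. Assume there exist β > 0 and M_β < ∞ such that ∫_E min(1, ρ(x,y)^{β}) dN(x)(y) ≤ M_β for m-almost every x ∈ E. Let p ∈ [2, ∞) and u ∈ L^p(E; m). Then for all open sets U, V ⊆ E such that the closure of U is compact and contained in V, one has ∫_{U × (E∖V)} |u(x) − u(y)|² dJ(x,y) < ∞. -/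
open MeasureTheory ENNReal

lemma aux_stmt4 {E : Type*} [MeasurableSpace E] (m : Measure E) (N : E → Measure E)
    (hN : ∀ A : Set E, MeasurableSet A → Measurable fun x => N x A)
    (J : Measure (E × E)) (D₂ : ℝ)
    (hJ : ∀ A : Set (E × E), MeasurableSet A →
      J A ≤ ENNReal.ofReal D₂ * ∫⁻ x, N x (Prod.mk x ⁻¹' A) ∂m)
    {A B : Set E} (hA : MeasurableSet A) (hB : MeasurableSet B)
    {h : E → ℝ≥0∞} (hh : Measurable h) :
    ∫⁻ z in A ×ˢ B, h z.1 ∂J ≤ ENNReal.ofReal D₂ * ∫⁻ x in A, h x * N x B ∂m := by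
  classical
  have hmap : (J.restrict (A ×ˢ B)).map Prod.fst ≤
      ENNReal.ofReal D₂ • ((m.restrict A).withDensity (fun x => N x B)) := by
    rw [Measure.le_iff]
    intro S hS
    have h1 : ((J.restrict (A ×ˢ B)).map Prod.fst) S = J ((S ∩ A) ×ˢ B) := by
      rw [Measure.map_apply measurable_fst hS, Measure.restrict_apply (measurable_fst hS)]
      congr 1
      ext z
      simp [Set.mem_prod]; tauto
    rw [h1]
    have h2 : ∀ x : E, Prod.mk x ⁻¹' ((S ∩ A) ×ˢ B) = if x ∈ S ∩ A then B else ∅ := by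
      intro x
      simp [Set.mk_preimage_prod_right_eq_if]
    calc J ((S ∩ A) ×ˢ B) ≤ ENNReal.ofReal D₂ * ∫⁻ x, N x (Prod.mk x ⁻¹' ((S ∩ A) ×ˢ B)) ∂m :=
          hJ _ (((hS.inter hA).prod hB))
      _ = ENNReal.ofReal D₂ * ∫⁻ x in S ∩ A, N x B ∂m := by
          congr 1
          rw [← lintegral_indicator (hS.inter hA)]
          congr 1; ext x
          rw [h2]
          by_cases hx : x ∈ S ∩ A <;> simp [hx, Set.indicator]
      _ = (ENNReal.ofReal D₂ • ((m.restrict A).withDensity (fun x => N x B))) S := by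
          rw [Measure.smul_apply, smul_eq_mul, withDensity_apply _ hS,
            Measure.restrict_restrict hS]
  calc ∫⁻ z in A ×ˢ B, h z.1 ∂J
      = ∫⁻ x, h x ∂((J.restrict (A ×ˢ B)).map Prod.fst) :=
        (lintegral_map hh measurable_fst).symm
    _ ≤ ∫⁻ x, h x ∂(ENNReal.ofReal D₂ • ((m.restrict A).withDensity (fun x => N x B))) :=
        lintegral_mono' hmap le_rfl
    _ = ENNReal.ofReal D₂ * ∫⁻ x in A, h x * N x B ∂m := by
        rw [lintegral_smul_measure, lintegral_withDensity_eq_lintegral_mul _ (hN B hB) hh]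
        simp only [Pi.mul_apply]
        congr 1
        exact lintegral_congr fun x => mul_comm _ _

/-- Let `(E, ρ)` be a metric space, `m` a Borel measure finite on
compacts, `N` a measurable kernel from `E` to `E`, and `J` a symmetric Borel measure
on `E × E` with `J(A) ≤ D₂ ∫ N(x, A_x) dm(x)`. Assume there are `β > 0`, `M_β < ∞`
with `∫ min(1, ρ(x,y)^β) N(x, dy) ≤ M_β` for `m`-a.e. `x`. If `p ∈ [2,∞)` and
`u ∈ L^p(E;m)`, then for all open `U, V` with `closure U` compact and contained in
`V`, `∫_{U × (E∖V)} |u(x) − u(y)|² dJ < ∞`. -/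
theorem stmt_4 {E : Type*} [MetricSpace E] [MeasurableSpace E] [BorelSpace E]
    (m : Measure E) [IsFiniteMeasureOnCompacts m]
    (N : E → Measure E)
    (hN : ∀ A : Set E, MeasurableSet A → Measurable fun x => N x A)
    (J : Measure (E × E)) (hsym : J.map Prod.swap = J)
    (D₂ : ℝ) (hD₂ : 0 < D₂)
    (hJ : ∀ A : Set (E × E), MeasurableSet A →
      J A ≤ ENNReal.ofReal D₂ * ∫⁻ x, N x (Prod.mk x ⁻¹' A) ∂m)
    (β : ℝ) (hβ : 0 < β) (Mβ : ℝ≥0∞) (hMβ : Mβ < ⊤)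
    (hbound : ∀ᵐ x ∂m, ∫⁻ y, ENNReal.ofReal (min 1 (dist x y ^ β)) ∂(N x) ≤ Mβ)
    (p : ℝ) (hp : 2 ≤ p) (u : E → ℝ) (hu : MemLp u (ENNReal.ofReal p) m)
    (U V : Set E) (hU : IsOpen U) (hV : IsOpen V)
    (hUc : IsCompact (closure U)) (hUV : closure U ⊆ V) :
    ∫⁻ z in U ×ˢ Vᶜ, ENNReal.ofReal ((u z.1 - u z.2) ^ 2) ∂J < ⊤ := by
  have hUm : MeasurableSet U := hU.measurableSet
  have hVcm : MeasurableSet Vᶜ := hV.measurableSet.compl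
  have hp0 : (0:ℝ) < p := by linarith
  -- measurable representative
  obtain ⟨u', hu'sm, huu'⟩ := hu.1
  have hu'meas : Measurable u' := hu'sm.measurable
  have hu' : MemLp u' (ENNReal.ofReal p) m := hu.ae_eq huu'
  -- replace u by u' in the integral, as J does not charge m-null fibers
  obtain ⟨T, hTsub, hTmeas, hT0⟩ :=
    exists_measurable_superset_of_null (ae_iff.1 huu' : m {x | ¬ u x = u' x} = 0)
  have hJT : J (T ×ˢ (Set.univ : Set E)) = 0 := by
    refine le_antisymm ?_ zero_le
    have := aux_stmt4 m N hN J D₂ hJ hTmeas MeasurableSet.univ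
      (h := fun _ => (1:ℝ≥0∞)) measurable_const
    rw [setLIntegral_one] at this
    refine this.trans ?_
    rw [setLIntegral_measure_zero _ _ hT0, mul_zero]
  have hJT' : J (Set.univ ×ˢ T) = 0 := by
    rw [← hsym, Measure.map_apply measurable_swap (MeasurableSet.univ.prod hTmeas),
      Set.preimage_swap_prod]
    exact hJT
  have hae : ∀ᵐ z ∂(J.restrict (U ×ˢ Vᶜ)),
      ENNReal.ofReal ((u z.1 - u z.2) ^ 2) = ENNReal.ofReal ((u' z.1 - u' z.2) ^ 2) := by
    apply ae_restrict_of_ae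
    have h1 : ∀ᵐ z ∂J, u z.1 = u' z.1 := by
      rw [ae_iff]
      refine measure_mono_null (fun z hz => ?_) hJT
      exact ⟨hTsub hz, Set.mem_univ _⟩
    have h2 : ∀ᵐ z ∂J, u z.2 = u' z.2 := by
      rw [ae_iff]
      refine measure_mono_null (fun z hz => ?_) hJT'
      exact ⟨Set.mem_univ _, hTsub hz⟩
    filter_upwards [h1, h2] with z e1 e2
    rw [e1, e2]
  rw [lintegral_congr_ae hae]
  -- separation constant
  obtain ⟨δ, hδ, hth⟩ := hUc.exists_thickening_subset_open hV hUV
  set c : ℝ≥0∞ := ENNReal.ofReal (min 1 (δ ^ β)) with hc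
  have hc0 : c ≠ 0 := by
    simp only [hc, Ne, ENNReal.ofReal_eq_zero, not_le]
    exact lt_min one_pos (Real.rpow_pos_of_pos hδ β)
  have hcT : c ≠ ⊤ := ENNReal.ofReal_ne_top
  have hdist : ∀ x ∈ U, ∀ y ∈ Vᶜ, δ ≤ dist x y := by
    intro x hx y hy
    by_contra hlt
    push_neg at hlt
    exact hy (hth (Metric.mem_thickening_iff.2 ⟨x, subset_closure hx, by rwa [dist_comm]⟩))
  have hmin : ∀ x y : E, δ ≤ dist x y → c ≤ ENNReal.ofReal (min 1 (dist x y ^ β)) := by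
    intro x y hxy
    exact ENNReal.ofReal_le_ofReal
      (min_le_min le_rfl (Real.rpow_le_rpow hδ.le hxy hβ.le))
  -- a.e. kernel bounds
  have hker : ∀ (A B : Set E), MeasurableSet B → (∀ x ∈ A, ∀ y ∈ B, δ ≤ dist x y) →
      ∀ᵐ x ∂m, x ∈ A → N x B ≤ Mβ / c := by
    intro A B hBm hsep
    filter_upwards [hbound] with x hx hxA
    rw [ENNReal.le_div_iff_mul_le (Or.inl hc0) (Or.inl hcT), mul_comm]
    calc c * N x B = ∫⁻ _ in B, c ∂(N x) := (setLIntegral_const B c).symm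
      _ ≤ ∫⁻ y in B, ENNReal.ofReal (min 1 (dist x y ^ β)) ∂(N x) := by
          refine setLIntegral_mono (by fun_prop) ?_
          intro y hy
          exact hmin x y (hsep x hxA y hy)
      _ ≤ ∫⁻ y, ENNReal.ofReal (min 1 (dist x y ^ β)) ∂(N x) := setLIntegral_le_lintegral _ _
      _ ≤ Mβ := hx
  have hNV : ∀ᵐ x ∂m, x ∈ U → N x Vᶜ ≤ Mβ / c := hker U Vᶜ hVcm hdist
  have hNU : ∀ᵐ x ∂m, x ∈ Vᶜ → N x U ≤ Mβ / c := by
    refine hker Vᶜ U hUm ?_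
    intro x hx y hy
    rw [dist_comm]
    exact hdist y hy x hx
  have hMc : Mβ / c < ⊤ := ENNReal.div_lt_top hMβ.ne hc0
  -- the function F
  set F : E → ℝ≥0∞ := fun x => ENNReal.ofReal (|u' x| ^ p) with hF
  have hFmeas : Measurable F := by fun_prop
  -- ∫ F < ∞
  have hFint : ∫⁻ x, F x ∂m < ⊤ := by
    have h2 := hu'.2
    have hpne : ENNReal.ofReal p ≠ 0 := by
      simp only [Ne, ENNReal.ofReal_eq_zero, not_le]; exact hp0
    rw [eLpNorm_eq_lintegral_rpow_enorm_toReal hpne ENNReal.ofReal_ne_top,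
      ENNReal.toReal_ofReal hp0.le] at h2
    have hlt : ∫⁻ x, ‖u' x‖ₑ ^ p ∂m < ⊤ := by
      by_contra hcon
      push_neg at hcon
      rw [top_le_iff.1 hcon, ENNReal.top_rpow_of_pos (by positivity)] at h2
      exact absurd h2 (lt_irrefl ⊤)
    refine lt_of_le_of_lt (le_of_eq ?_) hlt
    refine lintegral_congr fun x => ?_
    show ENNReal.ofReal (|u' x| ^ p) = ‖u' x‖ₑ ^ p
    rw [← ENNReal.ofReal_rpow_of_nonneg (abs_nonneg _) hp0.le, ← Real.norm_eq_abs,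
      ofReal_norm]
  -- finiteness of J on the rectangle
  have hJfin : J (U ×ˢ Vᶜ) < ⊤ := by
    have h1 := aux_stmt4 m N hN J D₂ hJ hUm hVcm (h := fun _ => (1:ℝ≥0∞)) measurable_const
    rw [setLIntegral_one] at h1
    refine lt_of_le_of_lt h1 ?_
    refine ENNReal.mul_lt_top ENNReal.ofReal_lt_top ?_
    have h2 : ∫⁻ x in U, (fun _ => (1:ℝ≥0∞)) x * N x Vᶜ ∂m ≤ (Mβ / c) * m U := by
      rw [← setLIntegral_const U (Mβ / c)]
      refine setLIntegral_mono_ae ((measurable_const).aemeasurable) ?_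
      filter_upwards [hNV] with x hx hxU
      rw [one_mul]
      exact hx hxU
    refine lt_of_le_of_lt h2 (ENNReal.mul_lt_top hMc ?_)
    exact lt_of_le_of_lt (measure_mono subset_closure) hUc.measure_lt_top
  have hJfin' : J (Vᶜ ×ˢ U) < ⊤ := by
    rw [← hsym, Measure.map_apply measurable_swap (hVcm.prod hUm), Set.preimage_swap_prod]
    exact hJfin
  -- the F-integrals over the two rectangles
  have hFrect : ∀ (A B : Set E), MeasurableSet A → MeasurableSet B →
      (∀ᵐ x ∂m, x ∈ A → N x B ≤ Mβ / c) →
      ∫⁻ z in A ×ˢ B, F z.1 ∂J < ⊤ := by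
    intro A B hAm hBm hNAB
    refine lt_of_le_of_lt (aux_stmt4 m N hN J D₂ hJ hAm hBm hFmeas) ?_
    refine ENNReal.mul_lt_top ENNReal.ofReal_lt_top ?_
    have h2 : ∫⁻ x in A, F x * N x B ∂m ≤ (Mβ / c) * ∫⁻ x, F x ∂m := by
      calc ∫⁻ x in A, F x * N x B ∂m ≤ ∫⁻ x in A, F x * (Mβ / c) ∂m := by
            refine setLIntegral_mono_ae ((hFmeas.mul_const _).aemeasurable) ?_
            filter_upwards [hNAB] with x hx hxA
            exact mul_le_mul_right (hx hxA) _
        _ ≤ ∫⁻ x, F x * (Mβ / c) ∂m := setLIntegral_le_lintegral _ _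
        _ = (Mβ / c) * ∫⁻ x, F x ∂m := by
            rw [lintegral_mul_const _ hFmeas, mul_comm]
    exact lt_of_le_of_lt h2 (ENNReal.mul_lt_top hMc hFint)
  -- pointwise bound
  have hpt : ∀ a b : ℝ,
      ENNReal.ofReal ((a - b) ^ 2) ≤
        (1 + ENNReal.ofReal (|a| ^ p)) + (1 + ENNReal.ofReal (|b| ^ p)) +
        ((1 + ENNReal.ofReal (|a| ^ p)) + (1 + ENNReal.ofReal (|b| ^ p))) := by
    intro a b
    have key : ∀ t : ℝ, t ^ 2 ≤ 1 + |t| ^ p := by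
      intro t
      rcases le_total |t| 1 with h | h
      · have : t ^ 2 ≤ 1 := by nlinarith [abs_nonneg t, sq_abs t]
        nlinarith [Real.rpow_nonneg (abs_nonneg t) p]
      · have h2 : |t| ^ (2:ℝ) ≤ |t| ^ p := Real.rpow_le_rpow_of_exponent_le h hp
        rw [show (2:ℝ) = ((2:ℕ):ℝ) by norm_num, Real.rpow_natCast] at h2
        nlinarith [sq_abs t]
    have hr : (a - b) ^ 2 ≤ (1 + |a| ^ p) + (1 + |b| ^ p) + ((1 + |a| ^ p) + (1 + |b| ^ p)) := by
      nlinarith [key a, key b, sq_nonneg (a + b)]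
    refine (ENNReal.ofReal_le_ofReal hr).trans (le_of_eq ?_)
    have h1 : (0:ℝ) ≤ |a| ^ p := Real.rpow_nonneg (abs_nonneg a) p
    have h2 : (0:ℝ) ≤ |b| ^ p := Real.rpow_nonneg (abs_nonneg b) p
    rw [ENNReal.ofReal_add (by positivity) (by positivity),
      ENNReal.ofReal_add (by positivity) (by positivity),
      ENNReal.ofReal_add (by positivity) h1, ENNReal.ofReal_add (by positivity) h2,
      ENNReal.ofReal_one]
  -- main estimate
  have hmono : ∫⁻ z in U ×ˢ Vᶜ, ENNReal.ofReal ((u' z.1 - u' z.2) ^ 2) ∂J ≤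
      ∫⁻ z in U ×ˢ Vᶜ, ((1 + F z.1) + (1 + F z.2) + ((1 + F z.1) + (1 + F z.2))) ∂J :=
    lintegral_mono fun z => hpt (u' z.1) (u' z.2)
  refine lt_of_le_of_lt hmono ?_
  have e1 : ∫⁻ z in U ×ˢ Vᶜ, (1 + F z.1) ∂J < ⊤ := by
    rw [lintegral_add_left measurable_const]
    rw [setLIntegral_one]
    exact ENNReal.add_lt_top.2 ⟨hJfin, hFrect U Vᶜ hUm hVcm hNV⟩
  have e2 : ∫⁻ z in U ×ˢ Vᶜ, (1 + F z.2) ∂J < ⊤ := by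
    have hswap : ∫⁻ z in U ×ˢ Vᶜ, (1 + F z.2) ∂J = ∫⁻ z in Vᶜ ×ˢ U, (1 + F z.1) ∂J := by
      conv_lhs => rw [← hsym]
      rw [Measure.restrict_map measurable_swap (hUm.prod hVcm), Set.preimage_swap_prod,
        lintegral_map (by fun_prop) measurable_swap]
      simp only [Prod.snd_swap]
    rw [hswap, lintegral_add_left measurable_const, setLIntegral_one]
    exact ENNReal.add_lt_top.2 ⟨hJfin', hFrect Vᶜ U hVcm hUm hNU⟩
  have hmeas1 : Measurable fun z : E × E => 1 + F z.1 := by fun_prop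
  have hmeas2 : Measurable fun z : E × E => 1 + F z.2 := by fun_prop
  calc ∫⁻ z in U ×ˢ Vᶜ, ((1 + F z.1) + (1 + F z.2) + ((1 + F z.1) + (1 + F z.2))) ∂J
      = (∫⁻ z in U ×ˢ Vᶜ, ((1 + F z.1) + (1 + F z.2)) ∂J) +
        ∫⁻ z in U ×ˢ Vᶜ, ((1 + F z.1) + (1 + F z.2)) ∂J := by
        rw [lintegral_add_left (f := fun z : E × E => (1 + F z.1) + (1 + F z.2)) (hmeas1.add hmeas2)]
    _ < ⊤ := by
        have : ∫⁻ z in U ×ˢ Vᶜ, ((1 + F z.1) + (1 + F z.2)) ∂J < ⊤ := by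
          rw [lintegral_add_left hmeas1]
          exact ENNReal.add_lt_top.2 ⟨e1, e2⟩
        exact ENNReal.add_lt_top.2 ⟨this, this⟩
end

section
/- Assume w_{p₁} ∈ L¹(E; m) and let u : E → ℝ be locally integrable with respect to m (integrable on every compact set). Then the following are equivalent: (1) w_{p₁} · |u| ∈ L¹(E; m); (2) for all open sets U, V with U ⋐ V, the closure of V compact, and o ∈ V, one has ∫_{U × (E∖V)} |u(x) − u(y)| dJ(x,y) < ∞. -/
open MeasureTheory ENNReal Metric Set

private lemma rpow_neg_anti {a b : ℝ≥0∞} (h : a ≤ b) {p : ℝ} (hp : 0 ≤ p) :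
    b ^ (-p) ≤ a ^ (-p) := by
  rw [ENNReal.rpow_neg, ENNReal.rpow_neg]
  exact ENNReal.inv_le_inv.mpr (ENNReal.rpow_le_rpow h hp)

private lemma two_rpow_ne_top {p : ℝ} : (2 : ℝ≥0∞) ^ p ≠ ⊤ := by
  simp [ENNReal.rpow_eq_top_iff]

private lemma ofReal_rpow_neg_ne_top {δ p : ℝ} (hδ : 0 < δ) :
    (ENNReal.ofReal δ) ^ (-p) ≠ ⊤ := by
  simp [ENNReal.rpow_eq_top_iff, ENNReal.ofReal_eq_zero, not_le.mpr hδ]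

private lemma min_b_pos {C p : ℝ} (hC : 0 < C) (_hp : 0 < p) :
    min 1 ((ENNReal.ofReal (2*C)) ^ (-p)) ≠ 0 := by
  have h1 : ((ENNReal.ofReal (2*C)) ^ (-p)) ≠ 0 := by
    simp [ENNReal.rpow_eq_zero_iff, ENNReal.ofReal_eq_zero, ENNReal.ofReal_ne_top,
      not_le.mpr (by linarith : (0:ℝ) < 2*C), not_le.mpr hC, ENNReal.mul_eq_top]
  exact (lt_min one_pos (pos_iff_ne_zero.mpr h1)).ne'

/-- Upper bound for the kernel on a rectangle. -/
private lemma aux_upper {E : Type*} [MetricSpace E] (o x y : E) {p q δ C : ℝ}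
    (hp : 0 < p) (hpq : p ≤ q) (hδ : 0 < δ) (hC : 1 ≤ C)
    (hxo : edist x o ≤ ENNReal.ofReal C)
    (hxy : ENNReal.ofReal δ ≤ edist x y) :
    edist x y ^ (-q) ≤
      ((ENNReal.ofReal δ) ^ (-q) * (min 1 ((ENNReal.ofReal (2*C)) ^ (-p)))⁻¹ + 2 ^ p)
        * min 1 (edist y o ^ (-p)) := by
  set b := min 1 ((ENNReal.ofReal (2*C)) ^ (-p)) with hbdef
  have hb0 : b ≠ 0 := min_b_pos (by linarith) hp
  have hbtop : b ≠ ⊤ := ne_top_of_le_ne_top one_ne_top (min_le_left _ _)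
  by_cases h : edist y o ≤ ENNReal.ofReal (2*C)
  · have hb : b ≤ min 1 (edist y o ^ (-p)) :=
      min_le_min le_rfl (rpow_neg_anti h hp.le)
    calc edist x y ^ (-q) ≤ (ENNReal.ofReal δ) ^ (-q) := rpow_neg_anti hxy (by linarith)
      _ = ((ENNReal.ofReal δ) ^ (-q) * b⁻¹) * b := by
          rw [mul_assoc, ENNReal.inv_mul_cancel hb0 hbtop, mul_one]
      _ ≤ ((ENNReal.ofReal δ) ^ (-q) * b⁻¹ + 2 ^ p) * min 1 (edist y o ^ (-p)) :=
          mul_le_mul' le_self_add hb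
  · push_neg at h
    have hyo_top : edist y o ≠ ⊤ := edist_ne_top _ _
    have h2C : ENNReal.ofReal (2*C) = 2 * ENNReal.ofReal C := by
      rw [ENNReal.ofReal_mul zero_le_two]
      norm_num
    have hC2 : ENNReal.ofReal C ≤ edist y o / 2 := by
      rw [ENNReal.le_div_iff_mul_le (Or.inl two_ne_zero) (Or.inl ofNat_ne_top)]
      calc ENNReal.ofReal C * 2 = 2 * ENNReal.ofReal C := mul_comm _ _
        _ = ENNReal.ofReal (2*C) := h2C.symm
        _ ≤ edist y o := h.le
    have hxy2 : edist y o / 2 ≤ edist x y := by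
      have tri : edist y o ≤ edist x y + edist x o := by
        rw [edist_comm x y]; exact edist_triangle _ _ _
      have h1 : edist y o - edist x o ≤ edist x y := tsub_le_iff_right.mpr tri
      have h2 : edist y o - ENNReal.ofReal C ≤ edist x y :=
        le_trans (tsub_le_tsub_left hxo _) h1
      have h3 : edist y o / 2 ≤ edist y o - ENNReal.ofReal C := by
        calc edist y o / 2 = edist y o - edist y o / 2 := (ENNReal.sub_half hyo_top).symm
          _ ≤ edist y o - ENNReal.ofReal C := tsub_le_tsub_left hC2 _
      exact h3.trans h2
    have h1le : (1:ℝ≥0∞) ≤ edist y o / 2 := by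
      refine le_trans ?_ hC2
      rw [← ENNReal.ofReal_one]
      exact ENNReal.ofReal_le_ofReal hC
    have hyo1 : (1:ℝ≥0∞) ≤ edist y o := h1le.trans (ENNReal.half_le_self)
    have hxy1 : (1:ℝ≥0∞) ≤ edist x y := h1le.trans hxy2
    have step1 : edist x y ^ (-q) ≤ edist x y ^ (-p) :=
      ENNReal.rpow_le_rpow_of_exponent_le hxy1 (by linarith)
    have step2 : edist x y ^ (-p) ≤ (edist y o / 2) ^ (-p) := rpow_neg_anti hxy2 hp.le
    have hhalf : (edist y o / 2) ^ (-p) = 2 ^ p * (edist y o) ^ (-p) := by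
      rw [div_eq_mul_inv, ENNReal.mul_rpow_of_ne_top hyo_top (by simp),
        ENNReal.inv_rpow, ENNReal.rpow_neg 2 p, inv_inv, mul_comm]
    have hwy : min 1 (edist y o ^ (-p)) = edist y o ^ (-p) := by
      refine min_eq_right ?_
      calc edist y o ^ (-p) ≤ edist y o ^ (0:ℝ) :=
            ENNReal.rpow_le_rpow_of_exponent_le hyo1 (by linarith)
        _ = 1 := ENNReal.rpow_zero
    calc edist x y ^ (-q) ≤ 2 ^ p * (edist y o) ^ (-p) :=
          step1.trans (step2.trans_eq hhalf)
      _ = 2 ^ p * min 1 (edist y o ^ (-p)) := by rw [hwy]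
      _ ≤ ((ENNReal.ofReal δ) ^ (-q) * b⁻¹ + 2 ^ p) * min 1 (edist y o ^ (-p)) :=
          mul_le_mul' le_add_self le_rfl

/-- Lower bound for the kernel on a rectangle. -/
private lemma aux_lower {E : Type*} [MetricSpace E] (o x y : E) {p s : ℝ}
    (hp : 0 < p) (hs : 0 ≤ s)
    (hxo : edist x o ≤ ENNReal.ofReal s)
    (hyo : ENNReal.ofReal (2*s) ≤ edist y o) :
    2 ^ (-p) * min 1 (edist y o ^ (-p)) ≤ edist x y ^ (-p) := by
  have hxy : edist x y ≤ 2 * edist y o := by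
    calc edist x y ≤ edist x o + edist o y := edist_triangle _ _ _
      _ ≤ ENNReal.ofReal s + edist y o := by
          refine add_le_add hxo ?_
          rw [edist_comm]
      _ ≤ edist y o + edist y o :=
          add_le_add (le_trans (ENNReal.ofReal_le_ofReal (by linarith)) hyo) le_rfl
      _ = 2 * edist y o := (two_mul _).symm
  calc 2 ^ (-p) * min 1 (edist y o ^ (-p)) ≤ 2 ^ (-p) * (edist y o) ^ (-p) :=
        mul_le_mul' le_rfl (min_le_right _ _)
    _ = (2 * edist y o) ^ (-p) := by
        rw [ENNReal.mul_rpow_of_ne_top ofNat_ne_top (edist_ne_top _ _)]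
    _ ≤ edist x y ^ (-p) := rpow_neg_anti hxy hp.le

set_option maxHeartbeats 1000000 in
/-- Let `E` be a locally compact separable metric space, `m` a Radon
measure with full support, `o ∈ E`, and `J` a Borel measure on `E × E` with
`D₁ ∫_A ρ(x,y)^{−p₁} d(m×m) ≤ J(A) ≤ D₂ ∫_A ρ(x,y)^{−p₂} d(m×m)` for all Borel `A`,
where `D₁, D₂ > 0`, `0 < p₁ ≤ p₂ < ∞`. Write `w_p(y) = min(1, ρ(y,o)^{−p})` (value `1`
at `y = o`). Assume `w_{p₁} ∈ L¹(E;m)` and let `u` be locally `m`-integrable. Then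
`w_{p₁}·|u| ∈ L¹(E;m)` iff for all open `U ⋐ V` with `closure V` compact and `o ∈ V`,
`∫_{U × (E∖V)} |u(x) − u(y)| dJ < ∞`. -/
theorem stmt_5 {E : Type*} [MetricSpace E] [LocallyCompactSpace E]
    [TopologicalSpace.SeparableSpace E] [MeasurableSpace E] [BorelSpace E]
    (m : Measure E) [m.Regular] [m.IsOpenPosMeasure]
    (o : E) (J : Measure (E × E))
    (D₁ D₂ p₁ p₂ : ℝ) (hD₁ : 0 < D₁) (hD₂ : 0 < D₂) (hp₁ : 0 < p₁) (hp₁₂ : p₁ ≤ p₂)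
    (hJl : ∀ A : Set (E × E), MeasurableSet A →
      ENNReal.ofReal D₁ * ∫⁻ z in A, edist z.1 z.2 ^ (-p₁) ∂(m.prod m) ≤ J A)
    (hJu : ∀ A : Set (E × E), MeasurableSet A →
      J A ≤ ENNReal.ofReal D₂ * ∫⁻ z in A, edist z.1 z.2 ^ (-p₂) ∂(m.prod m))
    (hw : ∫⁻ y, min 1 (edist y o ^ (-p₁)) ∂m < ⊤)
    (u : E → ℝ) (hu : ∀ K : Set E, IsCompact K → IntegrableOn u K m) :
    (∫⁻ y, min 1 (edist y o ^ (-p₁)) * ENNReal.ofReal |u y| ∂m < ⊤) ↔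
    (∀ U V : Set E, IsOpen U → IsOpen V → IsCompact (closure U) → closure U ⊆ V →
      IsCompact (closure V) → o ∈ V →
      ∫⁻ z in U ×ˢ Vᶜ, ENNReal.ofReal |u z.1 - u z.2| ∂J < ⊤) := by
  haveI : SecondCountableTopology E := UniformSpace.secondCountable_of_separable E
  have hum : AEMeasurable u m :=
    ((locallyIntegrable_iff).mpr hu).aestronglyMeasurable.aemeasurable
  set w : E → ℝ≥0∞ := fun y => min 1 (edist y o ^ (-p₁)) with hw_def
  have wmeas : Measurable w :=
    measurable_const.min
      ((ENNReal.continuous_rpow_const.comp (continuous_id.edist continuous_const)).measurable)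
  set f₁ : E → ℝ≥0∞ := fun x => ENNReal.ofReal |u x| with hf₁_def
  have f₁meas : AEMeasurable f₁ m :=
    (continuous_abs.measurable.comp_aemeasurable hum).ennreal_ofReal
  set F : E × E → ℝ≥0∞ := fun z => ENNReal.ofReal |u z.1 - u z.2| with hF_def
  have hFmeas : AEMeasurable F (m.prod m) :=
    (continuous_abs.measurable.comp_aemeasurable (hum.comp_fst.sub hum.comp_snd)).ennreal_ofReal
  have h₂meas : AEMeasurable (fun y => w y * f₁ y) m := wmeas.aemeasurable.mul f₁meas
  -- finiteness of ∫_K f₁ for compact K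
  have hKfin : ∀ K : Set E, IsCompact K → ∫⁻ x in K, f₁ x ∂m < ⊤ := by
    intro K hK
    have h := (hu K hK).2
    rw [hasFiniteIntegral_def] at h
    refine lt_of_le_of_lt (le_of_eq ?_) h
    refine lintegral_congr fun x => ?_
    simp only [hf₁_def, Real.enorm_eq_ofReal_abs]
  -- Tonelli on rectangles
  have tonelli : ∀ (U S : Set E) (f g : E → ℝ≥0∞), AEMeasurable f (m.restrict U) →
      AEMeasurable g (m.restrict S) →
      ∫⁻ z in U ×ˢ S, f z.1 * g z.2 ∂(m.prod m)
        = (∫⁻ x in U, f x ∂m) * (∫⁻ y in S, g y ∂m) := by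
    intro U S f g hf hg
    rw [← Measure.prod_restrict]
    exact lintegral_prod_mul hf hg
  have habs : ∀ a b : ℝ, |a - b| ≤ |a| + |b| := fun a b => by
    calc |a - b| = |a + (-b)| := by ring_nf
      _ ≤ |a| + |(-b)| := abs_add_le _ _
      _ = |a| + |b| := by rw [abs_neg]
  constructor
  · -- forward direction
    intro h1 U V hUo hVo hKU hUV hKV hoV
    have hA : MeasurableSet (U ×ˢ Vᶜ) := hUo.measurableSet.prod hVo.measurableSet.compl
    obtain ⟨C₀, hC₀⟩ := hKV.isBounded.subset_closedBall o
    set C := max C₀ 1 with hCdef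
    have hC1 : (1:ℝ) ≤ C := le_max_right _ _
    obtain ⟨δ, hδpos, hδ⟩ := hKU.exists_thickening_subset_open hVo hUV
    set g₂ : E × E → ℝ≥0∞ := fun z => edist z.1 z.2 ^ (-p₂) with hg₂def
    have hg₂meas : Measurable g₂ :=
      ENNReal.continuous_rpow_const.measurable.comp measurable_edist
    set M : ℝ≥0∞ :=
      (ENNReal.ofReal δ) ^ (-p₂) * (min 1 ((ENNReal.ofReal (2*C)) ^ (-p₁)))⁻¹ + 2 ^ p₁
      with hMdef
    have hMtop : M ≠ ⊤ := by
      refine ENNReal.add_ne_top.mpr ⟨ENNReal.mul_ne_top (ofReal_rpow_neg_ne_top hδpos) ?_,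
        two_rpow_ne_top⟩
      exact ENNReal.inv_ne_top.mpr (min_b_pos (by linarith) hp₁)
    -- pointwise bound
    have hpt : ∀ z : E × E, z ∈ U ×ˢ Vᶜ →
        g₂ z * F z ≤ M * (f₁ z.1 * w z.2) + M * ((fun _ => (1:ℝ≥0∞)) z.1 * (w z.2 * f₁ z.2)) := by
      intro z hz
      obtain ⟨hz1, hz2⟩ := hz
      have hxo : edist z.1 o ≤ ENNReal.ofReal C := by
        rw [edist_dist]
        refine ENNReal.ofReal_le_ofReal ?_
        have : z.1 ∈ closedBall o C₀ := hC₀ (subset_closure (hUV (subset_closure hz1)))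
        calc dist z.1 o ≤ C₀ := mem_closedBall.mp this
          _ ≤ C := le_max_left _ _
      have hxy : ENNReal.ofReal δ ≤ edist z.1 z.2 := by
        have hnm : z.2 ∉ thickening δ (closure U) := fun hmem => hz2 (hδ hmem)
        rw [mem_thickening_iff_infEdist_lt, not_lt] at hnm
        calc ENNReal.ofReal δ ≤ EMetric.infEdist z.2 (closure U) := hnm
          _ ≤ edist z.2 z.1 := EMetric.infEdist_le_edist_of_mem (subset_closure hz1)
          _ = edist z.1 z.2 := edist_comm _ _
      have hker : g₂ z ≤ M * w z.2 :=
        aux_upper o z.1 z.2 hp₁ hp₁₂ hδpos hC1 hxo hxy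
      have hFle : F z ≤ f₁ z.1 + f₁ z.2 := by
        simp only [hF_def, hf₁_def]
        rw [← ENNReal.ofReal_add (abs_nonneg _) (abs_nonneg _)]
        exact ENNReal.ofReal_le_ofReal (habs _ _)
      calc g₂ z * F z ≤ (M * w z.2) * (f₁ z.1 + f₁ z.2) := mul_le_mul' hker hFle
        _ = M * (f₁ z.1 * w z.2) + M * ((fun _ => (1:ℝ≥0∞)) z.1 * (w z.2 * f₁ z.2)) := by
            ring
    -- measure comparison
    have hres : J.restrict (U ×ˢ Vᶜ) ≤
        ((ENNReal.ofReal D₂) • ((m.prod m).withDensity g₂)).restrict (U ×ˢ Vᶜ) := by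
      refine Measure.le_iff.mpr fun s hs => ?_
      rw [Measure.restrict_apply hs, Measure.restrict_apply hs]
      calc J (s ∩ U ×ˢ Vᶜ)
          ≤ ENNReal.ofReal D₂ * ∫⁻ z in s ∩ U ×ˢ Vᶜ, edist z.1 z.2 ^ (-p₂) ∂(m.prod m) :=
            hJu _ (hs.inter hA)
        _ = ((ENNReal.ofReal D₂) • ((m.prod m).withDensity g₂)) (s ∩ U ×ˢ Vᶜ) := by
            rw [Measure.smul_apply, smul_eq_mul, withDensity_apply _ (hs.inter hA)]
    have step1 : ∫⁻ z in U ×ˢ Vᶜ, F z ∂J ≤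
        ENNReal.ofReal D₂ * ∫⁻ z in U ×ˢ Vᶜ, g₂ z * F z ∂(m.prod m) := by
      calc ∫⁻ z in U ×ˢ Vᶜ, F z ∂J
          ≤ ∫⁻ z, F z ∂(((ENNReal.ofReal D₂) • ((m.prod m).withDensity g₂)).restrict (U ×ˢ Vᶜ)) :=
            lintegral_mono' hres le_rfl
        _ = ENNReal.ofReal D₂ * ∫⁻ z in U ×ˢ Vᶜ, F z ∂((m.prod m).withDensity g₂) := by
            rw [Measure.restrict_smul, lintegral_smul_measure, smul_eq_mul]
        _ = ENNReal.ofReal D₂ * ∫⁻ z in U ×ˢ Vᶜ, g₂ z * F z ∂(m.prod m) := by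
            rw [setLIntegral_withDensity_eq_lintegral_mul₀ hg₂meas.aemeasurable hFmeas hA]
            rfl
    -- bound the integral
    have step2 : ∫⁻ z in U ×ˢ Vᶜ, g₂ z * F z ∂(m.prod m) < ⊤ := by
      have hb1 : AEMeasurable (fun z : E × E => M * (f₁ z.1 * w z.2))
          ((m.prod m).restrict (U ×ˢ Vᶜ)) :=
        ((f₁meas.comp_fst.mul (wmeas.comp measurable_snd).aemeasurable).const_mul M).restrict
      calc ∫⁻ z in U ×ˢ Vᶜ, g₂ z * F z ∂(m.prod m)
          ≤ ∫⁻ z in U ×ˢ Vᶜ,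
              (M * (f₁ z.1 * w z.2) + M * ((fun _ => (1:ℝ≥0∞)) z.1 * (w z.2 * f₁ z.2)))
              ∂(m.prod m) := by
            refine lintegral_mono_ae ?_
            filter_upwards [ae_restrict_mem hA] with z hz using hpt z hz
        _ = M * ∫⁻ z in U ×ˢ Vᶜ, f₁ z.1 * w z.2 ∂(m.prod m)
            + M * ∫⁻ z in U ×ˢ Vᶜ, (fun _ => (1:ℝ≥0∞)) z.1 * (w z.2 * f₁ z.2) ∂(m.prod m) := by
            rw [lintegral_add_left' hb1, lintegral_const_mul' M _ hMtop,
              lintegral_const_mul' M _ hMtop]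
        _ = M * ((∫⁻ x in U, f₁ x ∂m) * (∫⁻ y in Vᶜ, w y ∂m))
            + M * (m U * (∫⁻ y in Vᶜ, w y * f₁ y ∂m)) := by
            rw [tonelli U Vᶜ f₁ w f₁meas.restrict wmeas.aemeasurable.restrict,
              tonelli U Vᶜ (fun _ => (1:ℝ≥0∞)) (fun y => w y * f₁ y) aemeasurable_const
                h₂meas.restrict, lintegral_const, Measure.restrict_apply_univ, one_mul]
        _ < ⊤ := by
            have hUfin : ∫⁻ x in U, f₁ x ∂m < ⊤ :=
              lt_of_le_of_lt (lintegral_mono_set subset_closure) (hKfin _ hKU)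
            have hwVc : ∫⁻ y in Vᶜ, w y ∂m < ⊤ :=
              lt_of_le_of_lt (setLIntegral_le_lintegral _ _) hw
            have hh₂Vc : ∫⁻ y in Vᶜ, w y * f₁ y ∂m < ⊤ :=
              lt_of_le_of_lt (setLIntegral_le_lintegral _ _) h1
            have hmU : m U < ⊤ :=
              lt_of_le_of_lt (measure_mono subset_closure) hKU.measure_lt_top
            exact ENNReal.add_lt_top.mpr
              ⟨ENNReal.mul_lt_top hMtop.lt_top (ENNReal.mul_lt_top hUfin hwVc),
               ENNReal.mul_lt_top hMtop.lt_top (ENNReal.mul_lt_top hmU hh₂Vc)⟩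
    exact lt_of_le_of_lt step1
      (ENNReal.mul_lt_top (by simp : (ENNReal.ofReal D₂) < ⊤) step2)
  · -- backward direction
    intro h2
    obtain ⟨K, hK, hKnhds⟩ := exists_compact_mem_nhds o
    obtain ⟨r, hr, hball⟩ := Metric.mem_nhds_iff.mp hKnhds
    set s : ℝ := r/4 with hsdef
    have hs : (0:ℝ) < s := by positivity
    set U : Set E := ball o s with hUdef
    set V : Set E := ball o (2*s) with hVdef
    have hclU : closure U ⊆ closedBall o s := closure_ball_subset_closedBall
    have hclV : closure V ⊆ closedBall o (2*s) := closure_ball_subset_closedBall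
    have hKU' : IsCompact (closure U) :=
      hK.of_isClosed_subset isClosed_closure
        (hclU.trans ((closedBall_subset_ball (by linarith)).trans hball))
    have hKV' : IsCompact (closure V) :=
      hK.of_isClosed_subset isClosed_closure
        (hclV.trans ((closedBall_subset_ball (by linarith)).trans hball))
    have hUV : closure U ⊆ V := hclU.trans (closedBall_subset_ball (by linarith))
    have hoV : o ∈ V := mem_ball_self (by linarith)
    have hfin := h2 U V isOpen_ball isOpen_ball hKU' hUV hKV' hoV
    have hA : MeasurableSet (U ×ˢ Vᶜ) :=
      isOpen_ball.measurableSet.prod isOpen_ball.measurableSet.compl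
    set g₁ : E × E → ℝ≥0∞ := fun z => edist z.1 z.2 ^ (-p₁) with hg₁def
    have hg₁meas : Measurable g₁ :=
      ENNReal.continuous_rpow_const.measurable.comp measurable_edist
    -- measure comparison from below
    have hres : ((ENNReal.ofReal D₁) • ((m.prod m).withDensity g₁)).restrict (U ×ˢ Vᶜ)
        ≤ J.restrict (U ×ˢ Vᶜ) := by
      refine Measure.le_iff.mpr fun t ht => ?_
      rw [Measure.restrict_apply ht, Measure.restrict_apply ht]
      calc ((ENNReal.ofReal D₁) • ((m.prod m).withDensity g₁)) (t ∩ U ×ˢ Vᶜ)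
          = ENNReal.ofReal D₁ * ∫⁻ z in t ∩ U ×ˢ Vᶜ, edist z.1 z.2 ^ (-p₁) ∂(m.prod m) := by
            rw [Measure.smul_apply, smul_eq_mul, withDensity_apply _ (ht.inter hA)]
        _ ≤ J (t ∩ U ×ˢ Vᶜ) := hJl _ (ht.inter hA)
    have hIfin : ∫⁻ z in U ×ˢ Vᶜ, g₁ z * F z ∂(m.prod m) < ⊤ := by
      have heq : ENNReal.ofReal D₁ * ∫⁻ z in U ×ˢ Vᶜ, g₁ z * F z ∂(m.prod m)
          = ∫⁻ z, F z ∂(((ENNReal.ofReal D₁) • ((m.prod m).withDensity g₁)).restrict (U ×ˢ Vᶜ)) := by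
        rw [Measure.restrict_smul, lintegral_smul_measure, smul_eq_mul,
          setLIntegral_withDensity_eq_lintegral_mul₀ hg₁meas.aemeasurable hFmeas hA]
        rfl
      have hle : ENNReal.ofReal D₁ * ∫⁻ z in U ×ˢ Vᶜ, g₁ z * F z ∂(m.prod m)
          < ⊤ := by
        rw [heq]
        exact lt_of_le_of_lt (lintegral_mono' hres le_rfl) hfin
      rcases ENNReal.mul_lt_top_iff.mp hle with ⟨_, h⟩ | h | h
      · exact h
      · exact absurd h (by simp [ENNReal.ofReal_eq_zero, not_le.mpr hD₁])
      · simp [h]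
    -- constants for pointwise bounds
    set C : ℝ := max s 1 with hCdef
    have hC1 : (1:ℝ) ≤ C := le_max_right _ _
    set M₂ : ℝ≥0∞ :=
      (ENNReal.ofReal s) ^ (-p₁) * (min 1 ((ENNReal.ofReal (2*C)) ^ (-p₁)))⁻¹ + 2 ^ p₁
      with hM₂def
    have hM₂top : M₂ ≠ ⊤ := by
      refine ENNReal.add_ne_top.mpr ⟨ENNReal.mul_ne_top (ofReal_rpow_neg_ne_top hs) ?_,
        two_rpow_ne_top⟩
      exact ENNReal.inv_ne_top.mpr (min_b_pos (by linarith) hp₁)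
    set c₀ : ℝ≥0∞ := 2 ^ (-p₁) with hc₀def
    have hc₀top : c₀ ≠ ⊤ := two_rpow_ne_top
    have hc₀0 : c₀ ≠ 0 := by
      simp [hc₀def, ENNReal.rpow_eq_zero_iff]
    -- pointwise bounds on the rectangle
    have hpt : ∀ z : E × E, z ∈ U ×ˢ Vᶜ →
        c₀ * ((fun _ => (1:ℝ≥0∞)) z.1 * (w z.2 * f₁ z.2))
          ≤ g₁ z * F z + M₂ * (f₁ z.1 * w z.2) := by
      intro z hz
      obtain ⟨hz1, hz2⟩ := hz
      have hxo : edist z.1 o ≤ ENNReal.ofReal s := by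
        rw [edist_dist]
        exact ENNReal.ofReal_le_ofReal (le_of_lt (mem_ball.mp hz1))
      have hyo : ENNReal.ofReal (2*s) ≤ edist z.2 o := by
        rw [edist_dist]
        exact ENNReal.ofReal_le_ofReal (not_lt.mp fun hc => hz2 (mem_ball.mpr hc))
      have hlow : c₀ * w z.2 ≤ g₁ z := aux_lower o z.1 z.2 hp₁ hs.le hxo hyo
      have hxy : ENNReal.ofReal s ≤ edist z.1 z.2 := by
        rw [edist_dist]
        refine ENNReal.ofReal_le_ofReal ?_
        have h1 : dist z.2 o ≤ dist z.2 z.1 + dist z.1 o := dist_triangle _ _ _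
        have h2 : 2*s ≤ dist z.2 o := not_lt.mp fun hc => hz2 (mem_ball.mpr hc)
        have h3 : dist z.1 o < s := mem_ball.mp hz1
        have := dist_comm z.1 z.2
        linarith [dist_comm z.1 z.2 ▸ h1]
      have hxo' : edist z.1 o ≤ ENNReal.ofReal C :=
        hxo.trans (ENNReal.ofReal_le_ofReal (le_max_left _ _))
      have hupp : g₁ z ≤ M₂ * w z.2 :=
        aux_upper o z.1 z.2 hp₁ le_rfl hs hC1 hxo' hxy
      have hFle : f₁ z.2 ≤ F z + f₁ z.1 := by
        simp only [hF_def, hf₁_def]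
        rw [← ENNReal.ofReal_add (abs_nonneg _) (abs_nonneg _)]
        refine ENNReal.ofReal_le_ofReal ?_
        calc |u z.2| = |(u z.1 - u z.2) - u z.1| := by rw [sub_sub_cancel_left, abs_neg]
          _ ≤ |u z.1 - u z.2| + |u z.1| := by
              have := habs (u z.1 - u z.2) (u z.1)
              linarith [this]
      calc c₀ * ((fun _ => (1:ℝ≥0∞)) z.1 * (w z.2 * f₁ z.2))
          = (c₀ * w z.2) * f₁ z.2 := by ring
        _ ≤ g₁ z * f₁ z.2 := mul_le_mul' hlow le_rfl
        _ ≤ g₁ z * (F z + f₁ z.1) := mul_le_mul' le_rfl hFle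
        _ = g₁ z * F z + g₁ z * f₁ z.1 := by ring
        _ ≤ g₁ z * F z + (M₂ * w z.2) * f₁ z.1 :=
            add_le_add le_rfl (mul_le_mul' hupp le_rfl)
        _ = g₁ z * F z + M₂ * (f₁ z.1 * w z.2) := by ring
    -- integrate the pointwise bound
    have hUfin : ∫⁻ x in U, f₁ x ∂m < ⊤ :=
      lt_of_le_of_lt (lintegral_mono_set subset_closure) (hKfin _ hKU')
    have hwVc : ∫⁻ y in Vᶜ, w y ∂m < ⊤ :=
      lt_of_le_of_lt (setLIntegral_le_lintegral _ _) hw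
    have hg₁F : AEMeasurable (fun z : E × E => g₁ z * F z)
        ((m.prod m).restrict (U ×ˢ Vᶜ)) :=
      (hg₁meas.aemeasurable.mul hFmeas).restrict
    have hmain : c₀ * (m U * ∫⁻ y in Vᶜ, w y * f₁ y ∂m) < ⊤ := by
      calc c₀ * (m U * ∫⁻ y in Vᶜ, w y * f₁ y ∂m)
          = c₀ * ∫⁻ z in U ×ˢ Vᶜ, (fun _ => (1:ℝ≥0∞)) z.1 * (w z.2 * f₁ z.2) ∂(m.prod m) := by
            rw [tonelli U Vᶜ (fun _ => (1:ℝ≥0∞)) (fun y => w y * f₁ y) aemeasurable_const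
              h₂meas.restrict, lintegral_const, Measure.restrict_apply_univ, one_mul]
        _ = ∫⁻ z in U ×ˢ Vᶜ, c₀ * ((fun _ => (1:ℝ≥0∞)) z.1 * (w z.2 * f₁ z.2)) ∂(m.prod m) :=
            (lintegral_const_mul' c₀ _ hc₀top).symm
        _ ≤ ∫⁻ z in U ×ˢ Vᶜ, (g₁ z * F z + M₂ * (f₁ z.1 * w z.2)) ∂(m.prod m) := by
            refine lintegral_mono_ae ?_
            filter_upwards [ae_restrict_mem hA] with z hz using hpt z hz
        _ = (∫⁻ z in U ×ˢ Vᶜ, g₁ z * F z ∂(m.prod m))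
            + M₂ * ∫⁻ z in U ×ˢ Vᶜ, f₁ z.1 * w z.2 ∂(m.prod m) := by
            rw [lintegral_add_left' hg₁F, lintegral_const_mul' M₂ _ hM₂top]
        _ = (∫⁻ z in U ×ˢ Vᶜ, g₁ z * F z ∂(m.prod m))
            + M₂ * ((∫⁻ x in U, f₁ x ∂m) * (∫⁻ y in Vᶜ, w y ∂m)) := by
            rw [tonelli U Vᶜ f₁ w f₁meas.restrict wmeas.aemeasurable.restrict]
        _ < ⊤ := ENNReal.add_lt_top.mpr
            ⟨hIfin, ENNReal.mul_lt_top hM₂top.lt_top (ENNReal.mul_lt_top hUfin hwVc)⟩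
    have hmU0 : m U ≠ 0 :=
      (isOpen_ball.measure_pos m (nonempty_ball.mpr (by linarith))).ne'
    have hVcfin : ∫⁻ y in Vᶜ, w y * f₁ y ∂m < ⊤ := by
      rcases ENNReal.mul_lt_top_iff.mp hmain with ⟨_, h⟩ | h | h
      · rcases ENNReal.mul_lt_top_iff.mp h with ⟨_, h'⟩ | h' | h'
        · exact h'
        · exact absurd h' hmU0
        · simp [h']
      · exact absurd h hc₀0
      · rw [mul_eq_zero] at h
        rcases h with h | h
        · exact absurd h hmU0
        · simp [h]
    have hVfin : ∫⁻ y in V, w y * f₁ y ∂m < ⊤ := by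
      refine lt_of_le_of_lt ?_ (hKfin _ hKV')
      calc ∫⁻ y in V, w y * f₁ y ∂m ≤ ∫⁻ y in V, f₁ y ∂m := by
            refine lintegral_mono fun y => ?_
            calc w y * f₁ y ≤ 1 * f₁ y := mul_le_mul' (min_le_left _ _) le_rfl
              _ = f₁ y := one_mul _
        _ ≤ ∫⁻ y in closure V, f₁ y ∂m := lintegral_mono_set subset_closure
    calc ∫⁻ y, w y * f₁ y ∂m
        = (∫⁻ y in V, w y * f₁ y ∂m) + ∫⁻ y in Vᶜ, w y * f₁ y ∂m :=
          (lintegral_add_compl _ isOpen_ball.measurableSet).symm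
      _ < ⊤ := ENNReal.add_lt_top.mpr ⟨hVfin, hVcfin⟩
end

section
/- Assume w_{p₁} ∈ L¹(E; m) and let u : E → ℝ be locally square-integrable with respect to m (square-integrable on every compact set). Then the following are equivalent: (3) w_{p₁} · |u|² ∈ L¹(E; m); (4) for all open sets U, V with U ⋐ V, the closure of V compact, and o ∈ V, one has ∫_{U × (E∖V)} |u(x) − u(y)|² dJ(x,y) < ∞. -/
open MeasureTheory ENNReal


lemma powAnti {p : ℝ} (hp : 0 ≤ p) {a b : ℝ≥0∞} (hab : a ≤ b) : b ^ (-p) ≤ a ^ (-p) := by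
  rw [ENNReal.rpow_neg, ENNReal.rpow_neg]
  exact ENNReal.inv_le_inv.mpr (ENNReal.rpow_le_rpow hab hp)

lemma kerA {p₁ p : ℝ} (hp₁ : 0 < p₁) (hp : p₁ ≤ p) {δ d₀ a b d : ℝ≥0∞}
    (hd₀ : d₀ ≠ ⊤) (hb : b ≠ ⊤)
    (hxo : d ≤ d₀) (hδa : δ ≤ a) (htri : b ≤ a + d) :
    a ^ (-p) ≤ (δ ^ (-p) * (min 1 ((2 * max 1 d₀) ^ (-p₁)))⁻¹ + 2 ^ p) * min 1 (b ^ (-p₁)) := by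
  have hp0 : 0 < p := hp₁.trans_le hp
  set M : ℝ≥0∞ := 2 * max 1 d₀ with hM
  have hMt : M ≠ ⊤ := by
    simp only [hM, Ne, ENNReal.mul_eq_top]
    simp [hd₀]
  have hM1 : (1 : ℝ≥0∞) ≤ M := by
    calc (1:ℝ≥0∞) ≤ max 1 d₀ := le_max_left _ _
    _ ≤ 2 * max 1 d₀ := le_mul_of_one_le_left (zero_le) one_le_two
  rcases le_or_gt b M with hcb | hcb
  · have h1 : M ^ (-p₁) ≤ b ^ (-p₁) := powAnti hp₁.le hcb
    have hwmin : min 1 (M ^ (-p₁)) ≤ min 1 (b ^ (-p₁)) := min_le_min le_rfl h1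
    have hMp : M ^ (-p₁) ≠ 0 := by
      rw [ENNReal.rpow_neg, Ne, ENNReal.inv_eq_zero]
      exact (ENNReal.rpow_lt_top_of_nonneg hp₁.le hMt).ne
    have hne0 : min 1 (M ^ (-p₁)) ≠ 0 :=
      (lt_min one_pos (pos_iff_ne_zero.mpr hMp)).ne'
    have hnet : min 1 (M ^ (-p₁)) ≠ ⊤ := (min_le_left _ _).trans_lt one_lt_top |>.ne
    calc a ^ (-p) ≤ δ ^ (-p) := powAnti hp0.le hδa
      _ = δ ^ (-p) * ((min 1 (M ^ (-p₁)))⁻¹ * min 1 (M ^ (-p₁))) := by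
          rw [ENNReal.inv_mul_cancel hne0 hnet, mul_one]
      _ = (δ ^ (-p) * (min 1 (M ^ (-p₁)))⁻¹) * min 1 (M ^ (-p₁)) := by ring
      _ ≤ (δ ^ (-p) * (min 1 (M ^ (-p₁)))⁻¹) * min 1 (b ^ (-p₁)) := mul_le_mul_right hwmin _
      _ ≤ _ := mul_le_mul_left le_self_add _
  · have hb1 : (1 : ℝ≥0∞) ≤ b := hM1.trans hcb.le
    have hdb : d ≤ b / 2 := by
      have h1 : d ≤ max 1 d₀ := hxo.trans (le_max_right _ _)
      refine h1.trans ?_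
      rw [ENNReal.le_div_iff_mul_le (Or.inl two_ne_zero) (Or.inl ENNReal.ofNat_ne_top), mul_comm]
      exact hcb.le
    have hba : b / 2 ≤ a := by
      have h2 : b - b / 2 ≤ a := by
        rw [tsub_le_iff_right]
        exact htri.trans (add_le_add_right hdb a)
      rwa [ENNReal.sub_half hb] at h2
    have hmin : min 1 (b ^ (-p₁)) = b ^ (-p₁) := by
      refine min_eq_right ?_
      have := powAnti hp₁.le hb1
      simpa using this
    have key : a ^ (-p) ≤ 2 ^ p * b ^ (-p₁) := by
      calc a ^ (-p) ≤ (b / 2) ^ (-p) := powAnti hp0.le hba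
        _ = b ^ (-p) * 2 ^ p := by
            rw [div_eq_mul_inv, ENNReal.mul_rpow_of_ne_top hb (by simp), ENNReal.inv_rpow,
              ENNReal.rpow_neg 2 p, inv_inv]
        _ ≤ b ^ (-p₁) * 2 ^ p := by
            exact mul_le_mul_left (ENNReal.rpow_le_rpow_of_exponent_le hb1 (by linarith)) _
        _ = 2 ^ p * b ^ (-p₁) := mul_comm _ _
    rw [hmin]
    exact key.trans (mul_le_mul_left le_add_self _)

lemma kerB {p₁ : ℝ} (hp₁ : 0 < p₁) {d₀ a b d : ℝ≥0∞}
    (hd₀ : d₀ ≠ ⊤) (hb : b ≠ ⊤) (hxo : d ≤ d₀) (htri : a ≤ d + b) :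
    min 1 (b ^ (-p₁)) ≤ (2 * max 1 d₀) ^ p₁ * a ^ (-p₁) := by
  set M : ℝ≥0∞ := max 1 d₀ with hM
  have hMt : M ≠ ⊤ := by simp [hM, hd₀]
  have hM1 : (1:ℝ≥0∞) ≤ M := le_max_left _ _
  have h2Mt : (2 * M) ≠ ⊤ := by simp [ENNReal.mul_eq_top, hMt]
  rcases le_or_gt b M with hcb | hcb
  · have ha2M : a ≤ 2 * M := by
      calc a ≤ d + b := htri
        _ ≤ M + M := add_le_add (hxo.trans (le_max_right _ _)) hcb
        _ = 2 * M := (two_mul M).symm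
    have h1 : (2 * M) ^ (-p₁) ≤ a ^ (-p₁) := powAnti hp₁.le ha2M
    calc min 1 (b ^ (-p₁)) ≤ 1 := min_le_left _ _
      _ = (2 * M) ^ p₁ * (2 * M) ^ (-p₁) := by
          rw [ENNReal.rpow_neg, ENNReal.mul_inv_cancel]
          · exact (ENNReal.rpow_pos (ENNReal.mul_pos two_ne_zero (one_pos.trans_le hM1).ne') h2Mt).ne'
          · exact (ENNReal.rpow_lt_top_of_nonneg hp₁.le h2Mt).ne
      _ ≤ (2 * M) ^ p₁ * a ^ (-p₁) := mul_le_mul_right h1 _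
  · have hb1 : (1:ℝ≥0∞) ≤ b := hM1.trans hcb.le
    have ha2b : a ≤ 2 * b := by
      calc a ≤ d + b := htri
        _ ≤ b + b := add_le_add ((hxo.trans (le_max_right _ _)).trans hcb.le) le_rfl
        _ = 2 * b := (two_mul b).symm
    have h1 : (2 * b) ^ (-p₁) ≤ a ^ (-p₁) := powAnti hp₁.le ha2b
    have h2 : b ^ (-p₁) = 2 ^ p₁ * (2 * b) ^ (-p₁) := by
      rw [ENNReal.mul_rpow_of_ne_top (by simp) hb, ← mul_assoc, ENNReal.rpow_neg 2 p₁,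
        ENNReal.mul_inv_cancel (ENNReal.rpow_pos two_pos (by simp)).ne'
          (ENNReal.rpow_lt_top_of_nonneg hp₁.le (by simp)).ne, one_mul]
    calc min 1 (b ^ (-p₁)) ≤ b ^ (-p₁) := min_le_right _ _
      _ = 2 ^ p₁ * (2 * b) ^ (-p₁) := h2
      _ ≤ (2 * M) ^ p₁ * a ^ (-p₁) := by
          refine mul_le_mul' (ENNReal.rpow_le_rpow ?_ hp₁.le) h1
          exact le_mul_of_one_le_right (zero_le) hM1

lemma CfinA {p p₁ : ℝ} (hp : 0 < p) (hp₁ : 0 < p₁) {δ d₀ : ℝ≥0∞} (hδ : δ ≠ 0) (hd₀ : d₀ ≠ ⊤) :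
    δ ^ (-p) * (min 1 ((2 * max 1 d₀) ^ (-p₁)))⁻¹ + 2 ^ p ≠ ⊤ := by
  have h2M : (2 * max 1 d₀) ≠ ⊤ := by simp [ENNReal.mul_eq_top, hd₀]
  have h1 : δ ^ (-p) ≠ ⊤ := by
    rw [ENNReal.rpow_neg, Ne, ENNReal.inv_eq_top]
    intro h
    rcases ENNReal.rpow_eq_zero_iff.mp h with ⟨h0, _⟩ | ⟨_, hneg⟩
    · exact hδ h0
    · linarith
  have h2 : (min 1 ((2 * max 1 d₀) ^ (-p₁)))⁻¹ ≠ ⊤ := by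
    rw [Ne, ENNReal.inv_eq_top]
    have hne : (2 * max 1 d₀) ^ (-p₁) ≠ 0 := by
      rw [ENNReal.rpow_neg, Ne, ENNReal.inv_eq_zero]
      exact (ENNReal.rpow_lt_top_of_nonneg hp₁.le h2M).ne
    exact (lt_min one_pos (pos_iff_ne_zero.mpr hne)).ne'
  exact ENNReal.add_ne_top.mpr ⟨ENNReal.mul_ne_top h1 h2,
    (ENNReal.rpow_lt_top_of_nonneg hp.le (by simp)).ne⟩

lemma lt_top_of_mul_lt_top {c X : ℝ≥0∞} (hc : c ≠ 0) (h : c * X < ⊤) : X < ⊤ := by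
  by_contra hX
  rw [not_lt, top_le_iff] at hX
  rw [hX, ENNReal.mul_top hc] at h
  exact absurd h (lt_irrefl _)

lemma lint_restrict_le {X : Type*} [MeasurableSpace X] {J ν : Measure X} {c : ℝ≥0∞}
    {k : X → ℝ≥0∞} (hk : Measurable k)
    (hle : ∀ A : Set X, MeasurableSet A → J A ≤ c * ∫⁻ z in A, k z ∂ν)
    {S : Set X} (hS : MeasurableSet S) (hfin : ∀ᵐ z ∂(ν.restrict S), k z < ⊤) (f : X → ℝ≥0∞) :
    ∫⁻ z in S, f z ∂J ≤ c * ∫⁻ z in S, k z * f z ∂ν := by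
  have hm : J.restrict S ≤ (c • ν.withDensity k).restrict S := by
    rw [Measure.le_iff]
    intro s hs
    rw [Measure.restrict_apply hs, Measure.restrict_apply hs, Measure.smul_apply,
      smul_eq_mul, withDensity_apply _ (hs.inter hS)]
    exact hle _ (hs.inter hS)
  calc ∫⁻ z in S, f z ∂J ≤ ∫⁻ z, f z ∂((c • ν.withDensity k).restrict S) :=
        lintegral_mono' hm le_rfl
    _ = c * ∫⁻ z in S, k z * f z ∂ν := by
        rw [Measure.restrict_smul, lintegral_smul_measure, restrict_withDensity hS,
          lintegral_withDensity_eq_lintegral_mul_non_measurable _ hk hfin]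
        rfl

lemma lint_restrict_ge {X : Type*} [MeasurableSpace X] {J ν : Measure X} {c : ℝ≥0∞}
    {k : X → ℝ≥0∞} (hk : Measurable k)
    (hge : ∀ A : Set X, MeasurableSet A → c * ∫⁻ z in A, k z ∂ν ≤ J A)
    {S : Set X} (hS : MeasurableSet S) (hfin : ∀ᵐ z ∂(ν.restrict S), k z < ⊤) (f : X → ℝ≥0∞) :
    c * ∫⁻ z in S, k z * f z ∂ν ≤ ∫⁻ z in S, f z ∂J := by
  have hm : (c • ν.withDensity k).restrict S ≤ J.restrict S := by
    rw [Measure.le_iff]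
    intro s hs
    rw [Measure.restrict_apply hs, Measure.restrict_apply hs, Measure.smul_apply,
      smul_eq_mul, withDensity_apply _ (hs.inter hS)]
    exact hge _ (hs.inter hS)
  calc c * ∫⁻ z in S, k z * f z ∂ν
      = ∫⁻ z, f z ∂((c • ν.withDensity k).restrict S) := by
        rw [Measure.restrict_smul, lintegral_smul_measure, restrict_withDensity hS,
          lintegral_withDensity_eq_lintegral_mul_non_measurable _ hk hfin]
        rfl
    _ ≤ ∫⁻ z in S, f z ∂J := lintegral_mono' hm le_rfl

lemma lin_fst {E : Type*} [MeasurableSpace E] (m : Measure E) [SigmaFinite m]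
    (U S : Set E) (a : E → ℝ≥0∞) (ha : AEMeasurable a (m.restrict U))
    (hat : ∀ x, a x ≠ ⊤) (k : E → E → ℝ≥0∞) (hk : Measurable (fun z : E × E => k z.1 z.2)) :
    ∫⁻ z in U ×ˢ S, a z.1 * k z.1 z.2 ∂(m.prod m)
      = ∫⁻ x in U, a x * ∫⁻ y in S, k x y ∂m ∂m := by
  have h1 : AEMeasurable (fun z : E × E => a z.1 * k z.1 z.2)
      ((m.restrict U).prod (m.restrict S)) :=
    ((ha.comp_quasiMeasurePreserving Measure.quasiMeasurePreserving_fst).mul hk.aemeasurable)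
  rw [← Measure.prod_restrict, lintegral_prod _ h1]
  exact lintegral_congr fun x => lintegral_const_mul' _ _ (hat x)

lemma lin_snd {E : Type*} [MeasurableSpace E] (m : Measure E) [SigmaFinite m]
    (U S : Set E) (a : E → ℝ≥0∞) (ha : AEMeasurable a (m.restrict S))
    (hat : ∀ x, a x ≠ ⊤) (k : E → E → ℝ≥0∞) (hk : Measurable (fun z : E × E => k z.1 z.2)) :
    ∫⁻ z in U ×ˢ S, a z.2 * k z.1 z.2 ∂(m.prod m)
      = ∫⁻ y in S, a y * ∫⁻ x in U, k x y ∂m ∂m := by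
  have h1 : AEMeasurable (fun z : E × E => a z.2 * k z.1 z.2)
      ((m.restrict U).prod (m.restrict S)) :=
    ((ha.comp_quasiMeasurePreserving Measure.quasiMeasurePreserving_snd).mul hk.aemeasurable)
  rw [← Measure.prod_restrict, lintegral_prod_symm _ h1]
  exact lintegral_congr fun y => lintegral_const_mul' _ _ (hat y)

section Terms

variable {E : Type*} [MetricSpace E] [TopologicalSpace.SeparableSpace E]
  [LocallyCompactSpace E] [MeasurableSpace E] [BorelSpace E]

lemma termFst (m : Measure E) [m.Regular] (o : E) {p₁ p : ℝ} (hp₁ : 0 < p₁) (hp : p₁ ≤ p)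
    (hwint : ∫⁻ y, min 1 (edist y o ^ (-p₁)) ∂m < ⊤)
    (u : E → ℝ) (hu : ∀ K : Set E, IsCompact K → IntegrableOn (fun x => u x ^ 2) K m)
    {U V : Set E} (hU : IsOpen U) (hV : IsOpen V) (hUc : IsCompact (closure U))
    (hUV : closure U ⊆ V) :
    ∫⁻ z in U ×ˢ Vᶜ, ENNReal.ofReal (u z.1 ^ 2) * edist z.1 z.2 ^ (-p) ∂(m.prod m) < ⊤ := by
  haveI : SecondCountableTopology E := UniformSpace.secondCountable_of_separable E
  haveI : SigmaFinite m := by infer_instance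
  obtain ⟨δr, hδr, hthick⟩ := hUc.exists_thickening_subset_open hV hUV
  obtain ⟨r, hr⟩ := hUc.isBounded.subset_closedBall o
  set δ : ℝ≥0∞ := ENNReal.ofReal δr with hδdef
  set d₀ : ℝ≥0∞ := ENNReal.ofReal r with hd₀def
  have hδ0 : δ ≠ 0 := (ENNReal.ofReal_pos.mpr hδr).ne'
  have hd₀t : d₀ ≠ ⊤ := ENNReal.ofReal_ne_top
  have hdist : ∀ x ∈ U, ∀ y ∈ Vᶜ, δ ≤ edist x y := by
    intro x hx y hy
    by_contra hcon
    push_neg at hcon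
    refine hy (hthick ?_)
    rw [Metric.mem_thickening_iff_infEdist_lt]
    exact lt_of_le_of_lt (EMetric.infEdist_le_edist_of_mem (subset_closure hx))
      (by rwa [edist_comm])
  have hxo : ∀ x ∈ U, edist x o ≤ d₀ := by
    intro x hx
    have h1 := hr (subset_closure hx)
    rw [Metric.mem_closedBall] at h1
    rw [edist_dist]
    exact ENNReal.ofReal_le_ofReal h1
  set C : ℝ≥0∞ := δ ^ (-p) * (min 1 ((2 * max 1 d₀) ^ (-p₁)))⁻¹ + 2 ^ p with hCdef
  have hCt : C ≠ ⊤ := CfinA (hp₁.trans_le hp) hp₁ hδ0 hd₀t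
  have hker : ∀ x ∈ U, ∀ y ∈ Vᶜ, edist x y ^ (-p) ≤ C * min 1 (edist y o ^ (-p₁)) := by
    intro x hx y hy
    refine kerA hp₁ hp hd₀t (edist_ne_top y o) (hxo x hx) (hdist x hx y hy) ?_
    calc edist y o ≤ edist y x + edist x o := edist_triangle _ _ _
      _ = edist x y + edist x o := by rw [edist_comm]
  have hwm : Measurable (fun y : E => min 1 (edist y o ^ (-p₁))) :=
    measurable_const.min ((measurable_id.edist measurable_const).pow measurable_const)
  have hkm : Measurable (fun z : E × E => edist z.1 z.2 ^ (-p)) :=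
    measurable_edist.pow measurable_const
  have husq : AEMeasurable (fun x : E => ENNReal.ofReal (u x ^ 2)) m := by
    have h2 : AEMeasurable (fun x => u x ^ 2) m := by
      have h3 := (aemeasurable_iUnion_iff (μ := m) (s := compactCovering E)
        (f := fun x => u x ^ 2)).mpr
        (fun n => ((hu _ (isCompact_compactCovering E n)).aestronglyMeasurable).aemeasurable)
      rwa [iUnion_compactCovering, Measure.restrict_univ] at h3
    exact ENNReal.measurable_ofReal.comp_aemeasurable h2
  rw [lin_fst m U Vᶜ _ husq.restrict (fun x => ENNReal.ofReal_ne_top)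
    (fun x y => edist x y ^ (-p)) hkm]
  set W := ∫⁻ y, min 1 (edist y o ^ (-p₁)) ∂m with hWdef
  have hW : W ≠ ⊤ := hwint.ne
  have hbound : ∀ x ∈ U, (∫⁻ y in Vᶜ, edist x y ^ (-p) ∂m) ≤ C * W := by
    intro x hx
    calc ∫⁻ y in Vᶜ, edist x y ^ (-p) ∂m
        ≤ ∫⁻ y in Vᶜ, C * min 1 (edist y o ^ (-p₁)) ∂m :=
          setLIntegral_mono (measurable_const.mul hwm) (fun y hy => hker x hx y hy)
      _ = C * ∫⁻ y in Vᶜ, min 1 (edist y o ^ (-p₁)) ∂m := lintegral_const_mul' _ _ hCt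
      _ ≤ C * W := mul_le_mul_right (setLIntegral_le_lintegral _ _) _
  have hCWt : C * W ≠ ⊤ := ENNReal.mul_ne_top hCt hW
  calc ∫⁻ x in U, ENNReal.ofReal (u x ^ 2) * ∫⁻ y in Vᶜ, edist x y ^ (-p) ∂m ∂m
      ≤ ∫⁻ x in U, ENNReal.ofReal (u x ^ 2) * (C * W) ∂m := by
        refine lintegral_mono_ae ?_
        filter_upwards [ae_restrict_mem hU.measurableSet] with x hx
        exact mul_le_mul_right (hbound x hx) _
    _ = (∫⁻ x in U, ENNReal.ofReal (u x ^ 2) ∂m) * (C * W) := lintegral_mul_const' _ _ hCWt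
    _ < ⊤ := ENNReal.mul_lt_top
        (lt_of_le_of_lt (lintegral_mono' (Measure.restrict_mono subset_closure le_rfl) le_rfl)
          (hu _ hUc).lintegral_lt_top) hCWt.lt_top

lemma termSnd (m : Measure E) [m.Regular] (o : E) {p₁ p : ℝ} (hp₁ : 0 < p₁) (hp : p₁ ≤ p)
    (u : E → ℝ) (hu : ∀ K : Set E, IsCompact K → IntegrableOn (fun x => u x ^ 2) K m)
    {U V : Set E} (hU : IsOpen U) (hV : IsOpen V) (hUc : IsCompact (closure U))
    (hUV : closure U ⊆ V)
    (h3 : ∫⁻ y, min 1 (edist y o ^ (-p₁)) * ENNReal.ofReal (u y ^ 2) ∂m < ⊤) :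
    ∫⁻ z in U ×ˢ Vᶜ, ENNReal.ofReal (u z.2 ^ 2) * edist z.1 z.2 ^ (-p) ∂(m.prod m) < ⊤ := by
  haveI : SecondCountableTopology E := UniformSpace.secondCountable_of_separable E
  haveI : SigmaFinite m := by infer_instance
  obtain ⟨δr, hδr, hthick⟩ := hUc.exists_thickening_subset_open hV hUV
  obtain ⟨r, hr⟩ := hUc.isBounded.subset_closedBall o
  set δ : ℝ≥0∞ := ENNReal.ofReal δr with hδdef
  set d₀ : ℝ≥0∞ := ENNReal.ofReal r with hd₀def
  have hδ0 : δ ≠ 0 := (ENNReal.ofReal_pos.mpr hδr).ne'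
  have hd₀t : d₀ ≠ ⊤ := ENNReal.ofReal_ne_top
  have hdist : ∀ x ∈ U, ∀ y ∈ Vᶜ, δ ≤ edist x y := by
    intro x hx y hy
    by_contra hcon
    push_neg at hcon
    refine hy (hthick ?_)
    rw [Metric.mem_thickening_iff_infEdist_lt]
    exact lt_of_le_of_lt (EMetric.infEdist_le_edist_of_mem (subset_closure hx))
      (by rwa [edist_comm])
  have hxo : ∀ x ∈ U, edist x o ≤ d₀ := by
    intro x hx
    have h1 := hr (subset_closure hx)
    rw [Metric.mem_closedBall] at h1
    rw [edist_dist]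
    exact ENNReal.ofReal_le_ofReal h1
  set C : ℝ≥0∞ := δ ^ (-p) * (min 1 ((2 * max 1 d₀) ^ (-p₁)))⁻¹ + 2 ^ p with hCdef
  have hCt : C ≠ ⊤ := CfinA (hp₁.trans_le hp) hp₁ hδ0 hd₀t
  have hker : ∀ x ∈ U, ∀ y ∈ Vᶜ, edist x y ^ (-p) ≤ C * min 1 (edist y o ^ (-p₁)) := by
    intro x hx y hy
    refine kerA hp₁ hp hd₀t (edist_ne_top y o) (hxo x hx) (hdist x hx y hy) ?_
    calc edist y o ≤ edist y x + edist x o := edist_triangle _ _ _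
      _ = edist x y + edist x o := by rw [edist_comm]
  have hkm : Measurable (fun z : E × E => edist z.1 z.2 ^ (-p)) :=
    measurable_edist.pow measurable_const
  have husq : AEMeasurable (fun x : E => ENNReal.ofReal (u x ^ 2)) m := by
    have h2 : AEMeasurable (fun x => u x ^ 2) m := by
      have h3' := (aemeasurable_iUnion_iff (μ := m) (s := compactCovering E)
        (f := fun x => u x ^ 2)).mpr
        (fun n => ((hu _ (isCompact_compactCovering E n)).aestronglyMeasurable).aemeasurable)
      rwa [iUnion_compactCovering, Measure.restrict_univ] at h3'
    exact ENNReal.measurable_ofReal.comp_aemeasurable h2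
  rw [lin_snd m U Vᶜ _ husq.restrict (fun x => ENNReal.ofReal_ne_top)
    (fun x y => edist x y ^ (-p)) hkm]
  have hmU : m U ≠ ⊤ := ((measure_mono subset_closure).trans_lt hUc.measure_lt_top).ne
  have hCmU : C * m U ≠ ⊤ := ENNReal.mul_ne_top hCt hmU
  have hbound : ∀ y ∈ Vᶜ,
      (∫⁻ x in U, edist x y ^ (-p) ∂m) ≤ C * min 1 (edist y o ^ (-p₁)) * m U := by
    intro y hy
    calc ∫⁻ x in U, edist x y ^ (-p) ∂m
        ≤ ∫⁻ _x in U, C * min 1 (edist y o ^ (-p₁)) ∂m :=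
          setLIntegral_mono measurable_const (fun x hx => hker x hx y hy)
      _ = C * min 1 (edist y o ^ (-p₁)) * m U := setLIntegral_const _ _
  calc ∫⁻ y in Vᶜ, ENNReal.ofReal (u y ^ 2) * ∫⁻ x in U, edist x y ^ (-p) ∂m ∂m
      ≤ ∫⁻ y in Vᶜ, (min 1 (edist y o ^ (-p₁)) * ENNReal.ofReal (u y ^ 2)) * (C * m U) ∂m := by
        refine lintegral_mono_ae ?_
        filter_upwards [ae_restrict_mem hV.measurableSet.compl] with y hy
        calc ENNReal.ofReal (u y ^ 2) * ∫⁻ x in U, edist x y ^ (-p) ∂m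
            ≤ ENNReal.ofReal (u y ^ 2) * (C * min 1 (edist y o ^ (-p₁)) * m U) :=
              mul_le_mul_right (hbound y hy) _
          _ = (min 1 (edist y o ^ (-p₁)) * ENNReal.ofReal (u y ^ 2)) * (C * m U) := by ring
    _ = (∫⁻ y in Vᶜ, min 1 (edist y o ^ (-p₁)) * ENNReal.ofReal (u y ^ 2) ∂m) * (C * m U) :=
        lintegral_mul_const' _ _ hCmU
    _ ≤ (∫⁻ y, min 1 (edist y o ^ (-p₁)) * ENNReal.ofReal (u y ^ 2) ∂m) * (C * m U) :=
        mul_le_mul_left (setLIntegral_le_lintegral _ _) _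
    _ < ⊤ := ENNReal.mul_lt_top h3 hCmU.lt_top

end Terms

/-- Let `E` be a locally compact separable metric space, `m` a Radon
measure with full support, `o ∈ E`, and `J` a Borel measure on `E × E` with
`D₁ ∫_A ρ(x,y)^{−p₁} d(m×m) ≤ J(A) ≤ D₂ ∫_A ρ(x,y)^{−p₂} d(m×m)` for all Borel `A`,
where `D₁, D₂ > 0`, `0 < p₁ ≤ p₂ < ∞`. Write `w_p(y) = min(1, ρ(y,o)^{−p})` (value `1`
at `y = o`). Assume `w_{p₁} ∈ L¹(E;m)` and let `u` be locally `m`-square-integrable. Then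
`w_{p₁}·|u|² ∈ L¹(E;m)` iff for all open `U ⋐ V` with `closure V` compact and `o ∈ V`,
`∫_{U × (E∖V)} |u(x) − u(y)|² dJ < ∞`. -/
theorem stmt_6 {E : Type*} [MetricSpace E] [LocallyCompactSpace E]
    [TopologicalSpace.SeparableSpace E] [MeasurableSpace E] [BorelSpace E]
    (m : Measure E) [m.Regular] [m.IsOpenPosMeasure]
    (o : E) (J : Measure (E × E))
    (D₁ D₂ p₁ p₂ : ℝ) (hD₁ : 0 < D₁) (hD₂ : 0 < D₂) (hp₁ : 0 < p₁) (hp₁₂ : p₁ ≤ p₂)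
    (hJl : ∀ A : Set (E × E), MeasurableSet A →
      ENNReal.ofReal D₁ * ∫⁻ z in A, edist z.1 z.2 ^ (-p₁) ∂(m.prod m) ≤ J A)
    (hJu : ∀ A : Set (E × E), MeasurableSet A →
      J A ≤ ENNReal.ofReal D₂ * ∫⁻ z in A, edist z.1 z.2 ^ (-p₂) ∂(m.prod m))
    (hw : ∫⁻ y, min 1 (edist y o ^ (-p₁)) ∂m < ⊤)
    (u : E → ℝ) (hu : ∀ K : Set E, IsCompact K → IntegrableOn (fun x => u x ^ 2) K m) :
    (∫⁻ y, min 1 (edist y o ^ (-p₁)) * ENNReal.ofReal (u y ^ 2) ∂m < ⊤) ↔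
    (∀ U V : Set E, IsOpen U → IsOpen V → IsCompact (closure U) → closure U ⊆ V →
      IsCompact (closure V) → o ∈ V →
      ∫⁻ z in U ×ˢ Vᶜ, ENNReal.ofReal ((u z.1 - u z.2) ^ 2) ∂J < ⊤) := by
  haveI : SecondCountableTopology E := UniformSpace.secondCountable_of_separable E
  haveI : SigmaFinite m := by infer_instance
  have hp₂ : 0 < p₂ := hp₁.trans_le hp₁₂
  have husq : AEMeasurable (fun x : E => ENNReal.ofReal (u x ^ 2)) m := by
    have h2 : AEMeasurable (fun x => u x ^ 2) m := by
      have h3' := (aemeasurable_iUnion_iff (μ := m) (s := compactCovering E)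
        (f := fun x => u x ^ 2)).mpr
        (fun n => ((hu _ (isCompact_compactCovering E n)).aestronglyMeasurable).aemeasurable)
      rwa [iUnion_compactCovering, Measure.restrict_univ] at h3'
    exact ENNReal.measurable_ofReal.comp_aemeasurable h2
  have hkm : ∀ p : ℝ, Measurable (fun z : E × E => edist z.1 z.2 ^ (-p)) :=
    fun p => measurable_edist.pow measurable_const
  -- edist positivity on U ×ˢ Vᶜ, as a.e. finiteness of the kernels
  have hfin : ∀ (p : ℝ) (U V : Set E), U ⊆ V → MeasurableSet (U ×ˢ Vᶜ) →
      ∀ᵐ z ∂((m.prod m).restrict (U ×ˢ Vᶜ)), edist z.1 z.2 ^ (-p) < ⊤ := by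
    intro p U V hUV hSm
    filter_upwards [ae_restrict_mem hSm] with z hz
    have hne : edist z.1 z.2 ≠ 0 := by
      intro h
      exact hz.2 (edist_eq_zero.mp h ▸ hUV hz.1)
    rw [ENNReal.rpow_neg]
    exact ENNReal.inv_lt_top.mpr (ENNReal.rpow_pos (pos_iff_ne_zero.mpr hne) (edist_ne_top _ _))
  constructor
  · -- (3) → (4)
    intro h3 U V hU hV hUc hUV hVc hoV
    have hSm : MeasurableSet (U ×ˢ Vᶜ) := hU.measurableSet.prod hV.measurableSet.compl
    have hUsubV : U ⊆ V := subset_closure.trans hUV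
    have hJle := lint_restrict_le (hkm p₂) hJu hSm (hfin p₂ U V hUsubV hSm)
      (fun z => ENNReal.ofReal ((u z.1 - u z.2) ^ 2))
    refine lt_of_le_of_lt hJle (ENNReal.mul_lt_top ENNReal.ofReal_lt_top ?_)
    have hpt : ∀ z : E × E,
        edist z.1 z.2 ^ (-p₂) * ENNReal.ofReal ((u z.1 - u z.2) ^ 2) ≤
        2 * (ENNReal.ofReal (u z.1 ^ 2) * edist z.1 z.2 ^ (-p₂)) +
        2 * (ENNReal.ofReal (u z.2 ^ 2) * edist z.1 z.2 ^ (-p₂)) := by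
      intro z
      have hF : ENNReal.ofReal ((u z.1 - u z.2) ^ 2) ≤
          2 * ENNReal.ofReal (u z.1 ^ 2) + 2 * ENNReal.ofReal (u z.2 ^ 2) := by
        calc ENNReal.ofReal ((u z.1 - u z.2) ^ 2)
            ≤ ENNReal.ofReal (2 * u z.1 ^ 2 + 2 * u z.2 ^ 2) :=
              ENNReal.ofReal_le_ofReal (by nlinarith [sq_nonneg (u z.1 + u z.2)])
          _ = 2 * ENNReal.ofReal (u z.1 ^ 2) + 2 * ENNReal.ofReal (u z.2 ^ 2) := by
              rw [ENNReal.ofReal_add (by positivity) (by positivity),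
                ENNReal.ofReal_mul (by norm_num), ENNReal.ofReal_mul (by norm_num),
                ENNReal.ofReal_ofNat]
      calc edist z.1 z.2 ^ (-p₂) * ENNReal.ofReal ((u z.1 - u z.2) ^ 2)
          ≤ edist z.1 z.2 ^ (-p₂) *
            (2 * ENNReal.ofReal (u z.1 ^ 2) + 2 * ENNReal.ofReal (u z.2 ^ 2)) :=
            mul_le_mul_right hF _
        _ = 2 * (ENNReal.ofReal (u z.1 ^ 2) * edist z.1 z.2 ^ (-p₂)) +
            2 * (ENNReal.ofReal (u z.2 ^ 2) * edist z.1 z.2 ^ (-p₂)) := by ring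
    have ha1 : AEMeasurable (fun z : E × E => ENNReal.ofReal (u z.1 ^ 2))
        ((m.prod m).restrict (U ×ˢ Vᶜ)) :=
      (husq.comp_quasiMeasurePreserving Measure.quasiMeasurePreserving_fst).mono_measure
        Measure.restrict_le_self
    calc ∫⁻ z in U ×ˢ Vᶜ, edist z.1 z.2 ^ (-p₂) * ENNReal.ofReal ((u z.1 - u z.2) ^ 2)
          ∂(m.prod m)
        ≤ ∫⁻ z in U ×ˢ Vᶜ,
            (2 * (ENNReal.ofReal (u z.1 ^ 2) * edist z.1 z.2 ^ (-p₂)) +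
             2 * (ENNReal.ofReal (u z.2 ^ 2) * edist z.1 z.2 ^ (-p₂))) ∂(m.prod m) :=
          lintegral_mono hpt
      _ = 2 * ∫⁻ z in U ×ˢ Vᶜ, ENNReal.ofReal (u z.1 ^ 2) * edist z.1 z.2 ^ (-p₂) ∂(m.prod m)
          + 2 * ∫⁻ z in U ×ˢ Vᶜ, ENNReal.ofReal (u z.2 ^ 2) * edist z.1 z.2 ^ (-p₂)
            ∂(m.prod m) := by
          have hA : AEMeasurable (fun z : E × E => ENNReal.ofReal (u z.1 ^ 2) * edist z.1 z.2 ^ (-p₂)) ((m.prod m).restrict (U ×ˢ Vᶜ)) := ha1.mul ((hkm p₂).aemeasurable)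
          have hB := hA.const_mul (2 : ℝ≥0∞)
          rw [lintegral_add_left' hB,
            lintegral_const_mul' 2 _ ENNReal.ofNat_ne_top,
            lintegral_const_mul' 2 _ ENNReal.ofNat_ne_top]
      _ < ⊤ := ENNReal.add_lt_top.mpr
          ⟨ENNReal.mul_lt_top ENNReal.ofNat_lt_top
              (termFst m o hp₁ hp₁₂ hw u hu hU hV hUc hUV),
           ENNReal.mul_lt_top ENNReal.ofNat_lt_top
              (termSnd m o hp₁ hp₁₂ u hu hU hV hUc hUV h3)⟩
  · -- (4) → (3)
    intro h4
    obtain ⟨K, hK, hKn⟩ := exists_compact_mem_nhds o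
    set V := interior K with hVdef
    have hV : IsOpen V := isOpen_interior
    have hoV : o ∈ V := mem_interior_iff_mem_nhds.mpr hKn
    have hVc : IsCompact (closure V) :=
      hK.of_isClosed_subset isClosed_closure (closure_minimal interior_subset hK.isClosed)
    obtain ⟨ε, hε, hball⟩ := Metric.isOpen_iff.mp hV o hoV
    set U := Metric.ball o (ε / 2) with hUdef
    have hU : IsOpen U := Metric.isOpen_ball
    have hoU : o ∈ U := Metric.mem_ball_self (by linarith)
    have hUV : closure U ⊆ V := by
      refine (Metric.closure_ball_subset_closedBall).trans ?_
      exact (Metric.closedBall_subset_ball (by linarith)).trans hball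
    have hUc : IsCompact (closure U) :=
      hVc.of_isClosed_subset isClosed_closure
        (closure_minimal (subset_closure.trans hUV |>.trans subset_closure) isClosed_closure)
    have hUsubV : U ⊆ V := subset_closure.trans hUV
    have hSm : MeasurableSet (U ×ˢ Vᶜ) := hU.measurableSet.prod hV.measurableSet.compl
    have h4' := h4 U V hU hV hUc hUV hVc hoV
    -- lower bound on J-integral gives finiteness of the kernel integral
    have hJge := lint_restrict_ge (hkm p₁) hJl hSm (hfin p₁ U V hUsubV hSm)
      (fun z => ENNReal.ofReal ((u z.1 - u z.2) ^ 2))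
    have hI : ∫⁻ z in U ×ˢ Vᶜ,
        edist z.1 z.2 ^ (-p₁) * ENNReal.ofReal ((u z.1 - u z.2) ^ 2) ∂(m.prod m) < ⊤ :=
      lt_top_of_mul_lt_top (ENNReal.ofReal_pos.mpr hD₁).ne' (lt_of_le_of_lt hJge h4')
    -- pointwise bound
    have hpt : ∀ z : E × E,
        ENNReal.ofReal (u z.2 ^ 2) * edist z.1 z.2 ^ (-p₁) ≤
        2 * (ENNReal.ofReal (u z.1 ^ 2) * edist z.1 z.2 ^ (-p₁)) +
        2 * (edist z.1 z.2 ^ (-p₁) * ENNReal.ofReal ((u z.1 - u z.2) ^ 2)) := by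
      intro z
      have hF : ENNReal.ofReal (u z.2 ^ 2) ≤
          2 * ENNReal.ofReal (u z.1 ^ 2) + 2 * ENNReal.ofReal ((u z.1 - u z.2) ^ 2) := by
        calc ENNReal.ofReal (u z.2 ^ 2)
            ≤ ENNReal.ofReal (2 * u z.1 ^ 2 + 2 * (u z.1 - u z.2) ^ 2) :=
              ENNReal.ofReal_le_ofReal (by nlinarith [sq_nonneg (2 * u z.1 - u z.2)])
          _ = 2 * ENNReal.ofReal (u z.1 ^ 2) + 2 * ENNReal.ofReal ((u z.1 - u z.2) ^ 2) := by
              rw [ENNReal.ofReal_add (by positivity) (by positivity),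
                ENNReal.ofReal_mul (by norm_num), ENNReal.ofReal_mul (by norm_num),
                ENNReal.ofReal_ofNat]
      calc ENNReal.ofReal (u z.2 ^ 2) * edist z.1 z.2 ^ (-p₁)
          ≤ (2 * ENNReal.ofReal (u z.1 ^ 2) + 2 * ENNReal.ofReal ((u z.1 - u z.2) ^ 2)) *
            edist z.1 z.2 ^ (-p₁) := mul_le_mul_left hF _
        _ = 2 * (ENNReal.ofReal (u z.1 ^ 2) * edist z.1 z.2 ^ (-p₁)) +
            2 * (edist z.1 z.2 ^ (-p₁) * ENNReal.ofReal ((u z.1 - u z.2) ^ 2)) := by ring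
    have ha1 : AEMeasurable (fun z : E × E => ENNReal.ofReal (u z.1 ^ 2))
        ((m.prod m).restrict (U ×ˢ Vᶜ)) :=
      (husq.comp_quasiMeasurePreserving Measure.quasiMeasurePreserving_fst).mono_measure
        Measure.restrict_le_self
    have hT2 : ∫⁻ z in U ×ˢ Vᶜ, ENNReal.ofReal (u z.2 ^ 2) * edist z.1 z.2 ^ (-p₁)
        ∂(m.prod m) < ⊤ := by
      calc ∫⁻ z in U ×ˢ Vᶜ, ENNReal.ofReal (u z.2 ^ 2) * edist z.1 z.2 ^ (-p₁) ∂(m.prod m)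
          ≤ ∫⁻ z in U ×ˢ Vᶜ,
              (2 * (ENNReal.ofReal (u z.1 ^ 2) * edist z.1 z.2 ^ (-p₁)) +
               2 * (edist z.1 z.2 ^ (-p₁) * ENNReal.ofReal ((u z.1 - u z.2) ^ 2)))
              ∂(m.prod m) := lintegral_mono hpt
        _ = 2 * ∫⁻ z in U ×ˢ Vᶜ, ENNReal.ofReal (u z.1 ^ 2) * edist z.1 z.2 ^ (-p₁)
              ∂(m.prod m)
            + 2 * ∫⁻ z in U ×ˢ Vᶜ, edist z.1 z.2 ^ (-p₁) *
                ENNReal.ofReal ((u z.1 - u z.2) ^ 2) ∂(m.prod m) := by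
            have hA : AEMeasurable (fun z : E × E => ENNReal.ofReal (u z.1 ^ 2) * edist z.1 z.2 ^ (-p₁)) ((m.prod m).restrict (U ×ˢ Vᶜ)) := ha1.mul ((hkm p₁).aemeasurable)
            have hB := hA.const_mul (2 : ℝ≥0∞)
            rw [lintegral_add_left' hB,
              lintegral_const_mul' 2 _ ENNReal.ofNat_ne_top,
              lintegral_const_mul' 2 _ ENNReal.ofNat_ne_top]
        _ < ⊤ := ENNReal.add_lt_top.mpr
            ⟨ENNReal.mul_lt_top ENNReal.ofNat_lt_top
                (termFst m o hp₁ le_rfl hw u hu hU hV hUc hUV),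
             ENNReal.mul_lt_top ENNReal.ofNat_lt_top hI⟩
    -- Tonelli on hT2
    rw [lin_snd m U Vᶜ _ husq.restrict (fun x => ENNReal.ofReal_ne_top)
      (fun x y => edist x y ^ (-p₁)) (hkm p₁)] at hT2
    -- lower bound of the inner integral by the weight
    obtain ⟨r, hr⟩ := hUc.isBounded.subset_closedBall o
    set d₀ : ℝ≥0∞ := ENNReal.ofReal r with hd₀def
    have hd₀t : d₀ ≠ ⊤ := ENNReal.ofReal_ne_top
    have hxo : ∀ x ∈ U, edist x o ≤ d₀ := by
      intro x hx
      have h1 := hr (subset_closure hx)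
      rw [Metric.mem_closedBall] at h1
      rw [edist_dist]
      exact ENNReal.ofReal_le_ofReal h1
    set C' : ℝ≥0∞ := (2 * max 1 d₀) ^ p₁ with hC'def
    have h2Mt : (2 * max 1 d₀) ≠ ⊤ := by simp [ENNReal.mul_eq_top, hd₀t]
    have hC'0 : C' ≠ 0 := by
      refine (ENNReal.rpow_pos ?_ h2Mt).ne'
      exact ENNReal.mul_pos two_ne_zero (one_pos.trans_le (le_max_left _ _)).ne'
    have hC't : C' ≠ ⊤ := (ENNReal.rpow_lt_top_of_nonneg hp₁.le h2Mt).ne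
    have hinv : ∀ x ∈ U, ∀ y : E,
        C'⁻¹ * min 1 (edist y o ^ (-p₁)) ≤ edist x y ^ (-p₁) := by
      intro x hx y
      have hkb : min 1 (edist y o ^ (-p₁)) ≤ C' * edist x y ^ (-p₁) := by
        refine kerB hp₁ hd₀t (edist_ne_top y o) (hxo x hx) ?_
        calc edist x y ≤ edist x o + edist o y := edist_triangle _ _ _
          _ = edist x o + edist y o := by rw [edist_comm o y]
      calc C'⁻¹ * min 1 (edist y o ^ (-p₁)) ≤ C'⁻¹ * (C' * edist x y ^ (-p₁)) :=
            mul_le_mul_right hkb _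
        _ = edist x y ^ (-p₁) := by rw [← mul_assoc, ENNReal.inv_mul_cancel hC'0 hC't, one_mul]
    have hIy : ∀ y : E,
        (C'⁻¹ * min 1 (edist y o ^ (-p₁))) * m U ≤ ∫⁻ x in U, edist x y ^ (-p₁) ∂m := by
      intro y
      rw [← setLIntegral_const U (C'⁻¹ * min 1 (edist y o ^ (-p₁)))]
      exact setLIntegral_mono ((measurable_id.edist measurable_const).pow measurable_const)
        (fun x hx => hinv x hx y)
    have hmU : m U ≠ ⊤ := ((measure_mono subset_closure).trans_lt hUc.measure_lt_top).ne
    have hmU0 : m U ≠ 0 := (hU.measure_pos m ⟨o, hoU⟩).ne'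
    have hc0 : C'⁻¹ * m U ≠ 0 :=
      mul_ne_zero (ENNReal.inv_ne_zero.mpr hC't) hmU0
    have hct : C'⁻¹ * m U ≠ ⊤ :=
      ENNReal.mul_ne_top (ENNReal.inv_ne_top.mpr hC'0) hmU
    have hlow : (C'⁻¹ * m U) *
        ∫⁻ y in Vᶜ, min 1 (edist y o ^ (-p₁)) * ENNReal.ofReal (u y ^ 2) ∂m
        ≤ ∫⁻ y in Vᶜ, ENNReal.ofReal (u y ^ 2) * ∫⁻ x in U, edist x y ^ (-p₁) ∂m ∂m := by
      rw [← lintegral_const_mul' (C'⁻¹ * m U) _ hct]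
      refine lintegral_mono fun y => ?_
      calc (C'⁻¹ * m U) * (min 1 (edist y o ^ (-p₁)) * ENNReal.ofReal (u y ^ 2))
          = ENNReal.ofReal (u y ^ 2) * ((C'⁻¹ * min 1 (edist y o ^ (-p₁))) * m U) := by ring
        _ ≤ ENNReal.ofReal (u y ^ 2) * ∫⁻ x in U, edist x y ^ (-p₁) ∂m :=
            mul_le_mul_right (hIy y) _
    have hVcfin : ∫⁻ y in Vᶜ, min 1 (edist y o ^ (-p₁)) * ENNReal.ofReal (u y ^ 2) ∂m < ⊤ :=
      lt_top_of_mul_lt_top hc0 (lt_of_le_of_lt hlow hT2)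
    have hVfin : ∫⁻ y in V, min 1 (edist y o ^ (-p₁)) * ENNReal.ofReal (u y ^ 2) ∂m < ⊤ := by
      calc ∫⁻ y in V, min 1 (edist y o ^ (-p₁)) * ENNReal.ofReal (u y ^ 2) ∂m
          ≤ ∫⁻ y in V, ENNReal.ofReal (u y ^ 2) ∂m := by
            refine lintegral_mono fun y => ?_
            calc min 1 (edist y o ^ (-p₁)) * ENNReal.ofReal (u y ^ 2)
                ≤ 1 * ENNReal.ofReal (u y ^ 2) := mul_le_mul_left (min_le_left _ _) _
              _ = ENNReal.ofReal (u y ^ 2) := one_mul _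
        _ ≤ ∫⁻ y in closure V, ENNReal.ofReal (u y ^ 2) ∂m :=
            lintegral_mono' (Measure.restrict_mono subset_closure le_rfl) le_rfl
        _ < ⊤ := (hu _ hVc).lintegral_lt_top
    rw [← lintegral_add_compl (fun y => min 1 (edist y o ^ (-p₁)) * ENNReal.ofReal (u y ^ 2))
      hV.measurableSet]
    exact ENNReal.add_lt_top.mpr ⟨hVfin, hVcfin⟩
end

section
/- Let u : E → ℝ be locally integrable with respect to m (integrable on every compact set). Then the following are equivalent: (1) w_{p₁} · |u| ∈ L¹(E; m); (2) for all open sets U, V with U ⋐ V, the closure of V compact, and o ∈ V, one has ∫_{U × (E∖V)} |u(y)| dJ(x,y) < ∞. -/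
open MeasureTheory ENNReal

private lemma aux_inv (p : ℝ) (hp : 0 ≤ p) (M x y : ℝ≥0∞) (hM0 : M ≠ 0) (hMt : M ≠ ⊤)
    (hxy : x ≤ y * M) : y ^ (-p) ≤ M ^ p * x ^ (-p) := by
  have hMp0 : M ^ p ≠ 0 := (ENNReal.rpow_pos (pos_iff_ne_zero.2 hM0) hMt).ne'
  have hMpt : M ^ p ≠ ⊤ := ENNReal.rpow_ne_top_of_nonneg hp hMt
  have h1 : x ^ p ≤ y ^ p * M ^ p := by
    rw [← ENNReal.mul_rpow_of_nonneg _ _ hp]; exact ENNReal.rpow_le_rpow hxy hp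
  have h2 : (y ^ p * M ^ p)⁻¹ ≤ (x ^ p)⁻¹ := ENNReal.inv_le_inv.2 h1
  rw [ENNReal.rpow_neg, ENNReal.rpow_neg]
  calc (y ^ p)⁻¹ = M ^ p * (M ^ p)⁻¹ * (y ^ p)⁻¹ := by
        rw [ENNReal.mul_inv_cancel hMp0 hMpt, one_mul]
    _ = M ^ p * (y ^ p * M ^ p)⁻¹ := by
        rw [ENNReal.mul_inv (Or.inr hMpt) (Or.inr hMp0)]; ring
    _ ≤ M ^ p * (x ^ p)⁻¹ := mul_le_mul_right h2 _

private lemma aux_anti (p : ℝ) (hp : 0 ≤ p) {x y : ℝ≥0∞} (h : x ≤ y) :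
    y ^ (-p) ≤ x ^ (-p) := by
  rw [ENNReal.rpow_neg, ENNReal.rpow_neg]
  exact ENNReal.inv_le_inv.2 (ENNReal.rpow_le_rpow h hp)

private lemma aux_ennreal (p q : ℝ) (hp : 0 < p) (hpq : p ≤ q)
    (δ R d a : ℝ≥0∞) (hδ0 : δ ≠ 0) (hδt : δ ≠ ⊤) (hRt : R ≠ ⊤)
    (hdt : d ≠ ⊤) (hat : a ≠ ⊤)
    (hδd : δ ≤ d) (hδa : δ ≤ a) (hda : d ≤ a + R) (had : a ≤ d + R) :
    d ^ (-q) ≤ (δ ^ (p - q) * max (δ ^ (-p)) ((1 + R / δ) ^ p)) * min 1 (a ^ (-p)) ∧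
      min 1 (a ^ (-p)) ≤ (1 + R / δ) ^ p * d ^ (-p) := by
  set M : ℝ≥0∞ := 1 + R / δ with hM
  have hM1 : 1 ≤ M := le_add_of_nonneg_right zero_le
  have hM0 : M ≠ 0 := fun h => by simp [h] at hM1
  have hMt : M ≠ ⊤ := by
    refine ENNReal.add_ne_top.2 ⟨one_ne_top, (ENNReal.div_lt_top hRt hδ0).ne⟩
  have hd0 : d ≠ 0 := fun h => hδ0 (le_antisymm (h ▸ hδd) zero_le)
  have ha0 : a ≠ 0 := fun h => hδ0 (le_antisymm (h ▸ hδa) zero_le)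
  -- R ≤ x * (R/δ) for δ ≤ x
  have hRle : ∀ x : ℝ≥0∞, δ ≤ x → R ≤ x * (R / δ) := fun x hx => by
    calc R = δ * (R / δ) := (ENNReal.mul_div_cancel hδ0 hδt).symm
      _ ≤ x * (R / δ) := mul_le_mul_left hx _
  have hdaM : d ≤ a * M := by
    calc d ≤ a + R := hda
      _ ≤ a + a * (R / δ) := add_le_add_right (hRle a hδa) _
      _ = a * M := by rw [hM, mul_add, mul_one]
  have haM : a ≤ d * M := by
    calc a ≤ d + R := had
      _ ≤ d + d * (R / δ) := add_le_add_right (hRle d hδd) _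
      _ = d * M := by rw [hM, mul_add, mul_one]
  constructor
  · -- d^(-q) ≤ δ^(p-q) * d^(-p), then case on min
    have h1 : d ^ (-q) ≤ δ ^ (p - q) * d ^ (-p) := by
      have : d ^ (-q) = d ^ (p - q) * d ^ (-p) := by
        rw [← ENNReal.rpow_add _ _ hd0 hdt]; ring_nf
      rw [this]
      refine mul_le_mul_left ?_ _
      have : (p - q) = -(q - p) := by ring
      rw [this]
      exact aux_anti _ (by linarith) hδd
    refine h1.trans ?_
    rw [mul_assoc]
    refine mul_le_mul_right ?_ _
    rcases le_total 1 (a ^ (-p)) with hc | hc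
    · rw [min_eq_left hc]
      calc d ^ (-p) ≤ δ ^ (-p) := aux_anti _ hp.le hδd
        _ ≤ max (δ ^ (-p)) (M ^ p) * 1 := by rw [mul_one]; exact le_max_left _ _
    · rw [min_eq_right hc]
      calc d ^ (-p) ≤ M ^ p * a ^ (-p) := aux_inv p hp.le M a d hM0 hMt haM
        _ ≤ max (δ ^ (-p)) (M ^ p) * a ^ (-p) := mul_le_mul_left (le_max_right _ _) _
  · calc min 1 (a ^ (-p)) ≤ a ^ (-p) := min_le_right _ _
      _ ≤ M ^ p * d ^ (-p) := aux_inv p hp.le M d a hM0 hMt hdaM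

private lemma aux_exists_C {E : Type*} [MetricSpace E] (p q : ℝ) (hp : 0 < p) (hpq : p ≤ q)
    (o : E) {U V : Set E} (hV : IsOpen V) (hUc : IsCompact (closure U))
    (hUV : closure U ⊆ V) (hoV : o ∈ V) :
    ∃ C : ℝ≥0∞, C ≠ ⊤ ∧ ∀ x ∈ U, ∀ y ∈ Vᶜ,
      edist x y ^ (-q) ≤ C * min 1 (edist y o ^ (-p)) ∧
      min 1 (edist y o ^ (-p)) ≤ C * edist x y ^ (-p) := by
  obtain ⟨δ₁, hδ₁, hth⟩ := hUc.exists_thickening_subset_open hV hUV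
  obtain ⟨r, hr, hball⟩ := Metric.isOpen_iff.1 hV o hoV
  obtain ⟨R₀, hR₀⟩ := hUc.isBounded.subset_closedBall o
  set δ : ℝ≥0∞ := min (ENNReal.ofReal δ₁) (ENNReal.ofReal r) with hδdef
  set R : ℝ≥0∞ := ENNReal.ofReal (max R₀ 0) with hRdef
  have hδ0 : δ ≠ 0 :=
    (lt_min (ENNReal.ofReal_pos.2 hδ₁) (ENNReal.ofReal_pos.2 hr)).ne'
  have hδt : δ ≠ ⊤ := (lt_of_le_of_lt (min_le_left _ _) ofReal_lt_top).ne
  have hRt : R ≠ ⊤ := ofReal_ne_top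
  set M : ℝ≥0∞ := 1 + R / δ with hM
  have hMt : M ≠ ⊤ :=
    ENNReal.add_ne_top.2 ⟨one_ne_top, (ENNReal.div_lt_top hRt hδ0).ne⟩
  have hδpt : δ ^ (p - q) ≠ ⊤ := by
    simp [ENNReal.rpow_eq_top_iff, hδ0, hδt]
  have hδpt2 : δ ^ (-p) ≠ ⊤ := by
    simp [ENNReal.rpow_eq_top_iff, hδ0, hδt]
  have hMpt : M ^ p ≠ ⊤ := ENNReal.rpow_ne_top_of_nonneg hp.le hMt
  refine ⟨max (δ ^ (p - q) * max (δ ^ (-p)) (M ^ p)) (M ^ p), ?_, ?_⟩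
  · simp only [ne_eq, max_eq_top, not_or]
    constructor
    · exact ENNReal.mul_ne_top hδpt (by simp [hδpt2, hMpt])
    · exact hMpt
  · intro x hx y hy
    have hxc : x ∈ closure U := subset_closure hx
    have hδd : δ ≤ edist x y := by
      have : y ∉ Metric.thickening δ₁ (closure U) := fun h => hy (hth h)
      have h2 : ENNReal.ofReal δ₁ ≤ EMetric.infEdist y (closure U) :=
        not_lt.1 (fun h => this (Metric.mem_thickening_iff_infEdist_lt.2 h))
      calc δ ≤ ENNReal.ofReal δ₁ := min_le_left _ _
        _ ≤ EMetric.infEdist y (closure U) := h2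
        _ ≤ edist y x := EMetric.infEdist_le_edist_of_mem hxc
        _ = edist x y := edist_comm _ _
    have hδa : δ ≤ edist y o := by
      have : y ∉ Metric.ball o r := fun h => hy (hball h)
      have h2 : r ≤ dist y o := by
        rw [Metric.mem_ball] at this; exact not_lt.1 this
      calc δ ≤ ENNReal.ofReal r := min_le_right _ _
        _ ≤ ENNReal.ofReal (dist y o) := ENNReal.ofReal_le_ofReal h2
        _ = edist y o := (edist_dist _ _).symm
    have hxR : edist x o ≤ R := by
      have : dist x o ≤ R₀ := hR₀ hxc
      calc edist x o = ENNReal.ofReal (dist x o) := edist_dist _ _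
        _ ≤ R := ENNReal.ofReal_le_ofReal (this.trans (le_max_left _ _))
    have hda : edist x y ≤ edist y o + R := by
      calc edist x y ≤ edist x o + edist o y := edist_triangle _ _ _
        _ = edist y o + edist x o := by rw [edist_comm o y, add_comm]
        _ ≤ edist y o + R := add_le_add_right hxR _
    have had : edist y o ≤ edist x y + R := by
      calc edist y o ≤ edist y x + edist x o := edist_triangle _ _ _
        _ = edist x y + edist x o := by rw [edist_comm y x]
        _ ≤ edist x y + R := add_le_add_right hxR _
    obtain ⟨h1, h2⟩ := aux_ennreal p q hp hpq δ R (edist x y) (edist y o)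
      hδ0 hδt hRt (edist_ne_top _ _) (edist_ne_top _ _) hδd hδa hda had
    exact ⟨h1.trans (mul_le_mul_left (le_max_left _ _) _),
      h2.trans (mul_le_mul_left (le_max_right _ _) _)⟩

private lemma aux_le_withDensity {α : Type*} [MeasurableSpace α] (J μ : Measure α) (c : ℝ≥0∞)
    (f : α → ℝ≥0∞)
    (h : ∀ A : Set α, MeasurableSet A → J A ≤ c * ∫⁻ z in A, f z ∂μ) :
    J ≤ c • μ.withDensity f := by
  rw [Measure.le_iff]; intro s hs
  rw [Measure.smul_apply, smul_eq_mul, withDensity_apply _ hs]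
  exact h s hs

private lemma aux_withDensity_le {α : Type*} [MeasurableSpace α] (J μ : Measure α) (c : ℝ≥0∞)
    (f : α → ℝ≥0∞)
    (h : ∀ A : Set α, MeasurableSet A → c * ∫⁻ z in A, f z ∂μ ≤ J A) :
    c • μ.withDensity f ≤ J := by
  rw [Measure.le_iff]; intro s hs
  rw [Measure.smul_apply, smul_eq_mul, withDensity_apply _ hs]
  exact h s hs


/-- Let `E` be a locally compact separable metric space, `m` a Radon
measure with full support, `o ∈ E`, and `J` a Borel measure on `E × E` with
`D₁ ∫_A ρ(x,y)^{−p₁} d(m×m) ≤ J(A) ≤ D₂ ∫_A ρ(x,y)^{−p₂} d(m×m)` for all Borel `A`,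
where `D₁, D₂ > 0`, `0 < p₁ ≤ p₂ < ∞`. Write `w_p(y) = min(1, ρ(y,o)^{−p})` (value `1`
at `y = o`). Let `u` be locally `m`-integrable. Then
`w_{p₁}·|u| ∈ L¹(E;m)` iff for all open `U ⋐ V` with `closure V` compact and `o ∈ V`,
`∫_{U × (E∖V)} |u(y)| dJ < ∞`. -/
theorem stmt_7 {E : Type*} [MetricSpace E] [LocallyCompactSpace E]
    [TopologicalSpace.SeparableSpace E] [MeasurableSpace E] [BorelSpace E]
    (m : Measure E) [m.Regular] [m.IsOpenPosMeasure]
    (o : E) (J : Measure (E × E))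
    (D₁ D₂ p₁ p₂ : ℝ) (hD₁ : 0 < D₁) (hD₂ : 0 < D₂) (hp₁ : 0 < p₁) (hp₁₂ : p₁ ≤ p₂)
    (hJl : ∀ A : Set (E × E), MeasurableSet A →
      ENNReal.ofReal D₁ * ∫⁻ z in A, edist z.1 z.2 ^ (-p₁) ∂(m.prod m) ≤ J A)
    (hJu : ∀ A : Set (E × E), MeasurableSet A →
      J A ≤ ENNReal.ofReal D₂ * ∫⁻ z in A, edist z.1 z.2 ^ (-p₂) ∂(m.prod m))
    (u : E → ℝ) (hu : ∀ K : Set E, IsCompact K → IntegrableOn u K m) :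
    (∫⁻ y, min 1 (edist y o ^ (-p₁)) * ENNReal.ofReal |u y| ∂m < ⊤) ↔
    (∀ U V : Set E, IsOpen U → IsOpen V → IsCompact (closure U) → closure U ⊆ V →
      IsCompact (closure V) → o ∈ V →
      ∫⁻ z in U ×ˢ Vᶜ, ENNReal.ofReal |u z.2| ∂J < ⊤) := by
  haveI : SecondCountableTopology E := UniformSpace.secondCountable_of_separable E
  set w : E → ℝ≥0∞ := fun y => min 1 (edist y o ^ (-p₁)) with hwdef
  have hw : Measurable w :=
    (continuous_const.min (ENNReal.continuous_rpow_const.comp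
      (continuous_id.edist continuous_const))).measurable
  have hf : ∀ p : ℝ, Measurable (fun z : E × E => edist z.1 z.2 ^ (-p)) := fun p =>
    (ENNReal.continuous_rpow_const.comp continuous_edist).measurable
  have hu' : LocallyIntegrable u m := locallyIntegrable_iff.2 hu
  have hum : AEMeasurable (fun y => ENNReal.ofReal |u y|) m :=
    ENNReal.measurable_ofReal.comp_aemeasurable
      (continuous_abs.measurable.comp_aemeasurable hu'.aestronglyMeasurable.aemeasurable)
  obtain ⟨v, hvm, hv⟩ : ∃ v : E → ℝ≥0∞, Measurable v ∧
      (fun y => ENNReal.ofReal |u y|) =ᵐ[m] v :=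
    ⟨hum.mk _, hum.measurable_mk, hum.ae_eq_mk⟩
  have hJac : J ≪ m.prod m := by
    refine Measure.AbsolutelyContinuous.mk fun s hs h0 => ?_
    have h2 := hJu s hs
    have h3 : (m.prod m).restrict s = 0 := Measure.restrict_eq_zero.2 h0
    rw [h3] at h2
    simpa using h2
  have hprod_ae : (fun z : E × E => ENNReal.ofReal |u z.2|) =ᵐ[m.prod m]
      (fun z => v z.2) := by
    rw [Filter.EventuallyEq, ae_iff]
    have h1 : {z : E × E | ¬ ENNReal.ofReal |u z.2| = v z.2} ⊆
        Set.univ ×ˢ {y : E | ¬ ENNReal.ofReal |u y| = v y} := fun z hz => ⟨trivial, hz⟩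
    refine measure_mono_null h1 ?_
    rw [Measure.prod_prod]
    have h2 : m {y | ¬ ENNReal.ofReal |u y| = v y} = 0 := by
      rw [Filter.EventuallyEq, ae_iff] at hv; exact hv
    rw [h2, mul_zero]
  have hJ_ae : (fun z : E × E => ENNReal.ofReal |u z.2|) =ᵐ[J] (fun z => v z.2) :=
    hprod_ae.filter_mono hJac.ae_le
  have key : ∀ (U V : Set E), MeasurableSet U → MeasurableSet V →
      ∫⁻ z in U ×ˢ Vᶜ, w z.2 * v z.2 ∂(m.prod m) = m U * ∫⁻ y in Vᶜ, w y * v y ∂m := by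
    intro U V hU hV
    rw [← Measure.prod_restrict]
    have h1 := lintegral_prod_mul (μ := m.restrict U) (ν := m.restrict Vᶜ)
      (f := fun _ : E => (1 : ℝ≥0∞)) (g := fun y => w y * v y)
      aemeasurable_const ((hw.mul hvm).aemeasurable)
    simpa using h1
  have heqI : ∫⁻ y, w y * ENNReal.ofReal |u y| ∂m = ∫⁻ y, w y * v y ∂m :=
    lintegral_congr_ae (hv.mono fun y hy => by dsimp only at hy ⊢; rw [hy])
  constructor
  · intro hI U V hU hV hUc hUV hVc hoV
    obtain ⟨C, hCt, hC⟩ := aux_exists_C p₁ p₂ hp₁ hp₁₂ o hV hUc hUV hoV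
    have hS : MeasurableSet (U ×ˢ Vᶜ) := hU.measurableSet.prod hV.measurableSet.compl
    have hle : J ≤ (ENNReal.ofReal D₂) •
        (m.prod m).withDensity (fun z => edist z.1 z.2 ^ (-p₂)) :=
      aux_le_withDensity _ _ _ _ hJu
    calc ∫⁻ z in U ×ˢ Vᶜ, ENNReal.ofReal |u z.2| ∂J
        = ∫⁻ z in U ×ˢ Vᶜ, v z.2 ∂J := lintegral_congr_ae (ae_restrict_of_ae hJ_ae)
      _ ≤ ∫⁻ z in U ×ˢ Vᶜ, v z.2 ∂((ENNReal.ofReal D₂) •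
            (m.prod m).withDensity (fun z => edist z.1 z.2 ^ (-p₂))) :=
          lintegral_mono' (Measure.restrict_mono subset_rfl hle) le_rfl
      _ = ENNReal.ofReal D₂ *
            ∫⁻ z in U ×ˢ Vᶜ, edist z.1 z.2 ^ (-p₂) * v z.2 ∂(m.prod m) := by
          rw [Measure.restrict_smul, lintegral_smul_measure, restrict_withDensity hS,
            lintegral_withDensity_eq_lintegral_mul _ (hf p₂) (g := fun z : E × E => v z.2) (hvm.comp measurable_snd)]
          rfl
      _ ≤ ENNReal.ofReal D₂ *
            ∫⁻ z in U ×ˢ Vᶜ, C * (w z.2 * v z.2) ∂(m.prod m) := by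
          refine mul_le_mul_right (setLIntegral_mono
            (measurable_const.mul ((hw.comp measurable_snd).mul
              (hvm.comp measurable_snd))) ?_) _
          intro z hz
          obtain ⟨hz1, hz2⟩ := hz
          calc edist z.1 z.2 ^ (-p₂) * v z.2
              ≤ (C * w z.2) * v z.2 := mul_le_mul_left (hC z.1 hz1 z.2 hz2).1 _
            _ = C * (w z.2 * v z.2) := by ring
      _ = ENNReal.ofReal D₂ * (C * ∫⁻ z in U ×ˢ Vᶜ, w z.2 * v z.2 ∂(m.prod m)) := by
          rw [lintegral_const_mul (f := fun z : E × E => w z.2 * v z.2) _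
            ((hw.comp measurable_snd).mul (hvm.comp measurable_snd))]
      _ = ENNReal.ofReal D₂ * (C * (m U * ∫⁻ y in Vᶜ, w y * v y ∂m)) := by
          rw [key U V hU.measurableSet hV.measurableSet]
      _ < ⊤ := by
          have hfin1 : m U < ⊤ :=
            lt_of_le_of_lt (measure_mono subset_closure) hUc.measure_lt_top
          have hfin2 : ∫⁻ y in Vᶜ, w y * v y ∂m < ⊤ := by
            refine lt_of_le_of_lt (setLIntegral_le_lintegral _ _) ?_
            rw [← heqI]; exact hI
          exact ENNReal.mul_lt_top ofReal_lt_top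
            (ENNReal.mul_lt_top hCt.lt_top (ENNReal.mul_lt_top hfin1 hfin2))
  · intro h
    obtain ⟨K₀, hK₀c, hK₀n⟩ := exists_compact_mem_nhds o
    set U := interior K₀ with hUdef
    have hUo : IsOpen U := isOpen_interior
    have hoU : o ∈ U := mem_interior_iff_mem_nhds.2 hK₀n
    have hUc : IsCompact (closure U) := hK₀c.closure_of_subset interior_subset
    obtain ⟨K₁, hK₁c, hK₁i⟩ := exists_compact_superset hUc
    set V := interior K₁ with hVdef
    have hVo : IsOpen V := isOpen_interior
    have hUV : closure U ⊆ V := hK₁i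
    have hVc : IsCompact (closure V) := hK₁c.closure_of_subset interior_subset
    have hoV : o ∈ V := hUV (subset_closure hoU)
    have hfin := h U V hUo hVo hUc hUV hVc hoV
    obtain ⟨C, hCt, hC⟩ := aux_exists_C p₁ p₂ hp₁ hp₁₂ o hVo hUc hUV hoV
    have hS : MeasurableSet (U ×ˢ Vᶜ) := hUo.measurableSet.prod hVo.measurableSet.compl
    have hge : (ENNReal.ofReal D₁) •
        (m.prod m).withDensity (fun z => edist z.1 z.2 ^ (-p₁)) ≤ J :=
      aux_withDensity_le _ _ _ _ hJl
    have hT : ENNReal.ofReal D₁ *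
        ∫⁻ z in U ×ˢ Vᶜ, edist z.1 z.2 ^ (-p₁) * v z.2 ∂(m.prod m) < ⊤ := by
      calc ENNReal.ofReal D₁ *
            ∫⁻ z in U ×ˢ Vᶜ, edist z.1 z.2 ^ (-p₁) * v z.2 ∂(m.prod m)
          = ∫⁻ z in U ×ˢ Vᶜ, v z.2 ∂((ENNReal.ofReal D₁) •
              (m.prod m).withDensity (fun z => edist z.1 z.2 ^ (-p₁))) := by
            rw [Measure.restrict_smul, lintegral_smul_measure, restrict_withDensity hS,
              lintegral_withDensity_eq_lintegral_mul _ (hf p₁) (g := fun z : E × E => v z.2) (hvm.comp measurable_snd)]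
            rfl
        _ ≤ ∫⁻ z in U ×ˢ Vᶜ, v z.2 ∂J :=
            lintegral_mono' (Measure.restrict_mono subset_rfl hge) le_rfl
        _ = ∫⁻ z in U ×ˢ Vᶜ, ENNReal.ofReal |u z.2| ∂J :=
            (lintegral_congr_ae (ae_restrict_of_ae hJ_ae)).symm
        _ < ⊤ := hfin
    have hT' : ∫⁻ z in U ×ˢ Vᶜ, edist z.1 z.2 ^ (-p₁) * v z.2 ∂(m.prod m) < ⊤ := by
      by_contra hcon
      rw [not_lt, top_le_iff] at hcon
      rw [hcon, ENNReal.mul_top (by simp only [ne_eq, ENNReal.ofReal_eq_zero, not_le]; linarith)] at hT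
      exact absurd hT (lt_irrefl _)
    have hbound : m U * ∫⁻ y in Vᶜ, w y * v y ∂m ≤
        C * ∫⁻ z in U ×ˢ Vᶜ, edist z.1 z.2 ^ (-p₁) * v z.2 ∂(m.prod m) := by
      rw [← key U V hUo.measurableSet hVo.measurableSet,
        ← lintegral_const_mul (f := fun z : E × E => edist z.1 z.2 ^ (-p₁) * v z.2) _
          ((hf p₁).mul (hvm.comp measurable_snd))]
      refine setLIntegral_mono
        (measurable_const.mul ((hf p₁).mul (hvm.comp measurable_snd))) ?_
      intro z hz
      obtain ⟨hz1, hz2⟩ := hz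
      calc w z.2 * v z.2 ≤ (C * edist z.1 z.2 ^ (-p₁)) * v z.2 :=
            mul_le_mul_left (hC z.1 hz1 z.2 hz2).2 _
        _ = C * (edist z.1 z.2 ^ (-p₁) * v z.2) := by ring
    have hXfin : ∫⁻ y in Vᶜ, w y * v y ∂m < ⊤ := by
      have h2 := lt_of_le_of_lt hbound (ENNReal.mul_lt_top hCt.lt_top hT')
      have hU0 : m U ≠ 0 := (hUo.measure_pos m ⟨o, hoU⟩).ne'
      by_contra hcon
      rw [not_lt, top_le_iff] at hcon
      rw [hcon, ENNReal.mul_top hU0] at h2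
      exact absurd h2 (lt_irrefl _)
    calc ∫⁻ y, w y * ENNReal.ofReal |u y| ∂m = ∫⁻ y, w y * v y ∂m := heqI
      _ = ∫⁻ y in V, w y * v y ∂m + ∫⁻ y in Vᶜ, w y * v y ∂m :=
          (lintegral_add_compl _ hVo.measurableSet).symm
      _ < ⊤ := by
          refine ENNReal.add_lt_top.2 ⟨?_, hXfin⟩
          calc ∫⁻ y in V, w y * v y ∂m
              ≤ ∫⁻ y in closure V, w y * v y ∂m := lintegral_mono_set subset_closure
            _ ≤ ∫⁻ y in closure V, v y ∂m := by
                refine lintegral_mono fun y => ?_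
                calc w y * v y ≤ 1 * v y := mul_le_mul_left (min_le_left _ _) _
                  _ = v y := one_mul _
            _ = ∫⁻ y in closure V, ENNReal.ofReal |u y| ∂m :=
                (lintegral_congr_ae (ae_restrict_of_ae hv)).symm
            _ < ⊤ := by
                have h3 := (hu _ hVc).hasFiniteIntegral
                rw [hasFiniteIntegral_iff_norm] at h3
                simpa [Real.norm_eq_abs] using h3
end

section
/- Let u : E → ℝ be locally square-integrable with respect to m (square-integrable on every compact set). Then the following are equivalent: (3) w_{p₁} · |u|² ∈ L¹(E; m); (4) for all open sets U, V with U ⋐ V, the closure of V compact, and o ∈ V, one has ∫_{U × (E∖V)} |u(y)|² dJ(x,y) < ∞. -/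
open MeasureTheory ENNReal Metric Set

set_option linter.unusedSectionVars false
set_option maxHeartbeats 1000000

private lemma enn_rpow_anti {p : ℝ} (hp : 0 < p) {a b : ℝ≥0∞} (h : a ≤ b) :
    b ^ (-p) ≤ a ^ (-p) := by
  rw [ENNReal.rpow_neg, ENNReal.rpow_neg]
  exact ENNReal.inv_le_inv' (ENNReal.rpow_le_rpow h hp.le)

section ker
variable {E : Type*} [MetricSpace E] [SecondCountableTopology E] [MeasurableSpace E] [BorelSpace E]

private lemma ker_meas (p : ℝ) : Measurable (fun z : E × E => edist z.1 z.2 ^ (-p)) :=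
  measurable_edist.pow_const _

/-- lower pointwise kernel bound -/
private lemma ker_lb {p : ℝ} (hp : 0 < p) {x y o : E} {R δ : ℝ} (hR : dist x o ≤ R)
    (hδ : 0 < δ) (hay : δ ≤ dist y o) :
    min 1 (edist y o ^ (-p)) ≤ ENNReal.ofReal ((R / δ + 1) ^ p) * edist x y ^ (-p) := by
  set a := dist y o with ha_def
  have ha : 0 < a := hδ.trans_le hay
  set C := R / δ + 1 with hC_def
  have hR0 : 0 ≤ R := dist_nonneg.trans hR
  have hC1 : 1 ≤ C := le_add_of_nonneg_left (div_nonneg hR0 hδ.le)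
  have hC : 0 < C := lt_of_lt_of_le one_pos hC1
  have hdxy : dist x y ≤ C * a := by
    have h1 : dist x y ≤ R + a :=
      (dist_triangle x o y).trans (by rw [dist_comm o y]; exact add_le_add hR le_rfl)
    have h2 : R + a ≤ C * a := by
      have hRa : R ≤ R / δ * a := by
        rw [div_mul_eq_mul_div, le_div_iff₀ hδ]
        exact mul_le_mul_of_nonneg_left hay hR0
      calc R + a ≤ R / δ * a + a := add_le_add hRa le_rfl
        _ = C * a := by rw [hC_def]; ring
    exact h1.trans h2
  have h2 : edist x y ≤ ENNReal.ofReal (C * a) := by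
    rw [edist_dist]; exact ENNReal.ofReal_le_ofReal hdxy
  have h3 : ENNReal.ofReal (C * a) ^ (-p) ≤ edist x y ^ (-p) := enn_rpow_anti hp h2
  have h4 : ENNReal.ofReal (C * a) ^ (-p) = ENNReal.ofReal (C ^ (-p)) * ENNReal.ofReal (a ^ (-p)) := by
    rw [ENNReal.ofReal_rpow_of_pos (mul_pos hC ha), Real.mul_rpow hC.le ha.le,
      ENNReal.ofReal_mul (Real.rpow_nonneg hC.le _)]
  have h5 : min 1 (edist y o ^ (-p)) ≤ ENNReal.ofReal (a ^ (-p)) := by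
    rw [edist_dist, ENNReal.ofReal_rpow_of_pos ha]
    exact min_le_right _ _
  calc min 1 (edist y o ^ (-p)) ≤ ENNReal.ofReal (a ^ (-p)) := h5
    _ = ENNReal.ofReal (C ^ p) * (ENNReal.ofReal (C ^ (-p)) * ENNReal.ofReal (a ^ (-p))) := by
        rw [← mul_assoc, ← ENNReal.ofReal_mul (Real.rpow_nonneg hC.le _),
          ← Real.rpow_add hC, add_neg_cancel, Real.rpow_zero, ENNReal.ofReal_one, one_mul]
    _ ≤ ENNReal.ofReal (C ^ p) * edist x y ^ (-p) := mul_le_mul_right (h4 ▸ h3) _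

/-- upper pointwise kernel bound -/
private lemma ker_ub {p q : ℝ} (hp : 0 < p) (hpq : p ≤ q) {x y o : E} {R δ δ₀ : ℝ}
    (hR1 : 1 ≤ R) (hR : dist x o ≤ R) (hδ : 0 < δ) (hdxy : δ ≤ dist x y)
    (hδ₀ : 0 < δ₀) (hay : δ₀ ≤ dist y o) :
    edist x y ^ (-q) ≤
      ENNReal.ofReal (max (δ ^ (-q) * (2 * R) ^ p) (2 ^ p)) * min 1 (edist y o ^ (-p)) := by
  have hq : 0 < q := hp.trans_le hpq
  set a := dist y o with ha_def
  set d := dist x y with hd_def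
  have ha : 0 < a := hδ₀.trans_le hay
  have hd : 0 < d := hδ.trans_le hdxy
  set C := max (δ ^ (-q) * (2 * R) ^ p) (2 ^ p) with hC_def
  have key : d ^ (-q) ≤ C * min 1 (a ^ (-p)) := by
    rcases le_or_gt a (2 * R) with hcase | hcase
    · have h2R : (1:ℝ) ≤ 2 * R := by linarith
      have h1 : d ^ (-q) ≤ δ ^ (-q) :=
        Real.rpow_le_rpow_of_nonpos hδ hdxy (neg_nonpos.mpr hq.le)
      have h2 : (2 * R) ^ (-p) ≤ min 1 (a ^ (-p)) := by
        refine le_min (Real.rpow_le_one_of_one_le_of_nonpos h2R (neg_nonpos.mpr hp.le)) ?_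
        exact Real.rpow_le_rpow_of_nonpos ha hcase (neg_nonpos.mpr hp.le)
      have h3 : δ ^ (-q) = (δ ^ (-q) * (2 * R) ^ p) * (2 * R) ^ (-p) := by
        rw [mul_assoc, ← Real.rpow_add (by linarith : (0:ℝ) < 2 * R), add_neg_cancel,
          Real.rpow_zero, mul_one]
      calc d ^ (-q) ≤ δ ^ (-q) := h1
        _ = (δ ^ (-q) * (2 * R) ^ p) * (2 * R) ^ (-p) := h3
        _ ≤ C * min 1 (a ^ (-p)) := by
            apply mul_le_mul (le_max_left _ _) h2 (Real.rpow_nonneg (by linarith) _)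
            exact le_trans (mul_nonneg (Real.rpow_nonneg hδ.le _)
              (Real.rpow_nonneg (by linarith) _)) (le_max_left _ _)
    · have had : a / 2 ≤ d := by
        have : a ≤ d + R := by
          calc a ≤ dist y x + dist x o := dist_triangle y x o
            _ = d + dist x o := by rw [dist_comm y x]
            _ ≤ d + R := by linarith
        linarith
      have hd1 : (1:ℝ) ≤ d := by
        have : (1:ℝ) ≤ a / 2 := by linarith
        linarith
      have ha1 : (1:ℝ) ≤ a := by linarith
      have h1 : d ^ (-q) ≤ d ^ (-p) :=
        Real.rpow_le_rpow_of_exponent_le hd1 (by linarith)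
      have h2 : d ^ (-p) ≤ (a / 2) ^ (-p) :=
        Real.rpow_le_rpow_of_nonpos (by linarith) had (neg_nonpos.mpr hp.le)
      have h3 : (a / 2) ^ (-p) = 2 ^ p * a ^ (-p) := by
        rw [Real.rpow_neg (by positivity), Real.div_rpow ha.le (by norm_num),
          Real.rpow_neg ha.le]
        field_simp
      have h4 : min 1 (a ^ (-p)) = a ^ (-p) :=
        min_eq_right (Real.rpow_le_one_of_one_le_of_nonpos ha1 (neg_nonpos.mpr hp.le))
      calc d ^ (-q) ≤ 2 ^ p * a ^ (-p) := by
            rw [← h3]; exact h1.trans h2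
        _ ≤ C * min 1 (a ^ (-p)) := by
            rw [h4]
            exact mul_le_mul_of_nonneg_right (le_max_right _ _) (Real.rpow_nonneg ha.le _)
  have e1 : edist x y ^ (-q) = ENNReal.ofReal (d ^ (-q)) := by
    rw [edist_dist, ENNReal.ofReal_rpow_of_pos hd]
  have e2 : min 1 (edist y o ^ (-p)) = ENNReal.ofReal (min 1 (a ^ (-p))) := by
    rw [edist_dist, ENNReal.ofReal_rpow_of_pos ha]
    have hmono : Monotone ENNReal.ofReal := fun u v h => ENNReal.ofReal_le_ofReal h
    rw [hmono.map_min, ENNReal.ofReal_one]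
  rw [e1, e2, ← ENNReal.ofReal_mul (le_trans (Real.rpow_nonneg (by norm_num) p) (le_max_right _ _))]
  exact ENNReal.ofReal_le_ofReal key

private lemma fubini_ker (m : Measure E) [SigmaFinite m] {g : E → ℝ≥0∞} (hg : AEMeasurable g m)
    (p : ℝ) {U S : Set E} (hU : MeasurableSet U) (hS : MeasurableSet S) :
    ∫⁻ z in U ×ˢ S, g z.2 ∂((m.prod m).withDensity fun z => edist z.1 z.2 ^ (-p))
      = ∫⁻ y in S, g y * ∫⁻ x in U, edist x y ^ (-p) ∂m ∂m := by
  have hsnd : AEMeasurable (fun z : E × E => g z.2) ((m.prod m).restrict (U ×ˢ S)) := by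
    rw [← Measure.prod_restrict]
    exact (hg.restrict).comp_quasiMeasurePreserving Measure.quasiMeasurePreserving_snd
  rw [restrict_withDensity (hU.prod hS),
    lintegral_withDensity_eq_lintegral_mul₀ (ker_meas p).aemeasurable hsnd,
    ← Measure.prod_restrict]
  simp only [Pi.mul_apply]
  have hmul : AEMeasurable
      (fun z : E × E => edist z.1 z.2 ^ (-p) * g z.2)
      ((m.restrict U).prod (m.restrict S)) := by
    rw [Measure.prod_restrict]
    exact (ker_meas p).aemeasurable.mul hsnd
  rw [lintegral_prod_symm _ hmul]
  refine lintegral_congr fun y => ?_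
  calc ∫⁻ x in U, edist x y ^ (-p) * g y ∂m
      = ∫⁻ x in U, g y * edist x y ^ (-p) ∂m := by simp [mul_comm]
    _ = g y * ∫⁻ x in U, edist x y ^ (-p) ∂m :=
        lintegral_const_mul _ ((measurable_id.edist measurable_const).pow_const _)

end ker

/-- Let `E` be a locally compact separable metric space, `m` a Radon
measure with full support, `o ∈ E`, and `J` a Borel measure on `E × E` with
`D₁ ∫_A ρ(x,y)^{−p₁} d(m×m) ≤ J(A) ≤ D₂ ∫_A ρ(x,y)^{−p₂} d(m×m)` for all Borel `A`,
where `D₁, D₂ > 0`, `0 < p₁ ≤ p₂ < ∞`. Write `w_p(y) = min(1, ρ(y,o)^{−p})` (value `1`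
at `y = o`). Let `u` be locally `m`-square-integrable. Then
`w_{p₁}·|u|² ∈ L¹(E;m)` iff for all open `U ⋐ V` with `closure V` compact and `o ∈ V`,
`∫_{U × (E∖V)} |u(y)|² dJ < ∞`. -/
theorem stmt_8 {E : Type*} [MetricSpace E] [LocallyCompactSpace E]
    [TopologicalSpace.SeparableSpace E] [MeasurableSpace E] [BorelSpace E]
    (m : Measure E) [m.Regular] [m.IsOpenPosMeasure]
    (o : E) (J : Measure (E × E))
    (D₁ D₂ p₁ p₂ : ℝ) (hD₁ : 0 < D₁) (hD₂ : 0 < D₂) (hp₁ : 0 < p₁) (hp₁₂ : p₁ ≤ p₂)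
    (hJl : ∀ A : Set (E × E), MeasurableSet A →
      ENNReal.ofReal D₁ * ∫⁻ z in A, edist z.1 z.2 ^ (-p₁) ∂(m.prod m) ≤ J A)
    (hJu : ∀ A : Set (E × E), MeasurableSet A →
      J A ≤ ENNReal.ofReal D₂ * ∫⁻ z in A, edist z.1 z.2 ^ (-p₂) ∂(m.prod m))
    (u : E → ℝ) (hu : ∀ K : Set E, IsCompact K → IntegrableOn (fun x => u x ^ 2) K m) :
    (∫⁻ y, min 1 (edist y o ^ (-p₁)) * ENNReal.ofReal (u y ^ 2) ∂m < ⊤) ↔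
    (∀ U V : Set E, IsOpen U → IsOpen V → IsCompact (closure U) → closure U ⊆ V →
      IsCompact (closure V) → o ∈ V →
      ∫⁻ z in U ×ˢ Vᶜ, ENNReal.ofReal (u z.2 ^ 2) ∂J < ⊤) := by
  haveI : SecondCountableTopology E := UniformSpace.secondCountable_of_separable E
  haveI : SigmaFinite m := inferInstance
  set g : E → ℝ≥0∞ := fun y => ENNReal.ofReal (u y ^ 2) with hg_def
  set w : E → ℝ≥0∞ := fun y => min 1 (edist y o ^ (-p₁)) with hw_def
  have hloc : MeasureTheory.LocallyIntegrable (fun x => u x ^ 2) m :=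
    locallyIntegrable_iff.mpr hu
  have hgm : AEMeasurable g m :=
    ENNReal.measurable_ofReal.comp_aemeasurable hloc.aestronglyMeasurable.aemeasurable
  have hgK : ∀ K : Set E, IsCompact K → ∫⁻ y in K, g y ∂m < ⊤ := fun K hK =>
    (hu K hK).lintegral_lt_top
  constructor
  · -- (3) → (4)
    intro hfin U V hUo hVo hUc hUV hVc hoV
    obtain ⟨δ₁, hδ₁, hthick⟩ := hUc.exists_thickening_subset_open hVo hUV
    set δ := min δ₁ 1 with hδ_def
    have hδ : 0 < δ := lt_min hδ₁ one_pos
    obtain ⟨r, hr⟩ := hVc.isBounded.subset_closedBall o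
    set R := max r 1 with hR_def
    have hR1 : (1:ℝ) ≤ R := le_max_right _ _
    obtain ⟨δ₀, hδ₀, hball⟩ := Metric.isOpen_iff.mp hVo o hoV
    set C := max (δ ^ (-p₂) * (2 * R) ^ p₁) (2 ^ p₁) with hC_def
    have hle : J ≤ (ENNReal.ofReal D₂) •
        ((m.prod m).withDensity fun z => edist z.1 z.2 ^ (-p₂)) := by
      rw [Measure.le_iff]
      intro s hs
      rw [Measure.smul_apply, smul_eq_mul, withDensity_apply _ hs]
      exact hJu s hs
    have hUm : MeasurableSet U := hUo.measurableSet
    have hVm : MeasurableSet Vᶜ := hVo.measurableSet.compl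
    -- inner integral bound
    have inner : ∀ y ∈ Vᶜ, (∫⁻ x in U, edist x y ^ (-p₂) ∂m)
        ≤ ENNReal.ofReal C * w y * m U := by
      intro y hy
      have hay : δ₀ ≤ dist y o := by
        by_contra h
        push_neg at h
        exact hy (hball (by rwa [mem_ball]))
      calc ∫⁻ x in U, edist x y ^ (-p₂) ∂m
          ≤ ∫⁻ _ in U, ENNReal.ofReal C * w y ∂m := by
            refine setLIntegral_mono measurable_const fun x hx => ?_
            have hx1 : dist x o ≤ R := by
              have : x ∈ closedBall o r := hr (subset_closure (hUV (subset_closure hx)))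
              exact le_trans (mem_closedBall.mp this) (le_max_left _ _)
            have hx2 : δ ≤ dist x y := by
              by_contra h
              push_neg at h
              have hmem : y ∈ thickening δ₁ (closure U) := by
                rw [Metric.mem_thickening_iff]
                exact ⟨x, subset_closure hx,
                  by rw [dist_comm]; exact lt_of_lt_of_le h (min_le_left _ _)⟩
              exact hy (hthick hmem)
            exact ker_ub hp₁ hp₁₂ hR1 hx1 hδ hx2 hδ₀ hay
        _ = ENNReal.ofReal C * w y * m U := setLIntegral_const _ _
    have step : ∫⁻ z in U ×ˢ Vᶜ, g z.2 ∂J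
        ≤ ENNReal.ofReal D₂ * ((ENNReal.ofReal C * m U) * ∫⁻ y in Vᶜ, w y * g y ∂m) := by
      calc ∫⁻ z in U ×ˢ Vᶜ, g z.2 ∂J
          ≤ ∫⁻ z in U ×ˢ Vᶜ, g z.2 ∂((ENNReal.ofReal D₂) •
              ((m.prod m).withDensity fun z => edist z.1 z.2 ^ (-p₂))) :=
            lintegral_mono' (Measure.restrict_mono subset_rfl hle) le_rfl
        _ = ENNReal.ofReal D₂ * ∫⁻ z in U ×ˢ Vᶜ, g z.2
              ∂((m.prod m).withDensity fun z => edist z.1 z.2 ^ (-p₂)) := by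
            rw [Measure.restrict_smul, lintegral_smul_measure, smul_eq_mul]
        _ = ENNReal.ofReal D₂ * ∫⁻ y in Vᶜ, g y * ∫⁻ x in U, edist x y ^ (-p₂) ∂m ∂m := by
            rw [fubini_ker m hgm p₂ hUm hVm]
        _ ≤ ENNReal.ofReal D₂ * ∫⁻ y in Vᶜ, (ENNReal.ofReal C * m U) * (w y * g y) ∂m := by
            refine mul_le_mul_right (setLIntegral_mono' hVm fun y hy => ?_) _
            calc g y * ∫⁻ x in U, edist x y ^ (-p₂) ∂m
                ≤ g y * (ENNReal.ofReal C * w y * m U) := mul_le_mul_right (inner y hy) _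
              _ = (ENNReal.ofReal C * m U) * (w y * g y) := by ring
        _ = ENNReal.ofReal D₂ * ((ENNReal.ofReal C * m U) * ∫⁻ y in Vᶜ, w y * g y ∂m) := by
            rw [lintegral_const_mul' _ _ (by
              exact ENNReal.mul_ne_top ENNReal.ofReal_ne_top
                (measure_mono subset_closure |>.trans_lt hUc.measure_lt_top).ne)]
    refine lt_of_le_of_lt step ?_
    have hX : ∫⁻ y in Vᶜ, w y * g y ∂m < ⊤ :=
      lt_of_le_of_lt (setLIntegral_le_lintegral _ _) hfin
    exact ENNReal.mul_lt_top ENNReal.ofReal_lt_top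
      (ENNReal.mul_lt_top
        (ENNReal.mul_lt_top ENNReal.ofReal_lt_top
          ((measure_mono subset_closure).trans_lt hUc.measure_lt_top)) hX)
  · -- (4) → (3)
    intro hcond
    obtain ⟨K, hKc, hKnhds⟩ := exists_compact_mem_nhds o
    set U := interior K with hU_def
    have hUo : o ∈ U := mem_interior_iff_mem_nhds.mpr hKnhds
    have hUc : IsCompact (closure U) :=
      hKc.of_isClosed_subset isClosed_closure (closure_minimal interior_subset hKc.isClosed)
    obtain ⟨L, hLc, hUL, -⟩ := exists_compact_between hUc isOpen_univ (subset_univ _)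
    set V := interior L with hV_def
    have hVc : IsCompact (closure V) :=
      hLc.of_isClosed_subset isClosed_closure (closure_minimal interior_subset hLc.isClosed)
    have hoV : o ∈ V := hUL (subset_closure hUo)
    have hFin := hcond U V isOpen_interior isOpen_interior hUc hUL hVc hoV
    have hUm : MeasurableSet U := isOpen_interior.measurableSet
    have hVm : MeasurableSet Vᶜ := isOpen_interior.measurableSet.compl
    have hle : (ENNReal.ofReal D₁) •
        ((m.prod m).withDensity fun z => edist z.1 z.2 ^ (-p₁)) ≤ J := by
      rw [Measure.le_iff]
      intro s hs
      rw [Measure.smul_apply, smul_eq_mul, withDensity_apply _ hs]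
      exact hJl s hs
    obtain ⟨r, hr⟩ := hVc.isBounded.subset_closedBall o
    set R := max r 0 with hR_def
    obtain ⟨δ₀, hδ₀, hball⟩ := Metric.isOpen_iff.mp isOpen_interior o hoV
    set c := ENNReal.ofReal ((R / δ₀ + 1) ^ p₁) with hc_def
    set I := ∫⁻ y in Vᶜ, g y * ∫⁻ x in U, edist x y ^ (-p₁) ∂m ∂m with hI_def
    have hIfin : I < ⊤ := by
      have h1 : ENNReal.ofReal D₁ * I ≤ ∫⁻ z in U ×ˢ Vᶜ, g z.2 ∂J := by
        calc ENNReal.ofReal D₁ * I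
            = ∫⁻ z in U ×ˢ Vᶜ, g z.2 ∂((ENNReal.ofReal D₁) •
                ((m.prod m).withDensity fun z => edist z.1 z.2 ^ (-p₁))) := by
              rw [Measure.restrict_smul, lintegral_smul_measure, hI_def,
                fubini_ker m hgm p₁ hUm hVm, smul_eq_mul]
          _ ≤ ∫⁻ z in U ×ˢ Vᶜ, g z.2 ∂J :=
              lintegral_mono' (Measure.restrict_mono subset_rfl hle) le_rfl
      have h2 : ENNReal.ofReal D₁ * I < ⊤ := lt_of_le_of_lt h1 hFin
      by_contra h
      push_neg at h
      rw [top_le_iff.mp h, ENNReal.mul_top (by simpa using hD₁)] at h2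
      exact absurd h2 (lt_irrefl _)
    -- pointwise lower bound
    have inner : ∀ y ∈ Vᶜ, w y * m U ≤ c * ∫⁻ x in U, edist x y ^ (-p₁) ∂m := by
      intro y hy
      have hay : δ₀ ≤ dist y o := by
        by_contra h
        push_neg at h
        exact hy (hball (by rwa [mem_ball]))
      calc w y * m U = ∫⁻ _ in U, w y ∂m := (setLIntegral_const _ _).symm
        _ ≤ ∫⁻ x in U, c * edist x y ^ (-p₁) ∂m := by
            refine setLIntegral_mono
              (measurable_const.mul ((measurable_id.edist measurable_const).pow_const _))
              fun x hx => ?_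
            have hx1 : dist x o ≤ R := by
              have : x ∈ closedBall o r := hr (subset_closure (hUL (subset_closure hx)))
              exact le_trans (mem_closedBall.mp this) (le_max_left _ _)
            exact ker_lb hp₁ hx1 hδ₀ hay
        _ = c * ∫⁻ x in U, edist x y ^ (-p₁) ∂m :=
            lintegral_const_mul _ ((measurable_id.edist measurable_const).pow_const _)
    have hmU0 : m U ≠ 0 := isOpen_interior.measure_ne_zero m ⟨o, hUo⟩
    have hmUtop : m U ≠ ⊤ :=
      ((measure_mono subset_closure).trans_lt hUc.measure_lt_top).ne
    have hXc : ∫⁻ y in Vᶜ, w y * g y ∂m < ⊤ := by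
      have step : m U * ∫⁻ y in Vᶜ, w y * g y ∂m ≤ c * I := by
        calc m U * ∫⁻ y in Vᶜ, w y * g y ∂m
            = ∫⁻ y in Vᶜ, m U * (w y * g y) ∂m := (lintegral_const_mul' _ _ hmUtop).symm
          _ ≤ ∫⁻ y in Vᶜ, c * (g y * ∫⁻ x in U, edist x y ^ (-p₁) ∂m) ∂m := by
              refine setLIntegral_mono' hVm fun y hy => ?_
              calc m U * (w y * g y) = (w y * m U) * g y := by ring
                _ ≤ (c * ∫⁻ x in U, edist x y ^ (-p₁) ∂m) * g y :=
                    mul_le_mul_left (inner y hy) _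
                _ = c * (g y * ∫⁻ x in U, edist x y ^ (-p₁) ∂m) := by ring
          _ = c * I := by rw [lintegral_const_mul' _ _ ENNReal.ofReal_ne_top, hI_def]
      have h2 : m U * ∫⁻ y in Vᶜ, w y * g y ∂m < ⊤ :=
        lt_of_le_of_lt step (ENNReal.mul_lt_top ENNReal.ofReal_lt_top hIfin)
      by_contra h
      push_neg at h
      rw [top_le_iff.mp h, ENNReal.mul_top hmU0] at h2
      exact absurd h2 (lt_irrefl _)
    -- combine
    have huniv : closure V ∪ Vᶜ = univ := by
      apply eq_univ_of_forall
      intro y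
      by_cases h : y ∈ V
      · exact Or.inl (subset_closure h)
      · exact Or.inr h
    calc ∫⁻ y, w y * g y ∂m = ∫⁻ y in closure V ∪ Vᶜ, w y * g y ∂m := by
          rw [huniv, Measure.restrict_univ]
      _ ≤ (∫⁻ y in closure V, w y * g y ∂m) + ∫⁻ y in Vᶜ, w y * g y ∂m :=
          lintegral_union_le _ _ _
      _ < ⊤ := by
          refine ENNReal.add_lt_top.mpr ⟨?_, hXc⟩
          refine lt_of_le_of_lt (lintegral_mono fun y => ?_) (hgK _ (hVc))
          calc w y * g y ≤ 1 * g y := mul_le_mul_left (min_le_left _ _) _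
            _ = g y := one_mul _
end

section
/- For every r > 0 one has the identity I(r) = 2 e^{−r} ∫_{−∞}^{∞} (t + √(t² + 2r))^{d+α} · (t² + 2r)^{−1/2} · e^{−t²} dt, obtained from the change of variables t = √s/2 − r/√s. -/
/-- `I(r) = ∫₀^∞ s^{(d+α)/2 − 1} e^{−s/4 − r²/s} ds`. -/
noncomputable def Ifun (d : ℕ) (α : ℝ) (r : ℝ) : ℝ :=
  ∫ s in Set.Ioi (0 : ℝ), s ^ (((d : ℝ) + α) / 2 - 1) * Real.exp (-(s / 4) - r ^ 2 / s)

/-- For every `r > 0`,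
`I(r) = 2 e^{−r} ∫_{−∞}^{∞} (t + √(t²+2r))^{d+α} (t²+2r)^{−1/2} e^{−t²} dt`,
obtained from the change of variables `t = √s/2 − r/√s`. -/
theorem stmt_10 (d : ℕ) (hd : 1 ≤ d) (α : ℝ) (hα : 0 < α) (hα2 : α < 2)
    (r : ℝ) (hr : 0 < r) :
    Ifun d α r = 2 * Real.exp (-r) *
      ∫ t : ℝ, (t + Real.sqrt (t ^ 2 + 2 * r)) ^ ((d : ℝ) + α) *
        (t ^ 2 + 2 * r) ^ (-(1 : ℝ) / 2) * Real.exp (-t ^ 2) := by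
  set g : ℝ → ℝ := fun s => s ^ (((d : ℝ) + α) / 2 - 1) * Real.exp (-(s / 4) - r ^ 2 / s)
    with hg
  set φ : ℝ → ℝ := fun t => (t + Real.sqrt (t ^ 2 + 2 * r)) ^ 2 with hφ
  set φ' : ℝ → ℝ := fun t =>
    2 * (t + Real.sqrt (t ^ 2 + 2 * r)) ^ 2 / Real.sqrt (t ^ 2 + 2 * r) with hφ'
  have hpos : ∀ t : ℝ, (0:ℝ) < t ^ 2 + 2 * r := fun t => by positivity
  have hv : ∀ t : ℝ, 0 < Real.sqrt (t ^ 2 + 2 * r) := fun t => Real.sqrt_pos.2 (hpos t)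
  have hu : ∀ t : ℝ, 0 < t + Real.sqrt (t ^ 2 + 2 * r) := by
    intro t
    have h1 : Real.sqrt (t ^ 2) < Real.sqrt (t ^ 2 + 2 * r) :=
      Real.sqrt_lt_sqrt (sq_nonneg t) (by linarith)
    rw [Real.sqrt_sq_eq_abs] at h1
    have := neg_le_abs t
    linarith
  have hder : ∀ t : ℝ, HasDerivAt φ (φ' t) t := by
    intro t
    have hin : HasDerivAt (fun t : ℝ => t ^ 2 + 2 * r) (2 * t) t := by
      simpa using ((hasDerivAt_pow 2 t).add_const (2 * r))
    have hs : HasDerivAt (fun t : ℝ => Real.sqrt (t ^ 2 + 2 * r))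
        (1 / (2 * Real.sqrt (t ^ 2 + 2 * r)) * (2 * t)) t :=
      (Real.hasDerivAt_sqrt (ne_of_gt (hpos t))).comp t hin
    have hin2 : HasDerivAt (fun t : ℝ => t + Real.sqrt (t ^ 2 + 2 * r))
        (1 + 1 / (2 * Real.sqrt (t ^ 2 + 2 * r)) * (2 * t)) t :=
      (hasDerivAt_id t).add hs
    have := hin2.fun_pow 2
    refine this.congr_deriv ?_
    have hvne := (hv t).ne'
    rw [hφ']
    field_simp
    ring
  have hφ'pos : ∀ t : ℝ, 0 < φ' t := by
    intro t
    have h1 := hu t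
    have h2 := hv t
    exact div_pos (by nlinarith) h2
  have hmono : StrictMono φ :=
    strictMono_of_deriv_pos fun x => by rw [(hder x).deriv]; exact hφ'pos x
  have himg : φ '' Set.univ = Set.Ioi (0:ℝ) := by
    apply Set.eq_of_subset_of_subset
    · rintro s ⟨t, -, rfl⟩
      exact pow_pos (hu t) 2
    · rintro s (hs : 0 < s)
      set w := Real.sqrt s with hw
      have hw0 : 0 < w := Real.sqrt_pos.2 hs
      have hw2 : w ^ 2 = s := Real.sq_sqrt hs.le
      refine ⟨w / 2 - r / w, trivial, ?_⟩
      have h1 : (w / 2 - r / w) ^ 2 + 2 * r = (w / 2 + r / w) ^ 2 := by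
        field_simp; ring
      have h2 : Real.sqrt ((w / 2 - r / w) ^ 2 + 2 * r) = w / 2 + r / w := by
        rw [h1, Real.sqrt_sq (by positivity)]
      show (w / 2 - r / w + Real.sqrt ((w / 2 - r / w) ^ 2 + 2 * r)) ^ 2 = s
      rw [h2]
      have : w / 2 - r / w + (w / 2 + r / w) = w := by ring
      rw [this, hw2]
  have hexp : ∀ t : ℝ, φ t / 4 + r ^ 2 / φ t = t ^ 2 + r := by
    intro t
    set v := Real.sqrt (t ^ 2 + 2 * r) with hvv
    have hv2 : v ^ 2 = t ^ 2 + 2 * r := Real.sq_sqrt (hpos t).le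
    have huu : (t + v) ^ 2 = 2 * t * (t + v) + 2 * r := by linear_combination hv2
    have hune : (t + v) ≠ 0 := (hu t).ne'
    show (t + v) ^ 2 / 4 + r ^ 2 / (t + v) ^ 2 = t ^ 2 + r
    field_simp
    nlinarith [huu, sq_nonneg (t + v)]
  -- pointwise identity
  have hpt : ∀ t : ℝ, |φ' t| • g (φ t) =
      2 * Real.exp (-r) * ((t + Real.sqrt (t ^ 2 + 2 * r)) ^ ((d : ℝ) + α) *
        (t ^ 2 + 2 * r) ^ (-(1 : ℝ) / 2) * Real.exp (-t ^ 2)) := by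
    intro t
    set v := Real.sqrt (t ^ 2 + 2 * r) with hvv
    set u := t + v with huv
    have hu0 : 0 < u := hu t
    have hv0 : 0 < v := hv t
    have habs : |φ' t| = φ' t := abs_of_pos (hφ'pos t)
    have hhalf : (t ^ 2 + 2 * r) ^ (-(1:ℝ)/2) = v⁻¹ := by
      rw [hvv, Real.sqrt_eq_rpow, ← Real.rpow_neg (hpos t).le]
      norm_num
    have hgφ : g (φ t) = u ^ (2 * (((d : ℝ) + α) / 2 - 1)) *
        (Real.exp (-t ^ 2) * Real.exp (-r)) := by
      have h1 : -(φ t / 4) - r ^ 2 / φ t = -t ^ 2 + -r := by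
        have := hexp t; linarith
      show (u ^ 2 : ℝ) ^ (((d : ℝ) + α) / 2 - 1) * Real.exp (-(φ t / 4) - r ^ 2 / φ t) = _
      rw [h1, Real.exp_add, ← Real.rpow_natCast u 2, ← Real.rpow_mul hu0.le]
      norm_num
    have hpow : u ^ ((d : ℝ) + α) = u ^ (2 * (((d : ℝ) + α) / 2 - 1)) * u ^ 2 := by
      rw [← Real.rpow_natCast u 2, ← Real.rpow_add hu0]
      congr 1
      push_cast
      ring
    rw [smul_eq_mul, habs, hgφ, hhalf, hpow]
    show 2 * u ^ 2 / v * (u ^ (2 * (((d : ℝ) + α) / 2 - 1)) *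
        (Real.exp (-t ^ 2) * Real.exp (-r))) = _
    field_simp
  -- change of variables
  have hder' : ∀ x ∈ (Set.univ : Set ℝ), HasDerivWithinAt φ (φ' x) Set.univ x :=
    fun x _ => (hder x).hasDerivWithinAt
  have hinj : Set.InjOn φ Set.univ := hmono.injective.injOn
  calc Ifun d α r = ∫ s in φ '' Set.univ, g s := by rw [himg]; rfl
    _ = ∫ t in (Set.univ : Set ℝ), |φ' t| • g (φ t) :=
        MeasureTheory.integral_image_eq_integral_abs_deriv_smul MeasurableSet.univ hder' hinj g
    _ = ∫ t : ℝ, |φ' t| • g (φ t) := by rw [MeasureTheory.setIntegral_univ]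
    _ = ∫ t : ℝ, 2 * Real.exp (-r) * ((t + Real.sqrt (t ^ 2 + 2 * r)) ^ ((d : ℝ) + α) *
          (t ^ 2 + 2 * r) ^ (-(1 : ℝ) / 2) * Real.exp (-t ^ 2)) := by
        exact MeasureTheory.integral_congr_ae (Filter.Eventually.of_forall hpt)
    _ = 2 * Real.exp (-r) * ∫ t : ℝ, (t + Real.sqrt (t ^ 2 + 2 * r)) ^ ((d : ℝ) + α) *
          (t ^ 2 + 2 * r) ^ (-(1 : ℝ) / 2) * Real.exp (-t ^ 2) :=
        MeasureTheory.integral_const_mul _ _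
end

section
/- There exist constants C₁ = C₁(d, α) > 0 and C₂ = C₂(d, α) > 0 such that for every r > 0: C₁ e^{−r} (1 + r^{(d+α−1)/2}) ≤ Ψ(r) ≤ C₂ e^{−r} (1 + r^{(d+α−1)/2}). -/
/-- `Ψ(r) = I(r)/I(0)`. -/
noncomputable def Psi (d : ℕ) (α : ℝ) (r : ℝ) : ℝ := Ifun d α r / Ifun d α 0

section
open MeasureTheory Set Real

namespace S11

noncomputable def J (p r : ℝ) : ℝ :=
  ∫ s in Set.Ioi (0:ℝ), s ^ p * Real.exp (-(s/4) - r^2/s)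

lemma contOn (p r : ℝ) :
    ContinuousOn (fun s : ℝ => s ^ p * Real.exp (-(s/4) - r^2/s)) (Ioi 0) := by
  apply ContinuousOn.mul
  · exact continuousOn_id.rpow_const (fun x hx => Or.inl (ne_of_gt hx))
  · apply Real.continuous_exp.comp_continuousOn
    exact ((continuousOn_id.div_const 4).neg).sub
      (continuousOn_const.div continuousOn_id (fun x hx => ne_of_gt hx))

lemma integrable_sc (p : ℝ) (hp : -1 < p) {c : ℝ} (hc : 0 < c) :
    IntegrableOn (fun s : ℝ => s ^ p * Real.exp (-(s/c))) (Ioi 0) := by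
  have h := Real.GammaIntegral_convergent (show 0 < p + 1 by linarith)
  simp only [add_sub_cancel_right] at h
  have h2 := (integrableOn_Ioi_comp_mul_left_iff
      (fun x : ℝ => Real.exp (-x) * x ^ p) 0 (show 0 < 1/c by positivity)).mpr (by simpa using h)
  have h3 := h2.const_mul (((1/c : ℝ) ^ p)⁻¹)
  refine IntegrableOn.congr_fun h3 (fun x hx => ?_) measurableSet_Ioi
  have hx0 : (0:ℝ) < x := hx
  have hcp : ((1/c : ℝ) ^ p) ≠ 0 := (Real.rpow_pos_of_pos (by positivity) p).ne'
  rw [Real.mul_rpow (by positivity) hx0.le]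
  field_simp

end S11
namespace S11

lemma integrable_J (p : ℝ) (hp : -1 < p) (r : ℝ) :
    IntegrableOn (fun s : ℝ => s ^ p * Real.exp (-(s/4) - r^2/s)) (Ioi 0) := by
  have hbase := integrable_sc p hp (show (0:ℝ) < 4 by norm_num)
  refine Integrable.mono hbase ((contOn p r).aestronglyMeasurable measurableSet_Ioi) ?_
  rw [ae_restrict_iff' measurableSet_Ioi]
  filter_upwards with s hs
  have hs0 : (0:ℝ) < s := hs
  have h1 : (0:ℝ) ≤ s ^ p := Real.rpow_nonneg hs0.le p
  rw [Real.norm_of_nonneg (by positivity), Real.norm_of_nonneg (by positivity)]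
  gcongr
  have : (0:ℝ) ≤ r^2/s := by positivity
  linarith

lemma exp_eq (r : ℝ) {s : ℝ} (hs : 0 < s) :
    Real.exp (-(s/4) - r^2/s) = Real.exp (-r) * Real.exp (-((s - 2*r)^2 / (4*s))) := by
  rw [← Real.exp_add]
  congr 1
  field_simp
  ring

lemma lower_box {f : ℝ → ℝ} (hf : IntegrableOn f (Ioi 0))
    (h0 : ∀ s ∈ Ioi (0:ℝ), 0 ≤ f s)
    {a b c : ℝ} (ha : 0 < a) (hab : a ≤ b) (hc : ∀ s ∈ Ioc a b, c ≤ f s) :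
    c * (b - a) ≤ ∫ s in Ioi (0:ℝ), f s := by
  have hsub : Ioc a b ⊆ Ioi (0:ℝ) := fun x hx => lt_of_lt_of_le ha hx.1.le
  have h1 : ∫ _ in Ioc a b, c ≤ ∫ s in Ioc a b, f s := by
    refine setIntegral_mono_on ((integrableOn_const_iff (C := c)).mpr (Or.inr ?_))
      (hf.mono_set hsub) measurableSet_Ioc hc
    simp [Real.volume_Ioc]
  have h2 : ∫ s in Ioc a b, f s ≤ ∫ s in Ioi 0, f s := by
    exact setIntegral_mono_set hf
      ((ae_restrict_iff' measurableSet_Ioi).mpr (Filter.Eventually.of_forall h0))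
      (HasSubset.Subset.eventuallyLE hsub)
  have h3 : ∫ _ in Ioc a b, c = (b - a) * c := by
    rw [setIntegral_const, Real.volume_real_Ioc_of_le hab, smul_eq_mul]
  nlinarith [h1, h2]

lemma J_nonneg_pt (p r : ℝ) : ∀ s ∈ Ioi (0:ℝ), 0 ≤ s ^ p * Real.exp (-(s/4) - r^2/s) := by
  intro s hs
  have hs0 : (0:ℝ) < s := hs
  have := Real.rpow_nonneg hs0.le p
  positivity

lemma J_pos (p : ℝ) (hp : -1 < p) {r : ℝ} (hr : 0 ≤ r) : 0 < J p r := by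
  set c : ℝ := min 1 ((2:ℝ)^p) * Real.exp (-(1/2) - r^2) with hcdef
  have hc0 : 0 < c := by
    have := Real.rpow_pos_of_pos (show (0:ℝ) < 2 by norm_num) p
    positivity
  have key := lower_box (integrable_J p hp r) (J_nonneg_pt p r)
      (one_pos) (one_le_two) (c := c) ?_
  · calc (0:ℝ) < c * (2 - 1) := by simpa using hc0
      _ ≤ J p r := key
  · intro s hs
    obtain ⟨hs1, hs2⟩ := hs
    have hs0 : (0:ℝ) < s := by linarith
    have hA : min 1 ((2:ℝ)^p) ≤ s ^ p := by
      rcases le_or_gt 0 p with hp0 | hp0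
      · refine le_trans (min_le_left _ _) ?_
        simpa using Real.one_le_rpow hs1.le hp0
      · refine le_trans (min_le_right _ _) ?_
        exact Real.rpow_le_rpow_of_nonpos hs0 hs2 hp0.le
    have hB : Real.exp (-(1/2) - r^2) ≤ Real.exp (-(s/4) - r^2/s) := by
      apply Real.exp_le_exp.mpr
      have h1 : s/4 ≤ 1/2 := by linarith
      have h2 : r^2/s ≤ r^2 := by
        rw [div_le_iff₀ hs0]
        nlinarith [sq_nonneg r]
      linarith
    exact mul_le_mul hA hB (Real.exp_pos _).le (Real.rpow_nonneg hs0.le p)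

lemma J_mono (p : ℝ) (hp : -1 < p) {r₁ r₂ : ℝ} (h0 : 0 ≤ r₁) (h : r₁ ≤ r₂) :
    J p r₂ ≤ J p r₁ := by
  refine setIntegral_mono_on (integrable_J p hp r₂) (integrable_J p hp r₁)
    measurableSet_Ioi (fun s hs => ?_)
  have hs0 : (0:ℝ) < s := hs
  have h1 : (0:ℝ) ≤ s ^ p := Real.rpow_nonneg hs0.le p
  have hsq : r₁^2/s ≤ r₂^2/s := by
    gcongr
  exact mul_le_mul_of_nonneg_left (Real.exp_le_exp.mpr (by linarith)) h1

lemma Ilower (p : ℝ) (hp : -(1/2:ℝ) < p) :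
    ∃ c : ℝ, 0 < c ∧ ∀ r : ℝ, 0 < r →
      c * Real.exp (-r) * (1 + r ^ (p + 1/2)) ≤ J p r := by
  have hp1 : -1 < p := by linarith
  have hq0 : 0 < p + 1/2 := by linarith
  set m : ℝ := min ((2:ℝ) ^ p) ((3:ℝ) ^ p) with hm
  have hm0 : 0 < m :=
    lt_min (Real.rpow_pos_of_pos two_pos p) (Real.rpow_pos_of_pos (by norm_num) p)
  have hJ1 : 0 < J p 1 := J_pos p hp1 zero_le_one
  refine ⟨min (m * Real.exp (-(1/8:ℝ)) / 2) (J p 1 / 2), ?_, ?_⟩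
  · have := Real.exp_pos (-(1/8:ℝ)); positivity
  intro r hr
  rcases le_or_gt r 1 with h1 | h1
  · -- small r : J p r ≥ J p 1
    have hmono : J p 1 ≤ J p r := J_mono p hp1 hr.le h1
    have hrq : r ^ (p + 1/2) ≤ 1 := Real.rpow_le_one hr.le h1 hq0.le
    have hexp : Real.exp (-r) ≤ 1 := Real.exp_le_one_iff.mpr (by linarith)
    calc min (m * Real.exp (-(1/8:ℝ)) / 2) (J p 1 / 2) * Real.exp (-r) * (1 + r ^ (p + 1/2))
        ≤ (J p 1 / 2) * 1 * (1 + 1) := by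
          apply mul_le_mul
          · apply mul_le_mul (min_le_right _ _) hexp (Real.exp_pos _).le
            positivity
          · linarith
          · have : (0:ℝ) ≤ r ^ (p + 1/2) := Real.rpow_nonneg hr.le _
            linarith
          · positivity
      _ = J p 1 := by ring
      _ ≤ J p r := hmono
  · -- large r : box [2r, 2r + √r]
    have hrs : Real.sqrt r ≤ r := by
      nlinarith [Real.sq_sqrt hr.le, Real.sqrt_nonneg r]
    have hrs0 : 0 < Real.sqrt r := Real.sqrt_pos.mpr hr
    set c : ℝ := m * r ^ p * (Real.exp (-r) * Real.exp (-(1/8:ℝ))) with hc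
    have key := lower_box (integrable_J p hp1 r) (J_nonneg_pt p r)
        (show (0:ℝ) < 2*r by linarith) (show 2*r ≤ 2*r + Real.sqrt r by linarith)
        (c := c) ?_
    · have e1 : 2*r + Real.sqrt r - 2*r = Real.sqrt r := by ring
      rw [e1] at key
      have e2 : c * Real.sqrt r = m * Real.exp (-(1/8:ℝ)) * Real.exp (-r) * r ^ (p + 1/2) := by
        rw [hc, Real.sqrt_eq_rpow, Real.rpow_add hr p (1/2)]
        ring
      rw [e2] at key
      refine le_trans ?_ key
      have hrq1 : (1:ℝ) ≤ r ^ (p + 1/2) := Real.one_le_rpow h1.le hq0.le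
      have hE : (0:ℝ) < Real.exp (-r) := Real.exp_pos _
      have hE8 : (0:ℝ) < Real.exp (-(1/8:ℝ)) := Real.exp_pos _
      have hminle : min (m * Real.exp (-(1/8:ℝ)) / 2) (J p 1 / 2) ≤ m * Real.exp (-(1/8:ℝ)) / 2 :=
        min_le_left _ _
      have hmin0 : (0:ℝ) < min (m * Real.exp (-(1/8:ℝ)) / 2) (J p 1 / 2) := by positivity
      calc min (m * Real.exp (-(1/8:ℝ)) / 2) (J p 1 / 2) * Real.exp (-r) * (1 + r ^ (p + 1/2))
          ≤ (m * Real.exp (-(1/8:ℝ)) / 2) * Real.exp (-r) * (2 * r ^ (p + 1/2)) := by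
            apply mul_le_mul
            · exact mul_le_mul hminle le_rfl hE.le (by positivity)
            · linarith
            · linarith
            · positivity
        _ = m * Real.exp (-(1/8:ℝ)) * Real.exp (-r) * r ^ (p + 1/2) := by ring
    · intro s hs
      obtain ⟨hs1, hs2⟩ := hs
      have hs0 : (0:ℝ) < s := by linarith
      have hs3 : s ≤ 3*r := by linarith
      have hA : m * r ^ p ≤ s ^ p := by
        rcases le_or_gt 0 p with hp0 | hp0
        · calc m * r ^ p ≤ (2:ℝ)^p * r^p := by
                have := Real.rpow_nonneg hr.le p
                exact mul_le_mul_of_nonneg_right (min_le_left _ _) this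
            _ = (2*r) ^ p := (Real.mul_rpow (by norm_num) hr.le).symm
            _ ≤ s ^ p := Real.rpow_le_rpow (by linarith) hs1.le hp0
        · calc m * r ^ p ≤ (3:ℝ)^p * r^p := by
                have := Real.rpow_nonneg hr.le p
                exact mul_le_mul_of_nonneg_right (min_le_right _ _) this
            _ = (3*r) ^ p := (Real.mul_rpow (by norm_num) hr.le).symm
            _ ≤ s ^ p := Real.rpow_le_rpow_of_nonpos hs0 hs3 hp0.le
      have hB : Real.exp (-r) * Real.exp (-(1/8:ℝ)) ≤ Real.exp (-(s/4) - r^2/s) := by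
        rw [exp_eq r hs0]
        refine mul_le_mul_of_nonneg_left (Real.exp_le_exp.mpr ?_) (Real.exp_pos _).le
        have hnum : (s - 2*r)^2 ≤ r := by
          have h9 : s - 2*r ≤ Real.sqrt r := by linarith
          have h10 : 0 ≤ s - 2*r := by linarith
          nlinarith [Real.sq_sqrt hr.le]
        have hden : (8:ℝ)*r ≤ 4*s := by linarith
        have h11 : (s - 2*r)^2 / (4*s) ≤ 1/8 := by
          have e : r / (8*r) = 1/8 := by
            rw [div_eq_div_iff (by linarith) (by norm_num : (8:ℝ) ≠ 0)]
            ring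
          calc (s - 2*r)^2 / (4*s) ≤ r / (8*r) := div_le_div₀ hr.le hnum (by linarith) hden
            _ = 1/8 := e
        linarith
      calc c = (m * r ^ p) * (Real.exp (-r) * Real.exp (-(1/8:ℝ))) := by rw [hc]
        _ ≤ s ^ p * Real.exp (-(s/4) - r^2/s) := by
            apply mul_le_mul hA hB (by positivity) (Real.rpow_nonneg hs0.le p)

set_option maxHeartbeats 1000000 in
lemma Iupper (p : ℝ) (hp : -(1/2:ℝ) < p) :
    ∃ C : ℝ, 0 < C ∧ ∀ r : ℝ, 0 < r →
      J p r ≤ C * Real.exp (-r) * (1 + r ^ (p + 1/2)) := by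
  have hp1 : -1 < p := by linarith
  have hq0 : 0 < p + 1/2 := by linarith
  have hJ0 : 0 < J p 0 := J_pos p hp1 le_rfl
  set M : ℝ := max 1 ((4:ℝ) ^ p) with hM
  have hM0 : (0:ℝ) < M := lt_of_lt_of_le one_pos (le_max_left _ _)
  set K : ℝ := ∫ s in Ioi (0:ℝ), s ^ p * Real.exp (-(s/16)) with hK
  have hKi := integrable_sc p hp1 (show (0:ℝ) < 16 by norm_num)
  have hK0 : 0 ≤ K := setIntegral_nonneg measurableSet_Ioi (fun s hs =>
    mul_nonneg (Real.rpow_nonneg (le_of_lt hs) p) (Real.exp_pos _).le)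
  have hp1pos : (0:ℝ) < p + 1 := by linarith
  set C : ℝ := max (4/(p+1) + 8*M + K) (Real.exp 1 * J p 0) with hC
  have hC0 : 0 < C := lt_of_lt_of_le (by positivity) (le_max_left _ _)
  refine ⟨C, hC0, ?_⟩
  intro r hr
  rcases le_or_gt r 1 with h1 | h1
  · have hmono : J p r ≤ J p 0 := J_mono p hp1 le_rfl hr.le
    have h2 : Real.exp (-(1:ℝ)) ≤ Real.exp (-r) := Real.exp_le_exp.mpr (by linarith)
    calc J p r ≤ J p 0 := hmono
      _ = (Real.exp 1 * J p 0) * Real.exp (-(1:ℝ)) * 1 := by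
          have he : Real.exp 1 * Real.exp (-(1:ℝ)) = 1 := by
            rw [← Real.exp_add]; norm_num
          rw [mul_one, mul_right_comm, he, one_mul]
      _ ≤ C * Real.exp (-r) * (1 + r ^ (p + 1/2)) := by
          apply mul_le_mul
          · exact mul_le_mul (le_max_right _ _) h2 (Real.exp_pos _).le hC0.le
          · have := Real.rpow_nonneg hr.le (p+1/2); linarith
          · norm_num
          · positivity
  · -- r > 1
    have hrq1 : (1:ℝ) ≤ r ^ (p + 1/2) := Real.one_le_rpow h1.le hq0.le
    set f : ℝ → ℝ := fun s => s ^ p * Real.exp (-(s/4) - r^2/s) with hf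
    have hfi : IntegrableOn f (Ioi 0) := integrable_J p hp1 r
    have hsub1 : Ioc (0:ℝ) r ⊆ Ioi 0 := fun x hx => hx.1
    have hsub2 : Ioc r (4*r) ⊆ Ioi (0:ℝ) := fun x hx => lt_trans hr hx.1
    have hsub3 : Ioi (4*r) ⊆ Ioi (0:ℝ) := Ioi_subset_Ioi (by linarith)
    have hsplit : J p r = (∫ s in Ioc 0 r, f s) +
        ((∫ s in Ioc r (4*r), f s) + (∫ s in Ioi (4*r), f s)) := by
      have e1 : Ioi (0:ℝ) = Ioc 0 r ∪ Ioi r := (Ioc_union_Ioi_eq_Ioi hr.le).symm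
      have e2 : Ioi (r:ℝ) = Ioc r (4*r) ∪ Ioi (4*r) :=
        (Ioc_union_Ioi_eq_Ioi (by linarith)).symm
      rw [show J p r = ∫ s in Ioi (0:ℝ), f s from rfl, e1,
        setIntegral_union (Ioc_disjoint_Ioi le_rfl) measurableSet_Ioi
          (hfi.mono_set hsub1) (hfi.mono_set (Ioi_subset_Ioi hr.le))]
      congr 1
      rw [e2, setIntegral_union (Ioc_disjoint_Ioi le_rfl) measurableSet_Ioi
        (hfi.mono_set hsub2) (hfi.mono_set hsub3)]
    -- Piece 1
    have hP1 : (∫ s in Ioc (0:ℝ) r, f s) ≤ Real.exp (-r) * (4/(p+1)) * r ^ (p + 1/2) := by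
      have hgi : IntegrableOn (fun s : ℝ => Real.exp (-r - r/4) * s ^ p) (Ioc 0 r) :=
        (intervalIntegral.intervalIntegrable_rpow' hp1 (a := 0) (b := r)).1.const_mul _
      have hmono : ∀ s ∈ Ioc (0:ℝ) r, f s ≤ Real.exp (-r - r/4) * s ^ p := by
        intro s hs
        obtain ⟨hs0, hsr⟩ := hs
        have hkey : -(s/4) - r^2/s ≤ -r - r/4 := by
          have e : s/4 + r^2/s - (r + r/4) = ((r - s) * (r - s/4))/s := by
            field_simp; ring
          have h5 : 0 ≤ ((r - s) * (r - s/4))/s :=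
            div_nonneg (mul_nonneg (by linarith) (by linarith)) hs0.le
          rw [← e] at h5
          linarith
        calc f s = s ^ p * Real.exp (-(s/4) - r^2/s) := rfl
          _ ≤ s ^ p * Real.exp (-r - r/4) :=
              mul_le_mul_of_nonneg_left (Real.exp_le_exp.mpr hkey) (Real.rpow_nonneg hs0.le p)
          _ = Real.exp (-r - r/4) * s ^ p := mul_comm _ _
      have hIneq := setIntegral_mono_on (hfi.mono_set hsub1) hgi measurableSet_Ioc hmono
      have hval : (∫ s in Ioc (0:ℝ) r, Real.exp (-r - r/4) * s ^ p)
          = Real.exp (-r - r/4) * (r ^ (p+1) / (p+1)) := by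
        rw [integral_const_mul]
        congr 1
        rw [← intervalIntegral.integral_of_le hr.le, integral_rpow (Or.inl hp1),
          Real.zero_rpow (by linarith : p + 1 ≠ 0)]
        ring
      have hE4 : Real.exp (-(r/4)) * r ≤ 4 := by
        rw [Real.exp_neg, inv_mul_le_iff₀ (Real.exp_pos _)]
        nlinarith [Real.add_one_le_exp (r/4)]
      have hRp1 : r ^ (p+1) = r ^ p * r := by
        rw [Real.rpow_add hr, Real.rpow_one]
      have hpq : r ^ p ≤ r ^ (p + 1/2) :=
        Real.rpow_le_rpow_of_exponent_le h1.le (by linarith)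
      calc (∫ s in Ioc (0:ℝ) r, f s)
          ≤ Real.exp (-r - r/4) * (r ^ (p+1) / (p+1)) := by rw [← hval]; exact hIneq
        _ = Real.exp (-r) * ((Real.exp (-(r/4)) * r) * r ^ p) / (p+1) := by
            rw [show -r - r/4 = -r + -(r/4) by ring, Real.exp_add, hRp1]; ring
        _ ≤ Real.exp (-r) * (4 * r ^ (p + 1/2)) / (p+1) := by
            have h7 : (Real.exp (-(r/4)) * r) * r ^ p ≤ 4 * r ^ (p + 1/2) := by
              have h8 : (0:ℝ) ≤ r ^ p := Real.rpow_nonneg hr.le p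
              have h9 : (Real.exp (-(r/4)) * r) * r ^ p ≤ 4 * r ^ p :=
                mul_le_mul_of_nonneg_right hE4 h8
              have h10 : (4:ℝ) * r ^ p ≤ 4 * r ^ (p + 1/2) := by linarith
              linarith
            have hE := (Real.exp_pos (-r)).le
            gcongr
        _ = Real.exp (-r) * (4/(p+1)) * r ^ (p + 1/2) := by ring
    -- Piece 2
    have hb : (0:ℝ) < 1/(16*r) := by positivity
    have hP2 : (∫ s in Ioc r (4*r), f s) ≤ 8 * M * Real.exp (-r) * r ^ (p + 1/2) := by
      set g : ℝ → ℝ := fun s =>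
        (M * r ^ p * Real.exp (-r)) * Real.exp (-(1/(16*r)) * (s - 2*r)^2) with hg
      have hgint0 : Integrable (fun t : ℝ => Real.exp (-(1/(16*r)) * (t - 2*r)^2)) volume :=
        Integrable.comp_sub_right (f := fun s : ℝ => Real.exp (-(1/(16*r)) * s^2))
          (integrable_exp_neg_mul_sq hb) (2*r)
      have hgint : Integrable g := hgint0.const_mul _
      have hmono : ∀ s ∈ Ioc r (4*r), f s ≤ g s := by
        intro s hs
        obtain ⟨hs1, hs2⟩ := hs
        have hs0 : (0:ℝ) < s := lt_trans hr hs1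
        have hA : s ^ p ≤ M * r ^ p := by
          rcases le_or_gt 0 p with hp0 | hp0
          · calc s ^ p ≤ (4*r) ^ p := Real.rpow_le_rpow hs0.le hs2 hp0
              _ = (4:ℝ)^p * r^p := Real.mul_rpow (by norm_num) hr.le
              _ ≤ M * r ^ p := by
                  have := Real.rpow_nonneg hr.le p
                  exact mul_le_mul_of_nonneg_right (le_max_right _ _) this
          · calc s ^ p ≤ r ^ p := Real.rpow_le_rpow_of_nonpos hr hs1.le hp0.le
              _ ≤ M * r ^ p := by
                  have h8 : (0:ℝ) ≤ r ^ p := Real.rpow_nonneg hr.le p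
                  nlinarith [le_max_left (1:ℝ) ((4:ℝ)^p)]
        have hB : Real.exp (-((s - 2*r)^2/(4*s))) ≤ Real.exp (-(1/(16*r)) * (s - 2*r)^2) := by
          apply Real.exp_le_exp.mpr
          have e : -(1/(16*r)) * (s - 2*r)^2 = -((s - 2*r)^2/(16*r)) := by ring
          rw [e]
          have h9 : (s - 2*r)^2 / (16*r) ≤ (s - 2*r)^2/(4*s) :=
            div_le_div₀ (sq_nonneg _) le_rfl (by linarith) (by linarith)
          linarith
        calc f s = s ^ p * (Real.exp (-r) * Real.exp (-((s - 2*r)^2/(4*s)))) := by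
              show s ^ p * Real.exp (-(s/4) - r^2/s) = _
              rw [exp_eq r hs0]
          _ ≤ (M * r ^ p) * (Real.exp (-r) * Real.exp (-(1/(16*r)) * (s - 2*r)^2)) := by
              apply mul_le_mul hA ?_ (by positivity) ?_
              · exact mul_le_mul_of_nonneg_left hB (Real.exp_pos _).le
              · have := Real.rpow_nonneg hr.le p
                positivity
          _ = g s := by rw [hg]; ring
      have h2 := setIntegral_mono_on (hfi.mono_set hsub2)
        hgint.integrableOn measurableSet_Ioc hmono
      have h3 : (∫ s in Ioc r (4*r), g s) ≤ ∫ s : ℝ, g s := by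
        apply setIntegral_le_integral hgint
        filter_upwards with x
        have h8 : (0:ℝ) ≤ r ^ p := Real.rpow_nonneg hr.le p
        have h9 := (Real.exp_pos (-(1/(16*r)) * (x - 2*r)^2)).le
        rw [hg]
        positivity
      have h4 : (∫ s : ℝ, g s) = (M * r ^ p * Real.exp (-r)) * Real.sqrt (π * (16*r)) := by
        rw [hg]
        rw [integral_const_mul]
        congr 1
        have htr := integral_sub_right_eq_self (μ := volume)
          (fun s : ℝ => Real.exp (-(1/(16*r)) * s^2)) (2*r)
        rw [htr, integral_gaussian]
        congr 1
        field_simp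
      have h5 : Real.sqrt (π * (16*r)) ≤ 8 * Real.sqrt r := by
        have h64 : Real.sqrt (64 * r) = 8 * Real.sqrt r := by
          rw [show (64:ℝ) * r = (8:ℝ)^2 * r by norm_num, Real.sqrt_mul (by positivity) r,
            Real.sqrt_sq (by norm_num : (0:ℝ) ≤ 8)]
        rw [← h64]
        exact Real.sqrt_le_sqrt (by nlinarith [Real.pi_le_four])
      have h6 : (M * r ^ p * Real.exp (-r)) * Real.sqrt (π * (16*r))
          ≤ (M * r ^ p * Real.exp (-r)) * (8 * Real.sqrt r) := by
        apply mul_le_mul_of_nonneg_left h5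
        have := Real.rpow_nonneg hr.le p
        positivity
      have h7 : (M * r ^ p * Real.exp (-r)) * (8 * Real.sqrt r)
          = 8 * M * Real.exp (-r) * r ^ (p + 1/2) := by
        rw [Real.sqrt_eq_rpow, Real.rpow_add hr p (1/2)]
        ring
      rw [h4] at h3
      linarith [h2, h3, h6, h7.ge]
    -- Piece 3
    have hP3 : (∫ s in Ioi (4*r), f s) ≤ Real.exp (-r) * K := by
      have hgi : IntegrableOn (fun s : ℝ => Real.exp (-r) * (s ^ p * Real.exp (-(s/16))))
          (Ioi (4*r)) := (hKi.mono_set hsub3).const_mul _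
      have hmono : ∀ s ∈ Ioi (4*r), f s ≤ Real.exp (-r) * (s^p * Real.exp (-(s/16))) := by
        intro s hs
        have hs4 : 4*r < s := hs
        have hs0 : (0:ℝ) < s := lt_trans (by linarith) hs4
        have hkey : -(s/4) - r^2/s ≤ -r - s/16 := by
          have e : s/4 + r^2/s - (r + s/16) = ((s - 4*r) * (3*s - 4*r))/(16*s) := by
            field_simp; ring
          have h6 : 0 ≤ ((s - 4*r) * (3*s - 4*r))/(16*s) :=
            div_nonneg (mul_nonneg (by linarith) (by linarith)) (by linarith)
          rw [← e] at h6
          linarith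
        calc f s = s^p * Real.exp (-(s/4) - r^2/s) := rfl
          _ ≤ s^p * Real.exp (-r - s/16) :=
              mul_le_mul_of_nonneg_left (Real.exp_le_exp.mpr hkey) (Real.rpow_nonneg hs0.le p)
          _ = Real.exp (-r) * (s^p * Real.exp (-(s/16))) := by
              rw [show -r - s/16 = -r + -(s/16) by ring, Real.exp_add]; ring
      have h2 := setIntegral_mono_on (hfi.mono_set hsub3) hgi measurableSet_Ioi hmono
      have h3 : (∫ s in Ioi (4*r), Real.exp (-r) * (s^p * Real.exp (-(s/16))))
          = Real.exp (-r) * ∫ s in Ioi (4*r), s^p * Real.exp (-(s/16)) := integral_const_mul _ _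
      have h4 : (∫ s in Ioi (4*r), s^p * Real.exp (-(s/16))) ≤ K := by
        refine setIntegral_mono_set hKi ?_ (HasSubset.Subset.eventuallyLE hsub3)
        rw [Filter.EventuallyLE, ae_restrict_iff' measurableSet_Ioi]
        filter_upwards with s hs
        have hs0 : (0:ℝ) < s := hs
        have := Real.rpow_nonneg hs0.le p
        positivity
      calc (∫ s in Ioi (4*r), f s)
          ≤ ∫ s in Ioi (4*r), Real.exp (-r) * (s^p * Real.exp (-(s/16))) := h2
        _ = Real.exp (-r) * ∫ s in Ioi (4*r), s^p * Real.exp (-(s/16)) := h3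
        _ ≤ Real.exp (-r) * K := mul_le_mul_of_nonneg_left h4 (Real.exp_pos _).le
    -- combine
    have hCge : 4/(p+1) + 8*M + K ≤ C := le_max_left _ _
    have hE := Real.exp_pos (-r)
    have hrq0 : (0:ℝ) ≤ r ^ (p + 1/2) := Real.rpow_nonneg hr.le _
    calc J p r ≤ Real.exp (-r) * (4/(p+1)) * r ^ (p + 1/2)
          + (8 * M * Real.exp (-r) * r ^ (p + 1/2) + Real.exp (-r) * K) := by
          rw [hsplit]
          exact add_le_add hP1 (add_le_add hP2 hP3)
      _ ≤ (4/(p+1) + 8*M + K) * Real.exp (-r) * (1 + r ^ (p + 1/2)) := by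
          have t0 : (0:ℝ) < 4/(p+1) := by positivity
          nlinarith [mul_pos hE (show (0:ℝ) < 4/(p+1) from t0), mul_nonneg hE.le hK0,
            mul_nonneg (mul_nonneg hE.le hK0) hrq0,
            mul_nonneg (mul_nonneg hE.le t0.le) hrq0,
            mul_nonneg (mul_nonneg hE.le (by positivity : (0:ℝ) ≤ 8*M)) hrq0]
      _ ≤ C * Real.exp (-r) * (1 + r ^ (p + 1/2)) := by
          apply mul_le_mul_of_nonneg_right ?_ (by linarith)
          exact mul_le_mul_of_nonneg_right hCge hE.le

end S11

end

/-- There are `C₁ = C₁(d,α) > 0` and `C₂ = C₂(d,α) > 0` such that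
for every `r > 0`,
`C₁ e^{−r}(1 + r^{(d+α−1)/2}) ≤ Ψ(r) ≤ C₂ e^{−r}(1 + r^{(d+α−1)/2})`. -/
theorem stmt_11 (d : ℕ) (hd : 1 ≤ d) (α : ℝ) (hα : 0 < α) (hα2 : α < 2) :
    ∃ C₁ : ℝ, 0 < C₁ ∧ ∃ C₂ : ℝ, 0 < C₂ ∧ ∀ r : ℝ, 0 < r →
      C₁ * Real.exp (-r) * (1 + r ^ (((d : ℝ) + α - 1) / 2)) ≤ Psi d α r ∧
      Psi d α r ≤ C₂ * Real.exp (-r) * (1 + r ^ (((d : ℝ) + α - 1) / 2)) := by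
  set p : ℝ := ((d:ℝ) + α)/2 - 1 with hpdef
  have hd1 : (1:ℝ) ≤ (d:ℝ) := by exact_mod_cast hd
  have hp : -(1/2:ℝ) < p := by rw [hpdef]; linarith
  have hq : ((d : ℝ) + α - 1) / 2 = p + 1/2 := by rw [hpdef]; ring
  obtain ⟨c₁, hc₁, H₁⟩ := S11.Ilower p hp
  obtain ⟨c₂, hc₂, H₂⟩ := S11.Iupper p hp
  have hJ0 : 0 < S11.J p 0 :=
    S11.J_pos p (lt_trans (by norm_num : (-1:ℝ) < -(1/2)) hp) le_rfl
  refine ⟨c₁ / S11.J p 0, by positivity, c₂ / S11.J p 0, by positivity, fun r hr => ?_⟩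
  have h1 := H₁ r hr
  have h2 := H₂ r hr
  have hPsi : Psi d α r = S11.J p r / S11.J p 0 := rfl
  rw [hPsi, hq]
  constructor
  · rw [div_mul_eq_mul_div, div_mul_eq_mul_div]
    exact (div_le_div_iff_of_pos_right hJ0).mpr h1
  · rw [div_mul_eq_mul_div, div_mul_eq_mul_div]
    exact (div_le_div_iff_of_pos_right hJ0).mpr h2
end
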